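/- arXiv:1902.10173 — 13 statements merged into one kernel-verified Lean document; each statement's English description precedes it below -/
import Mathlib

section
/- Let Γ and Ω be sets, λ : Γ × Ω → ℝ a loss function, η > 0, d ≥ 1, N ≥ 1. Let q = (q_1, …, q_N) be a probability vector (q_i ≥ 0, Σ_i q_i = 1), let c_i = (c_i^1, …, c_i^d) ∈ Γ^d for 1 ≤ i ≤ N, and let f = (f^1, …, f^d) ∈ Γ^d be such that for every s with 1 ≤ s ≤ d and every y ∈ Ω one has exp(−η·λ(f^s, y)) ≥ Σ_{i=1}^N q_i · exp(−η·λ(c_i^s, y)). Then for every y = (y^1, …, y^d) ∈ Ω^d one has exp(−(η/d)·Σ_{s=1}^d λ(f^s, y^s)) ≥ Σ_{i=1}^N q_i · exp(−(η/d)·Σ_{s=1}^d λ(c_i^s, y^s)). -/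
/-- Mixability of the generalized (sum-of-coordinates) loss: if the per-coordinate
mixability inequalities at learning rate `η` hold for the aggregated forecasts `f s`,
then the vector-valued mixability inequality holds at learning rate `η / d`. -/
theorem generalized_loss_mixable {Γ Ω : Type*} (L : Γ → Ω → ℝ) (η : ℝ) (hη : 0 < η)
    (d N : ℕ) (hd : 1 ≤ d) (hN : 1 ≤ N)
    (q : Fin N → ℝ) (hq0 : ∀ i, 0 ≤ q i) (hq1 : ∑ i, q i = 1)
    (c : Fin N → Fin d → Γ) (f : Fin d → Γ)
    (hmix : ∀ s : Fin d, ∀ y : Ω,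
      Real.exp (-η * L (f s) y) ≥ ∑ i, q i * Real.exp (-η * L (c i s) y)) :
    ∀ y : Fin d → Ω,
      Real.exp (-(η / d) * ∑ s, L (f s) (y s)) ≥
        ∑ i, q i * Real.exp (-(η / d) * ∑ s, L (c i s) (y s)) := by
  intro y
  have hd0 : (0:ℝ) < (d:ℝ) := by exact_mod_cast hd
  set x : Fin N → Fin d → ℝ := fun i s => Real.exp (-η * L (c i s) (y s)) with hx
  set A : Fin d → ℝ := fun s => ∑ i, q i * x i s with hA
  have hxpos : ∀ i s, 0 < x i s := fun i s => Real.exp_pos _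
  have hApos : ∀ s, 0 < A s := by
    intro s
    have : ∃ i : Fin N, 0 < q i := by
      by_contra h
      push_neg at h
      have : ∀ i, q i = 0 := fun i => le_antisymm (h i) (hq0 i)
      simp [this] at hq1
    obtain ⟨i, hi⟩ := this
    exact Finset.sum_pos' (fun j _ => mul_nonneg (hq0 j) (hxpos j s).le)
      ⟨i, Finset.mem_univ i, mul_pos hi (hxpos i s)⟩
  -- rewrite exponentials as products of d-th roots
  have hexp : ∀ (g : Fin d → ℝ),
      Real.exp (-(η / d) * ∑ s, g s) = ∏ s, Real.exp (-η * g s) ^ ((d:ℝ)⁻¹) := by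
    intro g
    have h1 : ∀ s : Fin d, Real.exp (-η * g s) ^ ((d:ℝ)⁻¹)
        = Real.exp (-η * g s * (d:ℝ)⁻¹) := fun s => (Real.exp_mul _ _).symm
    simp only [h1, ← Real.exp_sum]
    congr 1
    rw [Finset.mul_sum]
    exact Finset.sum_congr rfl fun s _ => by ring
  -- key Hölder-type inequality
  have key : ∑ i, q i * ∏ s, x i s ^ ((d:ℝ)⁻¹) ≤ ∏ s, A s ^ ((d:ℝ)⁻¹) := by
    have step : ∀ i, q i * ∏ s, x i s ^ ((d:ℝ)⁻¹) ≤
        (∏ s, A s ^ ((d:ℝ)⁻¹)) * (q i * ∑ s, (d:ℝ)⁻¹ * (x i s / A s)) := by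
      intro i
      have amgm := Real.geom_mean_le_arith_mean_weighted Finset.univ
        (fun _ : Fin d => (d:ℝ)⁻¹) (fun s => x i s / A s)
        (fun _ _ => by positivity)
        (by simp [Finset.card_univ, mul_inv_cancel₀ hd0.ne'])
        (fun s _ => div_nonneg (hxpos i s).le (hApos s).le)
      have hprod : ∏ s, (x i s / A s) ^ ((d:ℝ)⁻¹)
          = (∏ s, x i s ^ ((d:ℝ)⁻¹)) / ∏ s, A s ^ ((d:ℝ)⁻¹) := by
        rw [← Finset.prod_div_distrib]
        exact Finset.prod_congr rfl fun s _ =>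
          Real.div_rpow (hxpos i s).le (hApos s).le _
      rw [hprod] at amgm
      have hApr : 0 < ∏ s, A s ^ ((d:ℝ)⁻¹) :=
        Finset.prod_pos fun s _ => Real.rpow_pos_of_pos (hApos s) _
      rw [div_le_iff₀ hApr] at amgm
      calc q i * ∏ s, x i s ^ ((d:ℝ)⁻¹)
          ≤ q i * ((∑ s, (d:ℝ)⁻¹ * (x i s / A s)) * ∏ s, A s ^ ((d:ℝ)⁻¹)) :=
            mul_le_mul_of_nonneg_left amgm (hq0 i)
        _ = (∏ s, A s ^ ((d:ℝ)⁻¹)) * (q i * ∑ s, (d:ℝ)⁻¹ * (x i s / A s)) := by ring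
    calc ∑ i, q i * ∏ s, x i s ^ ((d:ℝ)⁻¹)
        ≤ ∑ i, (∏ s, A s ^ ((d:ℝ)⁻¹)) * (q i * ∑ s, (d:ℝ)⁻¹ * (x i s / A s)) :=
          Finset.sum_le_sum fun i _ => step i
      _ = (∏ s, A s ^ ((d:ℝ)⁻¹)) * ∑ s, (d:ℝ)⁻¹ * (A s / A s) := by
          rw [← Finset.mul_sum]
          congr 1
          simp_rw [Finset.mul_sum]
          rw [Finset.sum_comm]
          apply Finset.sum_congr rfl
          intro s _
          show ∑ i, q i * ((d:ℝ)⁻¹ * (x i s / A s))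
              = (d:ℝ)⁻¹ * ((∑ i, q i * x i s) / A s)
          rw [Finset.sum_div, Finset.mul_sum]
          exact Finset.sum_congr rfl fun i _ => by ring
      _ = ∏ s, A s ^ ((d:ℝ)⁻¹) := by
          have : ∀ s : Fin d, (d:ℝ)⁻¹ * (A s / A s) = (d:ℝ)⁻¹ := by
            intro s; rw [div_self (hApos s).ne']; ring
          simp [this, Finset.card_univ, mul_inv_cancel₀ hd0.ne']
  -- conclude
  rw [ge_iff_le, hexp]
  have h2 : ∑ i, q i * Real.exp (-(η / d) * ∑ s, L (c i s) (y s))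
      = ∑ i, q i * ∏ s, x i s ^ ((d:ℝ)⁻¹) := by
    apply Finset.sum_congr rfl
    intro i _
    rw [hexp]
  rw [h2]
  refine key.trans (Finset.prod_le_prod (fun s _ => Real.rpow_nonneg (hApos s).le _)
    fun s _ => Real.rpow_le_rpow (hApos s).le (hmix s (y s)) (by positivity))
end

section
/- Let 0 < η ≤ 2 and N ≥ 1. Let q = (q_1, …, q_N) be a probability vector (q_i ≥ 0, Σ_i q_i = 1) and let c_1, …, c_N ∈ [0,1]. Define f = 1/2 − (1/(2η)) · ln( (Σ_{i=1}^N q_i · e^{−η c_i²}) / (Σ_{i=1}^N q_i · e^{−η (1−c_i)²}) ). Then for each ω ∈ {0,1} one has exp(−η·(f − ω)²) ≥ Σ_{i=1}^N q_i · exp(−η·(c_i − ω)²). -/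
open Real

/-- Monotonicity of `t ↦ log t - log (1-t) - 2ηt` on `(0,1)` for `η ≤ 2`, exponentiated. -/
lemma ratio_ineq (η x y : ℝ) (hη2 : η ≤ 2) (hx : 0 < x) (hxy : x ≤ y) (hy : y < 1) :
    x * (1 - y) * Real.exp (2 * η * (y - x)) ≤ y * (1 - x) := by
  have hx1 : x < 1 := lt_of_le_of_lt hxy hy
  have hy0 : 0 < y := lt_of_lt_of_le hx hxy
  set H : ℝ → ℝ := fun t => Real.log t - Real.log (1 - t) - 2 * η * t with hH
  have hder : ∀ t ∈ Set.Ioo (0:ℝ) 1, HasDerivAt H (t⁻¹ + (1 - t)⁻¹ - 2 * η) t := by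
    intro t ht
    have h1 : HasDerivAt (fun s : ℝ => Real.log s) t⁻¹ t := Real.hasDerivAt_log (ne_of_gt ht.1)
    have h2 : HasDerivAt (fun s : ℝ => (1 : ℝ) - s) (-1) t := by
      simpa using (hasDerivAt_id t).const_sub 1
    have h3 : HasDerivAt (fun s : ℝ => Real.log (1 - s)) ((1 - t)⁻¹ * (-1)) t :=
      (Real.hasDerivAt_log (by linarith [ht.2] : (1:ℝ) - t ≠ 0)).comp t h2
    have h4 : HasDerivAt (fun s : ℝ => 2 * η * s) (2 * η) t := by
      simpa using (hasDerivAt_id t).const_mul (2 * η)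
    have := (h1.sub h3).sub h4
    refine this.congr_deriv ?_
    ring
  have hmono : MonotoneOn H (Set.Ioo (0:ℝ) 1) := by
    have hconv : Convex ℝ (Set.Ioo (0:ℝ) 1) := convex_Ioo 0 1
    have hint : interior (Set.Ioo (0:ℝ) 1) = Set.Ioo (0:ℝ) 1 := interior_Ioo
    apply monotoneOn_of_deriv_nonneg hconv
    · intro t ht
      exact (hder t ht).continuousAt.continuousWithinAt
    · rw [hint]
      intro t ht
      exact (hder t ht).differentiableAt.differentiableWithinAt
    · rw [hint]
      intro t ht
      rw [(hder t ht).deriv]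
      have ht0 : 0 < t := ht.1
      have ht1 : t < 1 := ht.2
      have hpos : 0 < t * (1 - t) := mul_pos ht0 (by linarith)
      have h1t : (1:ℝ) - t ≠ 0 := by linarith
      have he : t⁻¹ + (1 - t)⁻¹ = (t * (1 - t))⁻¹ := by
        field_simp
        ring
      have h4 : (4:ℝ) ≤ (t * (1 - t))⁻¹ := by
        rw [le_inv_comm₀ (by norm_num) hpos]
        nlinarith [sq_nonneg (2 * t - 1)]
      rw [he]
      linarith
  have hxy' : H x ≤ H y := hmono ⟨hx, hx1⟩ ⟨hy0, hy⟩ hxy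
  have hL : x * (1 - y) * Real.exp (2 * η * (y - x))
      = Real.exp (Real.log x + Real.log (1 - y) + 2 * η * (y - x)) := by
    rw [Real.exp_add, Real.exp_add, Real.exp_log hx, Real.exp_log (by linarith)]
  have hR : y * (1 - x) = Real.exp (Real.log y + Real.log (1 - x)) := by
    rw [Real.exp_add, Real.exp_log hy0, Real.exp_log (by linarith)]
  rw [hL, hR]
  apply Real.exp_le_exp.mpr
  simp only [hH] at hxy'
  linarith

section
variable (η F : ℝ)

/-- exponent juggling identity -/
lemma exp_shift (η F t : ℝ) :
    Real.exp (-η * (1 - F) ^ 2) * Real.exp (-η * t ^ 2)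
      = Real.exp (2 * η * (F - t)) * (Real.exp (-η * F ^ 2) * Real.exp (-η * (1 - t) ^ 2)) := by
  rw [← Real.exp_add, ← Real.exp_add, ← Real.exp_add]
  exact congrArg Real.exp (by ring)

lemma key_deriv (η F : ℝ) (t : ℝ) :
    HasDerivAt (fun s : ℝ => F * Real.exp (-η * F ^ 2) * Real.exp (-η * (1 - s) ^ 2)
        + (1 - F) * Real.exp (-η * (1 - F) ^ 2) * Real.exp (-η * s ^ 2))
      (2 * η * (1 - t) * (F * Real.exp (-η * F ^ 2) * Real.exp (-η * (1 - t) ^ 2))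
        - 2 * η * t * ((1 - F) * Real.exp (-η * (1 - F) ^ 2) * Real.exp (-η * t ^ 2))) t := by
  have h1 : HasDerivAt (fun s : ℝ => -η * (1 - s) ^ 2) (2 * η * (1 - t)) t := by
    have := (((hasDerivAt_id t).const_sub 1).pow 2).const_mul (-η)
    refine this.congr_deriv ?_
    simp only [id_eq]
    push_cast
    ring
  have h2 : HasDerivAt (fun s : ℝ => -η * s ^ 2) (-(2 * η * t)) t := by
    have := ((hasDerivAt_id t).pow 2).const_mul (-η)
    refine this.congr_deriv ?_
    simp only [id_eq]
    push_cast
    ring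
  have h1' := (h1.exp.const_mul (F * Real.exp (-η * F ^ 2)))
  have h2' := (h2.exp.const_mul ((1 - F) * Real.exp (-η * (1 - F) ^ 2)))
  have := h1'.add h2'
  refine this.congr_deriv ?_
  ring

lemma key_pointwise (η F x : ℝ) (hη : 0 < η) (hη2 : η ≤ 2)
    (hF0 : 0 ≤ F) (hF1 : F ≤ 1) (hx0 : 0 ≤ x) (hx1 : x ≤ 1) :
    F * Real.exp (-η * F ^ 2) * Real.exp (-η * (1 - x) ^ 2)
      + (1 - F) * Real.exp (-η * (1 - F) ^ 2) * Real.exp (-η * x ^ 2)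
      ≤ Real.exp (-η * F ^ 2) * Real.exp (-η * (1 - F) ^ 2) := by
  set g : ℝ → ℝ := fun s => F * Real.exp (-η * F ^ 2) * Real.exp (-η * (1 - s) ^ 2)
      + (1 - F) * Real.exp (-η * (1 - F) ^ 2) * Real.exp (-η * s ^ 2) with hg
  have hgF : g F = Real.exp (-η * F ^ 2) * Real.exp (-η * (1 - F) ^ 2) := by
    simp only [hg]
    ring
  -- sign of the derivative left of F
  have hsignL : ∀ t ∈ Set.Ioo (0:ℝ) F, 0 ≤ deriv g t := by
    intro t ht
    rw [(key_deriv η F t).deriv]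
    have ht0 : 0 < t := ht.1
    have htF : t < F := ht.2
    have hratio : t * (1 - F) * Real.exp (2 * η * (F - t)) ≤ F * (1 - t) := by
      rcases eq_or_lt_of_le hF1 with h | h
      · rw [← h]
        simp
        nlinarith [Real.exp_pos (2 * η * (F - t))]
      · exact ratio_ineq η t F hη2 ht0 htF.le h
    have hpos : (0:ℝ) < 2 * η * (Real.exp (-η * F ^ 2) * Real.exp (-η * (1 - t) ^ 2)) := by
      positivity
    have hmul := mul_le_mul_of_nonneg_right hratio hpos.le
    have hvz : (1 - F) * Real.exp (-η * (1 - F) ^ 2) * Real.exp (-η * t ^ 2)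
        = (1 - F) * (Real.exp (2 * η * (F - t)) * (Real.exp (-η * F ^ 2) * Real.exp (-η * (1 - t) ^ 2))) := by
      rw [mul_assoc, exp_shift]
    rw [hvz]
    nlinarith [hmul]
  have hsignR : ∀ t ∈ Set.Ioo F (1:ℝ), deriv g t ≤ 0 := by
    intro t ht
    rw [(key_deriv η F t).deriv]
    have htF : F < t := ht.1
    have ht1 : t < 1 := ht.2
    have hratio : F * (1 - t) * Real.exp (2 * η * (t - F)) ≤ t * (1 - F) := by
      rcases eq_or_lt_of_le hF0 with h | h
      · rw [← h]
        simp
        nlinarith [Real.exp_pos (2 * η * (t - F)), le_trans hF0 htF.le]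
      · exact ratio_ineq η F t hη2 h htF.le ht1
    -- rewrite e^{-η(1-t)²} in terms of e^{-ηt²}:
    have hshift : Real.exp (-η * F ^ 2) * Real.exp (-η * (1 - t) ^ 2)
        = Real.exp (2 * η * (t - F)) * (Real.exp (-η * (1 - F) ^ 2) * Real.exp (-η * t ^ 2)) := by
      rw [← Real.exp_add, ← Real.exp_add, ← Real.exp_add]
      exact congrArg Real.exp (by ring)
    have hpos : (0:ℝ) < 2 * η * (Real.exp (-η * (1 - F) ^ 2) * Real.exp (-η * t ^ 2)) := by
      positivity
    have hmul := mul_le_mul_of_nonneg_right hratio hpos.le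
    have huw : F * Real.exp (-η * F ^ 2) * Real.exp (-η * (1 - t) ^ 2)
        = F * (Real.exp (2 * η * (t - F)) * (Real.exp (-η * (1 - F) ^ 2) * Real.exp (-η * t ^ 2))) := by
      rw [mul_assoc, hshift]
    rw [huw]
    nlinarith [hmul]
  have hdiff : ∀ t : ℝ, DifferentiableAt ℝ g t := fun t => (key_deriv η F t).differentiableAt
  have hmono : MonotoneOn g (Set.Icc 0 F) := by
    apply monotoneOn_of_deriv_nonneg (convex_Icc 0 F)
    · exact fun t _ => (hdiff t).continuousAt.continuousWithinAt
    · intro t ht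
      exact (hdiff t).differentiableWithinAt
    · intro t ht
      rw [interior_Icc] at ht
      exact hsignL t ht
  have hanti : AntitoneOn g (Set.Icc F 1) := by
    apply antitoneOn_of_deriv_nonpos (convex_Icc F 1)
    · exact fun t _ => (hdiff t).continuousAt.continuousWithinAt
    · intro t ht
      exact (hdiff t).differentiableWithinAt
    · intro t ht
      rw [interior_Icc] at ht
      exact hsignR t ht
  rcases le_total x F with h | h
  · have := hmono ⟨hx0, h⟩ ⟨le_refl 0 |>.trans hF0, le_refl F⟩ h
    rw [hgF] at this
    exact this
  · have := hanti ⟨le_refl F, hF1⟩ ⟨h, hx1⟩ h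
    rw [hgF] at this
    exact this

end
/-- The square loss on forecasts in `[0,1]` and binary outcomes is `η`-mixable for
`0 < η ≤ 2`, witnessed by the Aggregating Algorithm substitution function. -/
theorem square_loss_mixable (η : ℝ) (hη : 0 < η) (hη2 : η ≤ 2) (N : ℕ) (hN : 1 ≤ N)
    (q : Fin N → ℝ) (hq0 : ∀ i, 0 ≤ q i) (hq1 : ∑ i, q i = 1)
    (c : Fin N → ℝ) (hc : ∀ i, c i ∈ Set.Icc (0 : ℝ) 1) :
    ∀ ω ∈ ({0, 1} : Set ℝ),
      Real.exp (-η * ((1 / 2 - (1 / (2 * η)) * Real.log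
          ((∑ i, q i * Real.exp (-η * (c i) ^ 2)) /
            (∑ i, q i * Real.exp (-η * (1 - c i) ^ 2)))) - ω) ^ 2) ≥
        ∑ i, q i * Real.exp (-η * (c i - ω) ^ 2) := by
  set A := ∑ i, q i * Real.exp (-η * (c i) ^ 2) with hA
  set B := ∑ i, q i * Real.exp (-η * (1 - c i) ^ 2) with hB
  set F := 1 / 2 - (1 / (2 * η)) * Real.log (A / B) with hF
  -- positivity of A and B
  have hsq : ∀ i, (0:ℝ) ≤ 1 - (c i) ^ 2 := by
    intro i
    nlinarith [(hc i).1, (hc i).2]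
  have hsq' : ∀ i, (0:ℝ) ≤ 1 - (1 - c i) ^ 2 := by
    intro i
    nlinarith [(hc i).1, (hc i).2]
  have hA0 : 0 < A := by
    have h : Real.exp (-η) ≤ A := by
      calc Real.exp (-η) = ∑ i, q i * Real.exp (-η) := by
            rw [← Finset.sum_mul, hq1, one_mul]
        _ ≤ A := by
            rw [hA]
            apply Finset.sum_le_sum
            intro i _
            apply mul_le_mul_of_nonneg_left _ (hq0 i)
            apply Real.exp_le_exp.mpr
            nlinarith [hsq i, hη]
    linarith [Real.exp_pos (-η)]
  have hB0 : 0 < B := by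
    have h : Real.exp (-η) ≤ B := by
      calc Real.exp (-η) = ∑ i, q i * Real.exp (-η) := by
            rw [← Finset.sum_mul, hq1, one_mul]
        _ ≤ B := by
            rw [hB]
            apply Finset.sum_le_sum
            intro i _
            apply mul_le_mul_of_nonneg_left _ (hq0 i)
            apply Real.exp_le_exp.mpr
            nlinarith [hsq' i, hη]
    linarith [Real.exp_pos (-η)]
  have hlogdiv : Real.log (A / B) = Real.log A - Real.log B := Real.log_div hA0.ne' hB0.ne'
  -- bounds on log A - log B
  have hAB : A ≤ Real.exp η * B := by
    rw [hA, hB, Finset.mul_sum]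
    apply Finset.sum_le_sum
    intro i _
    rw [show Real.exp η * (q i * Real.exp (-η * (1 - c i) ^ 2))
        = q i * (Real.exp η * Real.exp (-η * (1 - c i) ^ 2)) from by ring, ← Real.exp_add]
    apply mul_le_mul_of_nonneg_left _ (hq0 i)
    apply Real.exp_le_exp.mpr
    nlinarith [mul_nonneg hη.le (hc i).1]
  have hBA : B ≤ Real.exp η * A := by
    rw [hA, hB, Finset.mul_sum]
    apply Finset.sum_le_sum
    intro i _
    rw [show Real.exp η * (q i * Real.exp (-η * (c i) ^ 2))
        = q i * (Real.exp η * Real.exp (-η * (c i) ^ 2)) from by ring, ← Real.exp_add]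
    apply mul_le_mul_of_nonneg_left _ (hq0 i)
    apply Real.exp_le_exp.mpr
    nlinarith [mul_nonneg hη.le (sub_nonneg.mpr (hc i).2)]
  have hlogAB : Real.log A - Real.log B ≤ η := by
    have := Real.log_le_log hA0 hAB
    rw [Real.log_mul (Real.exp_pos η).ne' hB0.ne', Real.log_exp] at this
    linarith
  have hlogBA : -η ≤ Real.log A - Real.log B := by
    have := Real.log_le_log hB0 hBA
    rw [Real.log_mul (Real.exp_pos η).ne' hA0.ne', Real.log_exp] at this
    linarith
  -- F ∈ [0, 1]
  have h2η : (0:ℝ) < 2 * η := by linarith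
  have hhalf : (1 / (2 * η)) * η = 1 / 2 := by
    field_simp
  have hF0 : 0 ≤ F := by
    have h1 := mul_le_mul_of_nonneg_left hlogAB (by positivity : (0:ℝ) ≤ 1 / (2 * η))
    rw [hhalf] at h1
    rw [hF, hlogdiv]
    linarith
  have hF1 : F ≤ 1 := by
    have h1 := mul_le_mul_of_nonneg_left hlogBA (by positivity : (0:ℝ) ≤ 1 / (2 * η))
    have h2 : (1 / (2 * η)) * (-η) = -(1 / 2) := by
      field_simp
    rw [h2] at h1
    rw [hF, hlogdiv]
    linarith
  -- the exact balance identity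
  have hbal : Real.exp (-η * F ^ 2) * B = Real.exp (-η * (1 - F) ^ 2) * A := by
    have hexps : -η * F ^ 2 + Real.log B = -η * (1 - F) ^ 2 + Real.log A := by
      have h12 : η * (1 - 2 * F) = Real.log A - Real.log B := by
        rw [hF, hlogdiv]
        field_simp
        ring
      nlinarith [h12]
    calc Real.exp (-η * F ^ 2) * B = Real.exp (-η * F ^ 2 + Real.log B) := by
            rw [Real.exp_add, Real.exp_log hB0]
      _ = Real.exp (-η * (1 - F) ^ 2 + Real.log A) := by rw [hexps]
      _ = Real.exp (-η * (1 - F) ^ 2) * A := by rw [Real.exp_add, Real.exp_log hA0]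
  -- summed tangent inequality
  have hsum : F * Real.exp (-η * F ^ 2) * B + (1 - F) * Real.exp (-η * (1 - F) ^ 2) * A
      ≤ Real.exp (-η * F ^ 2) * Real.exp (-η * (1 - F) ^ 2) := by
    have hterm : ∀ i : Fin N,
        q i * (F * Real.exp (-η * F ^ 2) * Real.exp (-η * (1 - c i) ^ 2)
          + (1 - F) * Real.exp (-η * (1 - F) ^ 2) * Real.exp (-η * (c i) ^ 2))
        ≤ q i * (Real.exp (-η * F ^ 2) * Real.exp (-η * (1 - F) ^ 2)) := fun i =>
      mul_le_mul_of_nonneg_left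
        (key_pointwise η F (c i) hη hη2 hF0 hF1 (hc i).1 (hc i).2) (hq0 i)
    have h1 := Finset.sum_le_sum (fun i (_ : i ∈ Finset.univ) => hterm i)
    have h2 : ∑ i, q i * (Real.exp (-η * F ^ 2) * Real.exp (-η * (1 - F) ^ 2))
        = Real.exp (-η * F ^ 2) * Real.exp (-η * (1 - F) ^ 2) := by
      rw [← Finset.sum_mul, hq1, one_mul]
    have h3 : ∑ i, q i * (F * Real.exp (-η * F ^ 2) * Real.exp (-η * (1 - c i) ^ 2)
          + (1 - F) * Real.exp (-η * (1 - F) ^ 2) * Real.exp (-η * (c i) ^ 2))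
        = F * Real.exp (-η * F ^ 2) * B + (1 - F) * Real.exp (-η * (1 - F) ^ 2) * A := by
      rw [hA, hB, Finset.mul_sum, Finset.mul_sum, ← Finset.sum_add_distrib]
      apply Finset.sum_congr rfl
      intro i _
      ring
    rw [h3, h2] at h1
    exact h1
  have hu : 0 < Real.exp (-η * F ^ 2) := Real.exp_pos _
  have hv : 0 < Real.exp (-η * (1 - F) ^ 2) := Real.exp_pos _
  -- conclude A ≤ exp(-ηF²) and B ≤ exp(-η(1-F)²)
  have hAle : A ≤ Real.exp (-η * F ^ 2) := by
    have e' : Real.exp (-η * (1 - F) ^ 2) * A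
        = F * Real.exp (-η * F ^ 2) * B + (1 - F) * Real.exp (-η * (1 - F) ^ 2) * A := by
      linear_combination (-F) * hbal
    have h1 : Real.exp (-η * (1 - F) ^ 2) * A
        ≤ Real.exp (-η * (1 - F) ^ 2) * Real.exp (-η * F ^ 2) := by
      rw [e']
      exact hsum.trans_eq (mul_comm _ _)
    exact (mul_le_mul_iff_right₀ hv).mp h1
  have hBle : B ≤ Real.exp (-η * (1 - F) ^ 2) := by
    have e : Real.exp (-η * F ^ 2) * B
        = F * Real.exp (-η * F ^ 2) * B + (1 - F) * Real.exp (-η * (1 - F) ^ 2) * A := by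
      linear_combination (1 - F) * hbal
    have h1 : Real.exp (-η * F ^ 2) * B
        ≤ Real.exp (-η * F ^ 2) * Real.exp (-η * (1 - F) ^ 2) := by
      rw [e]
      exact hsum
    exact (mul_le_mul_iff_right₀ hu).mp h1
  -- finish by cases on ω
  intro ω hω
  rcases hω with h | h
  · subst h
    simp only [sub_zero]
    exact hAle
  · simp only [Set.mem_singleton_iff] at h
    subst h
    have hgoal : ∑ i, q i * Real.exp (-η * (c i - 1) ^ 2) = B := by
      rw [hB]
      apply Finset.sum_congr rfl
      intro i _
      rw [show (c i - 1) ^ 2 = (1 - c i) ^ 2 from by ring]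
    rw [ge_iff_le, hgoal, show (F - 1) ^ 2 = (1 - F) ^ 2 from by ring]
    exact hBle
end

section
/- Let 0 < η ≤ 1/2 and ω ∈ {0,1}. Then the function f ↦ exp(−η·(f − ω)²) is concave on the interval [0,1]. -/
open Real

/-- The square loss is `η`-exponentially concave on `[0,1]` for `0 < η ≤ 1/2`:
the map `f ↦ exp (-η * (f - ω)^2)` is concave on `[0,1]` for binary outcomes `ω`. -/
theorem square_loss_exp_concave (η : ℝ) (hη : 0 < η) (hη2 : η ≤ 1 / 2)
    (ω : ℝ) (hω : ω ∈ ({0, 1} : Set ℝ)) :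
    ConcaveOn ℝ (Set.Icc (0 : ℝ) 1) (fun f => Real.exp (-η * (f - ω) ^ 2)) := by
  set g : ℝ → ℝ := fun f => Real.exp (-η * (f - ω) ^ 2) with hg
  have hd : ∀ x : ℝ, HasDerivAt g (Real.exp (-η * (x - ω) ^ 2) * (-2 * η * (x - ω))) x := by
    intro x
    have h1 : HasDerivAt (fun x : ℝ => -η * (x - ω) ^ 2) (-2 * η * (x - ω)) x := by
      have : HasDerivAt (fun x : ℝ => x - ω) 1 x := (hasDerivAt_id x).sub_const ω
      have := ((this.pow 2).const_mul (-η))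
      exact this.congr_deriv (by push_cast; ring)
    have := h1.exp
    rw [hg]
    convert this using 1
  have hd2 : ∀ x : ℝ, HasDerivAt (deriv g)
      (Real.exp (-η * (x - ω) ^ 2) * ((-2 * η * (x - ω)) ^ 2 + (-2 * η))) x := by
    intro x
    have hdg : deriv g = fun x => Real.exp (-η * (x - ω) ^ 2) * (-2 * η * (x - ω)) := by
      funext y; exact (hd y).deriv
    rw [hdg]
    have h1 : HasDerivAt (fun x : ℝ => Real.exp (-η * (x - ω) ^ 2))
        (Real.exp (-η * (x - ω) ^ 2) * (-2 * η * (x - ω))) x := hd x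
    have h2 : HasDerivAt (fun x : ℝ => -2 * η * (x - ω)) (-2 * η) x := by
      have : HasDerivAt (fun x : ℝ => x - ω) 1 x := (hasDerivAt_id x).sub_const ω
      simpa using this.const_mul (-2 * η)
    have := h1.mul h2
    exact this.congr_deriv (by ring)
  apply concaveOn_of_deriv2_nonpos (convex_Icc 0 1)
  · exact (Real.continuous_exp.comp (by continuity)).continuousOn
  · intro x _; exact (hd x).differentiableAt.differentiableWithinAt
  · intro x _
    have : DifferentiableAt ℝ (deriv g) x := (hd2 x).differentiableAt
    exact this.differentiableWithinAt
  · intro x hx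
    rw [interior_Icc] at hx
    have hdd : deriv (deriv g) x = Real.exp (-η * (x - ω) ^ 2) * ((-2 * η * (x - ω)) ^ 2 + (-2 * η)) :=
      (hd2 x).deriv
    rw [show deriv^[2] g = deriv (deriv g) from rfl, hdd]
    apply mul_nonpos_of_nonneg_of_nonpos (Real.exp_nonneg _)
    have hxω : (x - ω) ^ 2 ≤ 1 := by
      simp only [Set.mem_insert_iff, Set.mem_singleton_iff] at hω
      rcases hω with h | h <;> subst h <;> nlinarith [hx.1.le, hx.2.le]
    nlinarith [sq_nonneg (x - ω), mul_nonneg (mul_nonneg hη.le hη.le) (sq_nonneg (x - ω))]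
end

section
/- Let a < b be real numbers and N ≥ 1. Let q = (q_1, …, q_N) be a probability vector and let F_1, …, F_N be distribution functions on [a,b]. Define F : [a,b] → ℝ by F(u) = 1/2 − (1/4) · ln( (Σ_{i=1}^N q_i · e^{−2 F_i(u)²}) / (Σ_{i=1}^N q_i · e^{−2 (1 − F_i(u))²}) ). Then for every y ∈ [a,b] one has exp(−(2/(b−a)) · CRPS(F, y)) ≥ Σ_{i=1}^N q_i · exp(−(2/(b−a)) · CRPS(F_i, y)). In other words, the loss function CRPS is (2/(b−a))-mixable and the displayed formula is a substitution function witnessing this. -/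
/-- A distribution function on `[a,b]`: nondecreasing on `[a,b]` with `F a = 0`, `F b = 1`. -/
def DistFunc (a b : ℝ) (F : ℝ → ℝ) : Prop :=
  MonotoneOn F (Set.Icc a b) ∧ F a = 0 ∧ F b = 1

/-- The continuous ranked probability score
`CRPS(F, y) = ∫_a^b (F u - H(u - y))^2 du`, where `H` is the Heaviside function
(`H(u - y) = 1` iff `u ≥ y`). -/
noncomputable def CRPS (a b : ℝ) (F : ℝ → ℝ) (y : ℝ) : ℝ :=
  ∫ u in a..b, (F u - (if y ≤ u then (1 : ℝ) else 0)) ^ 2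

lemma log_mix_le (p : ℝ) (hp0 : 0 ≤ p) (hp1 : p ≤ 1) (w : ℝ) :
    Real.log (1 - p + p * Real.exp w) ≤ p * w + w ^ 2 / 8 := by
  have hd : ∀ v : ℝ, 0 < 1 - p + p * Real.exp v := by
    intro v
    rcases hp0.eq_or_lt with h | h
    · simp [← h]
    · have := mul_pos h (Real.exp_pos v)
      linarith
  -- derivative of the mix
  have hdd : ∀ v : ℝ, HasDerivAt (fun w => 1 - p + p * Real.exp w) (p * Real.exp v) v := by
    intro v
    exact ((Real.hasDerivAt_exp v).const_mul p).const_add (1 - p)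
  set g : ℝ → ℝ := fun w => p + w / 4 - p * Real.exp w / (1 - p + p * Real.exp w) with hg
  have hgd : ∀ v : ℝ, HasDerivAt g
      (1 / 4 - p * (1 - p) * Real.exp v / (1 - p + p * Real.exp v) ^ 2) v := by
    intro v
    have hq : HasDerivAt (fun w => p * Real.exp w / (1 - p + p * Real.exp w))
        ((p * Real.exp v * (1 - p + p * Real.exp v) - p * Real.exp v * (p * Real.exp v)) /
          (1 - p + p * Real.exp v) ^ 2) v :=
      ((Real.hasDerivAt_exp v).const_mul p).div (hdd v) (hd v).ne'
    have h1 : HasDerivAt (fun w : ℝ => p + w / 4) (1 / 4) v := by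
      simpa using ((hasDerivAt_id v).div_const 4).const_add p
    have := h1.sub hq
    have hnum : p * Real.exp v * (1 - p + p * Real.exp v) - p * Real.exp v * (p * Real.exp v)
        = p * (1 - p) * Real.exp v := by ring
    rw [hnum] at this; exact this
  have hgmono : Monotone g := by
    apply monotone_of_deriv_nonneg
    · exact fun v => (hgd v).differentiableAt
    · intro v
      rw [(hgd v).deriv]
      have hpos : 0 < (1 - p + p * Real.exp v) ^ 2 := pow_pos (hd v) 2
      have h4 : 4 * (p * (1 - p) * Real.exp v) ≤ (1 - p + p * Real.exp v) ^ 2 := by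
        nlinarith [sq_nonneg (1 - p - p * Real.exp v)]
      rw [sub_nonneg, div_le_iff₀ hpos]
      linarith
  have hg0 : g 0 = 0 := by
    simp [hg, Real.exp_zero]
  set f : ℝ → ℝ := fun w => p * w + w ^ 2 / 8 - Real.log (1 - p + p * Real.exp w) with hf
  have hfd : ∀ v : ℝ, HasDerivAt f (g v) v := by
    intro v
    have hlog : HasDerivAt (fun w => Real.log (1 - p + p * Real.exp w))
        (p * Real.exp v / (1 - p + p * Real.exp v)) v := (hdd v).log (hd v).ne'
    have h1 : HasDerivAt (fun w : ℝ => p * w + w ^ 2 / 8) (p + v / 4) v := by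
      have := ((hasDerivAt_id v).const_mul p).add (((hasDerivAt_pow 2 v)).div_const 8)
      exact this.congr_deriv (by push_cast; ring)
    exact h1.sub hlog
  have hf0 : f 0 = 0 := by simp [hf, Real.exp_zero]
  have hfcont : Continuous f := by
    have : Differentiable ℝ f := fun v => (hfd v).differentiableAt
    exact this.continuous
  have key : 0 ≤ f w := by
    rcases le_or_gt 0 w with h | h
    · have hmono : MonotoneOn f (Set.Ici (0:ℝ)) := by
        apply monotoneOn_of_deriv_nonneg (convex_Ici 0) hfcont.continuousOn
        · intro v hv
          exact (hfd v).differentiableAt.differentiableWithinAt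
        · intro v hv
          rw [(hfd v).deriv]
          rw [interior_Ici] at hv
          have := hgmono (le_of_lt hv)
          rw [hg0] at this
          exact this
      have := hmono (Set.self_mem_Ici) h h
      rwa [hf0] at this
    · have hmono : AntitoneOn f (Set.Iic (0:ℝ)) := by
        apply antitoneOn_of_deriv_nonpos (convex_Iic 0) hfcont.continuousOn
        · intro v hv
          exact (hfd v).differentiableAt.differentiableWithinAt
        · intro v hv
          rw [(hfd v).deriv]
          rw [interior_Iic] at hv
          have := hgmono (le_of_lt hv)
          rw [hg0] at this
          exact this
      have := hmono h.le Set.self_mem_Iic h.le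
      rwa [hf0] at this
  simp only [hf] at key
  linarith

lemma hoeffding_two_point (p : ℝ) (hp0 : 0 ≤ p) (hp1 : p ≤ 1) (w : ℝ) :
    (1 - p) * Real.exp (-(p * w)) + p * Real.exp ((1 - p) * w) ≤ Real.exp (w ^ 2 / 8) := by
  have hd : 0 < 1 - p + p * Real.exp w := by
    rcases hp0.eq_or_lt with h | h
    · simp [← h]
    · have := mul_pos h (Real.exp_pos w)
      linarith
  have h1 : (1 - p) * Real.exp (-(p * w)) + p * Real.exp ((1 - p) * w)
      = Real.exp (-(p * w)) * (1 - p + p * Real.exp w) := by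
    have : (1 - p) * w = -(p * w) + w := by ring
    rw [this, Real.exp_add]
    ring
  rw [h1, ← Real.exp_log hd, ← Real.exp_add]
  apply Real.exp_le_exp.2
  have := log_mix_le p hp0 hp1 w
  linarith


lemma tangent_ineq (p : ℝ) (hp0 : 0 ≤ p) (hp1 : p ≤ 1) (z : ℝ) :
    (1 - p) * Real.exp (2 * p ^ 2 - 2 * z ^ 2)
      + p * Real.exp (2 * (1 - p) ^ 2 - 2 * (1 - z) ^ 2) ≤ 1 := by
  set w : ℝ := 4 * (z - p) with hw
  have e1 : 2 * p ^ 2 - 2 * z ^ 2 = -(2 * (z - p) ^ 2) + -(p * w) := by rw [hw]; ring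
  have e2 : 2 * (1 - p) ^ 2 - 2 * (1 - z) ^ 2 = -(2 * (z - p) ^ 2) + (1 - p) * w := by
    rw [hw]; ring
  rw [e1, e2, Real.exp_add, Real.exp_add]
  have h := hoeffding_two_point p hp0 hp1 w
  have hfac : (1 - p) * (Real.exp (-(2 * (z - p) ^ 2)) * Real.exp (-(p * w)))
      + p * (Real.exp (-(2 * (z - p) ^ 2)) * Real.exp ((1 - p) * w))
      = Real.exp (-(2 * (z - p) ^ 2)) *
        ((1 - p) * Real.exp (-(p * w)) + p * Real.exp ((1 - p) * w)) := by ring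
  rw [hfac]
  calc Real.exp (-(2 * (z - p) ^ 2)) *
        ((1 - p) * Real.exp (-(p * w)) + p * Real.exp ((1 - p) * w))
      ≤ Real.exp (-(2 * (z - p) ^ 2)) * Real.exp (w ^ 2 / 8) :=
        mul_le_mul_of_nonneg_left h (Real.exp_pos _).le
    _ = 1 := by
        rw [← Real.exp_add]
        have : -(2 * (z - p) ^ 2) + w ^ 2 / 8 = 0 := by rw [hw]; ring
        rw [this, Real.exp_zero]


lemma sum_exp_mem {N : ℕ} (q v : Fin N → ℝ) (hq0 : ∀ i, 0 ≤ q i) (hq1 : ∑ i, q i = 1)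
    (hv : ∀ i, -2 ≤ v i ∧ v i ≤ 0) :
    Real.exp (-2) ≤ ∑ i, q i * Real.exp (v i) ∧ (∑ i, q i * Real.exp (v i)) ≤ 1 := by
  constructor
  · calc Real.exp (-2) = ∑ i, q i * Real.exp (-2) := by
          rw [← Finset.sum_mul, hq1, one_mul]
      _ ≤ ∑ i, q i * Real.exp (v i) := by
          apply Finset.sum_le_sum
          intro i _
          exact mul_le_mul_of_nonneg_left (Real.exp_le_exp.2 (hv i).1) (hq0 i)
  · calc (∑ i, q i * Real.exp (v i)) ≤ ∑ i, q i * 1 := by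
          apply Finset.sum_le_sum
          intro i _
          exact mul_le_mul_of_nonneg_left (Real.exp_le_one_iff.2 (hv i).2) (hq0 i)
      _ = 1 := by rw [← Finset.sum_mul, hq1, one_mul]

lemma mix_core {N : ℕ} (q pp : Fin N → ℝ) (hq0 : ∀ i, 0 ≤ q i) (hq1 : ∑ i, q i = 1)
    (hp : ∀ i, pp i ∈ Set.Icc (0:ℝ) 1) (A B P : ℝ)
    (hA : A = ∑ i, q i * Real.exp (-2 * pp i ^ 2))
    (hB : B = ∑ i, q i * Real.exp (-2 * (1 - pp i) ^ 2))
    (hP : P = 1 / 2 - 1 / 4 * Real.log (A / B)) :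
    A ≤ Real.exp (-2 * P ^ 2) ∧ B ≤ Real.exp (-2 * (1 - P) ^ 2) := by
  have hpi : ∀ i, 0 ≤ pp i ∧ pp i ≤ 1 := fun i => ⟨(hp i).1, (hp i).2⟩
  have hAb : Real.exp (-2) ≤ A ∧ A ≤ 1 := by
    rw [hA]
    apply sum_exp_mem q _ hq0 hq1
    intro i
    constructor
    · nlinarith [(hpi i).1, (hpi i).2]
    · nlinarith [sq_nonneg (pp i)]
  have hBb : Real.exp (-2) ≤ B ∧ B ≤ 1 := by
    rw [hB]
    apply sum_exp_mem q _ hq0 hq1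
    intro i
    constructor
    · nlinarith [(hpi i).1, (hpi i).2]
    · nlinarith [sq_nonneg (1 - pp i)]
  have hApos : 0 < A := lt_of_lt_of_le (Real.exp_pos _) hAb.1
  have hBpos : 0 < B := lt_of_lt_of_le (Real.exp_pos _) hBb.1
  have hlogA1 : -2 ≤ Real.log A := by
    have := Real.log_le_log (Real.exp_pos _) hAb.1
    rwa [Real.log_exp] at this
  have hlogA2 : Real.log A ≤ 0 := Real.log_nonpos hApos.le hAb.2
  have hlogB1 : -2 ≤ Real.log B := by
    have := Real.log_le_log (Real.exp_pos _) hBb.1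
    rwa [Real.log_exp] at this
  have hlogB2 : Real.log B ≤ 0 := Real.log_nonpos hBpos.le hBb.2
  have hlogdiv : Real.log (A / B) = Real.log A - Real.log B :=
    Real.log_div hApos.ne' hBpos.ne'
  have hP0 : 0 ≤ P := by rw [hP, hlogdiv]; linarith
  have hP1 : P ≤ 1 := by rw [hP, hlogdiv]; linarith
  -- tangent sum
  have key : (1 - P) * Real.exp (2 * P ^ 2) * A + P * Real.exp (2 * (1 - P) ^ 2) * B ≤ 1 := by
    have expand : (1 - P) * Real.exp (2 * P ^ 2) * A + P * Real.exp (2 * (1 - P) ^ 2) * B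
        = ∑ i, q i * ((1 - P) * Real.exp (2 * P ^ 2 - 2 * pp i ^ 2)
            + P * Real.exp (2 * (1 - P) ^ 2 - 2 * (1 - pp i) ^ 2)) := by
      rw [hA, hB, Finset.mul_sum, Finset.mul_sum, ← Finset.sum_add_distrib]
      apply Finset.sum_congr rfl
      intro i _
      have e1 : 2 * P ^ 2 - 2 * pp i ^ 2 = 2 * P ^ 2 + -2 * pp i ^ 2 := by ring
      have e2 : 2 * (1 - P) ^ 2 - 2 * (1 - pp i) ^ 2
          = 2 * (1 - P) ^ 2 + -2 * (1 - pp i) ^ 2 := by ring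
      rw [e1, e2, Real.exp_add, Real.exp_add]
      ring
    rw [expand]
    calc (∑ i, q i * ((1 - P) * Real.exp (2 * P ^ 2 - 2 * pp i ^ 2)
            + P * Real.exp (2 * (1 - P) ^ 2 - 2 * (1 - pp i) ^ 2)))
        ≤ ∑ i, q i * 1 := by
          apply Finset.sum_le_sum
          intro i _
          exact mul_le_mul_of_nonneg_left (tangent_ineq P hP0 hP1 (pp i)) (hq0 i)
      _ = 1 := by rw [← Finset.sum_mul, hq1, one_mul]
  -- identity linking the two terms
  have hid : Real.exp (2 * (1 - P) ^ 2) * B = Real.exp (2 * P ^ 2) * A := by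
    have h1 : Real.exp (2 * (1 - P) ^ 2) * B = Real.exp (2 * (1 - P) ^ 2 + Real.log B) := by
      rw [Real.exp_add, Real.exp_log hBpos]
    have h2 : Real.exp (2 * P ^ 2) * A = Real.exp (2 * P ^ 2 + Real.log A) := by
      rw [Real.exp_add, Real.exp_log hApos]
    rw [h1, h2]
    congr 1
    have : 1 - 2 * P = 1 / 2 * (Real.log A - Real.log B) := by rw [hP, hlogdiv]; ring
    nlinarith [this]
  have keyA : Real.exp (2 * P ^ 2) * A ≤ 1 := by
    have : (1 - P) * Real.exp (2 * P ^ 2) * A + P * Real.exp (2 * (1 - P) ^ 2) * B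
        = Real.exp (2 * P ^ 2) * A := by
      rw [mul_assoc P, hid]; ring
    linarith [key, this.symm.le]
  constructor
  · rw [show (-2 : ℝ) * P ^ 2 = -(2 * P ^ 2) by ring, Real.exp_neg, inv_eq_one_div,
      le_div_iff₀ (Real.exp_pos _)]
    linarith [keyA]
  · have keyB : Real.exp (2 * (1 - P) ^ 2) * B ≤ 1 := by rw [hid]; exact keyA
    rw [show (-2 : ℝ) * (1 - P) ^ 2 = -(2 * (1 - P) ^ 2) by ring, Real.exp_neg, inv_eq_one_div,
      le_div_iff₀ (Real.exp_pos _)]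
    linarith [keyB]

open MeasureTheory in
/-- `CRPS` is `2/(b-a)`-mixable, witnessed by the substitution rule
`F(u) = 1/2 - (1/4) ln (Σ q_i e^{-2 F_i(u)²} / Σ q_i e^{-2 (1-F_i(u))²})`. -/
theorem crps_mixable (a b : ℝ) (hab : a < b) (N : ℕ) (hN : 1 ≤ N)
    (q : Fin N → ℝ) (hq0 : ∀ i, 0 ≤ q i) (hq1 : ∑ i, q i = 1)
    (Fi : Fin N → ℝ → ℝ) (hFi : ∀ i, DistFunc a b (Fi i))
    (F : ℝ → ℝ)
    (hF : ∀ u ∈ Set.Icc a b, F u = 1 / 2 - (1 / 4) * Real.log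
      ((∑ i, q i * Real.exp (-2 * (Fi i u) ^ 2)) /
        (∑ i, q i * Real.exp (-2 * (1 - Fi i u) ^ 2)))) :
    ∀ y ∈ Set.Icc a b,
      Real.exp (-(2 / (b - a)) * CRPS a b F y) ≥
        ∑ i, q i * Real.exp (-(2 / (b - a)) * CRPS a b (Fi i) y) := by
  intro y hy
  classical
  have hba : (0:ℝ) < b - a := sub_pos.2 hab
  set P : Measure ℝ := (ENNReal.ofReal (b - a))⁻¹ • (volume.restrict (Set.Ioc a b)) with hPdef
  have hPuniv : P Set.univ = 1 := by
    rw [hPdef, Measure.smul_apply, Measure.restrict_apply_univ, Real.volume_Ioc, smul_eq_mul,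
      ENNReal.inv_mul_cancel (by rw [Ne, ENNReal.ofReal_eq_zero]; linarith)
        ENNReal.ofReal_ne_top]
  haveI hPprob : IsProbabilityMeasure P := ⟨hPuniv⟩
  -- clamped distribution functions
  set cl : ℝ → ℝ := fun u => max a (min u b) with hcl
  have hcl_mem : ∀ u, cl u ∈ Set.Icc a b := fun u =>
    ⟨le_max_left _ _, max_le hab.le (min_le_right _ _)⟩
  have hcl_fix : ∀ u ∈ Set.Icc a b, cl u = u := by
    intro u hu
    show max a (min u b) = u
    rw [min_eq_left hu.2, max_eq_right hu.1]
  set p : Fin N → ℝ → ℝ := fun i u => Fi i (cl u) with hpdef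
  have hp_app : ∀ i u, p i u = Fi i (cl u) := fun i u => rfl
  have hp_mono : ∀ i, Monotone (p i) := by
    intro i u v huv
    exact (hFi i).1 (hcl_mem u) (hcl_mem v) (max_le_max le_rfl (min_le_min huv le_rfl))
  have hp_meas : ∀ i, Measurable (p i) := fun i => (hp_mono i).measurable
  have hp01 : ∀ i u, 0 ≤ p i u ∧ p i u ≤ 1 := by
    intro i u
    have hamem : a ∈ Set.Icc a b := ⟨le_rfl, hab.le⟩
    have hbmem : b ∈ Set.Icc a b := ⟨hab.le, le_rfl⟩
    constructor
    · have := (hFi i).1 hamem (hcl_mem u) (hcl_mem u).1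
      rwa [(hFi i).2.1] at this
    · have := (hFi i).1 (hcl_mem u) hbmem (hcl_mem u).2
      rwa [(hFi i).2.2] at this
  have hp_fix : ∀ i, ∀ u ∈ Set.Icc a b, p i u = Fi i u := by
    intro i u hu
    rw [hp_app, hcl_fix u hu]
  -- Heaviside
  set H : ℝ → ℝ := fun u => if y ≤ u then (1:ℝ) else 0 with hHdef
  have hH_app : ∀ u, H u = if y ≤ u then (1:ℝ) else 0 := fun u => rfl
  have hH_meas : Measurable H := Measurable.ite measurableSet_Ici measurable_const measurable_const
  have hH01 : ∀ u, 0 ≤ H u ∧ H u ≤ 1 := by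
    intro u; rw [hH_app]; split_ifs <;> norm_num
  -- per-expert exponents
  set x : Fin N → ℝ → ℝ := fun i u => -2 * (p i u - H u) ^ 2 with hxdef
  have hx_app : ∀ i u, x i u = -2 * (p i u - H u) ^ 2 := fun i u => rfl
  have hx_meas : ∀ i, Measurable (x i) :=
    fun i => (((hp_meas i).sub hH_meas).pow_const 2).const_mul (-2)
  have hx_bdd : ∀ i u, -2 ≤ x i u ∧ x i u ≤ 0 := by
    intro i u
    have h1 := hp01 i u
    have h2 := hH01 u
    rw [hx_app]
    constructor
    · nlinarith [h1.1, h1.2, h2.1, h2.2]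
    · nlinarith [sq_nonneg (p i u - H u)]
  -- mixture
  set G : ℝ → ℝ := fun u => ∑ i, q i * Real.exp (x i u) with hGdef
  have hG_app : ∀ u, G u = ∑ i, q i * Real.exp (x i u) := fun u => rfl
  have hG_meas : Measurable G := by
    apply Finset.measurable_sum
    intro i _
    exact (Real.measurable_exp.comp (hx_meas i)).const_mul (q i)
  have hG_bdd : ∀ u, Real.exp (-2) ≤ G u ∧ G u ≤ 1 := by
    intro u
    exact sum_exp_mem q (fun i => x i u) hq0 hq1 (fun i => hx_bdd i u)
  have hG_pos : ∀ u, 0 < G u := fun u => lt_of_lt_of_le (Real.exp_pos _) (hG_bdd u).1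
  have hlogG_bdd : ∀ u, -2 ≤ Real.log (G u) ∧ Real.log (G u) ≤ 0 := by
    intro u
    constructor
    · have := Real.log_le_log (Real.exp_pos _) (hG_bdd u).1
      rwa [Real.log_exp] at this
    · exact Real.log_nonpos (hG_pos u).le (hG_bdd u).2
  -- substitution function in measurable form
  set A : ℝ → ℝ := fun u => ∑ i, q i * Real.exp (-2 * p i u ^ 2) with hAdef
  set B : ℝ → ℝ := fun u => ∑ i, q i * Real.exp (-2 * (1 - p i u) ^ 2) with hBdef
  set Ψ : ℝ → ℝ := fun u => 1 / 2 - 1 / 4 * Real.log (A u / B u) with hΨdef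
  have hA_app : ∀ u, A u = ∑ i, q i * Real.exp (-2 * p i u ^ 2) := fun u => rfl
  have hB_app : ∀ u, B u = ∑ i, q i * Real.exp (-2 * (1 - p i u) ^ 2) := fun u => rfl
  have hΨ_app : ∀ u, Ψ u = 1 / 2 - 1 / 4 * Real.log (A u / B u) := fun u => rfl
  have hA_bdd : ∀ u, Real.exp (-2) ≤ A u ∧ A u ≤ 1 := by
    intro u
    rw [hA_app]
    apply sum_exp_mem q _ hq0 hq1
    intro i
    have h1 := hp01 i u
    constructor
    · nlinarith [h1.1, h1.2]
    · nlinarith [sq_nonneg (p i u)]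
  have hB_bdd : ∀ u, Real.exp (-2) ≤ B u ∧ B u ≤ 1 := by
    intro u
    rw [hB_app]
    apply sum_exp_mem q _ hq0 hq1
    intro i
    have h1 := hp01 i u
    constructor
    · nlinarith [h1.1, h1.2]
    · nlinarith [sq_nonneg (1 - p i u)]
  have hA_pos : ∀ u, 0 < A u := fun u => lt_of_lt_of_le (Real.exp_pos _) (hA_bdd u).1
  have hB_pos : ∀ u, 0 < B u := fun u => lt_of_lt_of_le (Real.exp_pos _) (hB_bdd u).1
  have hA_meas : Measurable A := by
    apply Finset.measurable_sum
    intro i _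
    exact (Real.measurable_exp.comp (((hp_meas i).pow_const 2).const_mul (-2))).const_mul (q i)
  have hB_meas : Measurable B := by
    apply Finset.measurable_sum
    intro i _
    exact (Real.measurable_exp.comp
      ((((measurable_const.sub (hp_meas i))).pow_const 2).const_mul (-2))).const_mul (q i)
  have hΨ_meas : Measurable Ψ :=
    measurable_const.sub ((Real.measurable_log.comp (hA_meas.div hB_meas)).const_mul (1/4))
  have hΨ01 : ∀ u, 0 ≤ Ψ u ∧ Ψ u ≤ 1 := by
    intro u
    have hlA1 : -2 ≤ Real.log (A u) := by
      have := Real.log_le_log (Real.exp_pos _) (hA_bdd u).1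
      rwa [Real.log_exp] at this
    have hlA2 : Real.log (A u) ≤ 0 := Real.log_nonpos (hA_pos u).le (hA_bdd u).2
    have hlB1 : -2 ≤ Real.log (B u) := by
      have := Real.log_le_log (Real.exp_pos _) (hB_bdd u).1
      rwa [Real.log_exp] at this
    have hlB2 : Real.log (B u) ≤ 0 := Real.log_nonpos (hB_pos u).le (hB_bdd u).2
    have hld : Real.log (A u / B u) = Real.log (A u) - Real.log (B u) :=
      Real.log_div (hA_pos u).ne' (hB_pos u).ne'
    rw [hΨ_app, hld]
    constructor <;> linarith
  -- pointwise mixability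
  have hpt : ∀ u, Real.log (G u) ≤ -2 * (Ψ u - H u) ^ 2 := by
    intro u
    have hmc := mix_core q (fun i => p i u) hq0 hq1
      (fun i => ⟨(hp01 i u).1, (hp01 i u).2⟩) (A u) (B u) (Ψ u) (hA_app u) (hB_app u) (hΨ_app u)
    rw [Real.log_le_iff_le_exp (hG_pos u)]
    by_cases hyu : y ≤ u
    · have hH1 : H u = 1 := by rw [hH_app]; simp [hyu]
      have hGB : G u = B u := by
        rw [hG_app, hB_app]
        apply Finset.sum_congr rfl
        intro i _
        congr 1
        rw [hx_app, hH1]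
        ring_nf
      rw [hGB, hH1]
      have he : (-2 : ℝ) * (Ψ u - 1) ^ 2 = -2 * (1 - Ψ u) ^ 2 := by ring
      rw [he]
      exact hmc.2
    · have hH0 : H u = 0 := by rw [hH_app]; simp [hyu]
      have hGA : G u = A u := by
        rw [hG_app, hA_app]
        apply Finset.sum_congr rfl
        intro i _
        congr 1
        rw [hx_app, hH0]
        ring_nf
      rw [hGA, hH0, sub_zero]
      exact hmc.1
  -- integrability helper
  have hint : ∀ (f : ℝ → ℝ) (C : ℝ), Measurable f → (∀ u, |f u| ≤ C) → Integrable f P := by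
    intro f C hm hb
    exact Integrable.mono' (integrable_const C) hm.aestronglyMeasurable
      (Filter.Eventually.of_forall fun u => hb u)
  -- CRPS conversion
  have key_eq : ∀ (Φ Ψ' : ℝ → ℝ), (∀ u ∈ Set.Ioc a b, Φ u = Ψ' u) →
      -(2 / (b - a)) * CRPS a b Φ y = ∫ u, -2 * (Ψ' u - H u) ^ 2 ∂P := by
    intro Φ Ψ' heq
    have h1 : CRPS a b Φ y = ∫ u in Set.Ioc a b, (Ψ' u - H u) ^ 2 := by
      rw [CRPS, intervalIntegral.integral_of_le hab.le]
      apply setIntegral_congr_fun measurableSet_Ioc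
      intro u hu
      show (Φ u - if y ≤ u then (1:ℝ) else 0) ^ 2 = (Ψ' u - H u) ^ 2
      rw [heq u hu, hH_app]
    have h2 : (∫ u, -2 * (Ψ' u - H u) ^ 2 ∂P)
        = (b - a)⁻¹ * ∫ u in Set.Ioc a b, -2 * (Ψ' u - H u) ^ 2 := by
      rw [hPdef, integral_smul_measure, ENNReal.toReal_inv, ENNReal.toReal_ofReal hba.le,
        smul_eq_mul]
    rw [h1, h2, integral_const_mul, div_eq_mul_inv]
    ring
  have hIi : ∀ i, -(2 / (b - a)) * CRPS a b (Fi i) y = ∫ u, x i u ∂P := by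
    intro i
    have h := key_eq (Fi i) (p i) (fun u hu => (hp_fix i u (Set.Ioc_subset_Icc_self hu)).symm)
    exact h
  have hIF : -(2 / (b - a)) * CRPS a b F y = ∫ u, -2 * (Ψ u - H u) ^ 2 ∂P := by
    apply key_eq
    intro u hu
    have hu' := Set.Ioc_subset_Icc_self hu
    have e1 : A u = ∑ i, q i * Real.exp (-2 * Fi i u ^ 2) := by
      rw [hA_app]
      exact Finset.sum_congr rfl fun i _ => by rw [hp_fix i u hu']
    have e2 : B u = ∑ i, q i * Real.exp (-2 * (1 - Fi i u) ^ 2) := by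
      rw [hB_app]
      exact Finset.sum_congr rfl fun i _ => by rw [hp_fix i u hu']
    rw [hF u hu', hΨ_app, e1, e2]
  -- integrability facts
  have hintx : ∀ i, Integrable (x i) P := by
    intro i
    apply hint _ 2 (hx_meas i)
    intro u
    rw [abs_le]
    exact ⟨(hx_bdd i u).1, le_trans (hx_bdd i u).2 (by norm_num)⟩
  have hintlogG : Integrable (fun u => Real.log (G u)) P := by
    apply hint _ 2 (Real.measurable_log.comp hG_meas)
    intro u
    show |Real.log (G u)| ≤ 2
    rw [abs_le]
    exact ⟨(hlogG_bdd u).1, le_trans (hlogG_bdd u).2 (by norm_num)⟩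
  have hintΨ : Integrable (fun u => -2 * (Ψ u - H u) ^ 2) P := by
    apply hint _ 2 ((((hΨ_meas.sub hH_meas)).pow_const 2).const_mul (-2))
    intro u
    show |-2 * (Ψ u - H u) ^ 2| ≤ 2
    have h1 := hΨ01 u
    have h2 := hH01 u
    rw [abs_le]
    constructor
    · nlinarith [h1.1, h1.2, h2.1, h2.2]
    · nlinarith [sq_nonneg (Ψ u - H u)]
  -- Step 1
  have step1 : (∫ u, Real.log (G u) ∂P) ≤ ∫ u, -2 * (Ψ u - H u) ^ 2 ∂P :=
    integral_mono hintlogG hintΨ hpt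
  set IG : ℝ := ∫ u, Real.log (G u) ∂P with hIGdef
  -- Step 2 : Jensen per expert
  have step2 : ∀ i, Real.exp (∫ u, x i u ∂P)
      ≤ (∫ u, Real.exp (x i u) / G u ∂P) * Real.exp IG := by
    intro i
    set f : ℝ → ℝ := fun u => x i u - Real.log (G u) with hfdef
    have hf_app : ∀ u, f u = x i u - Real.log (G u) := fun u => rfl
    have hf_meas : Measurable f := (hx_meas i).sub (Real.measurable_log.comp hG_meas)
    have hf_bdd : ∀ u, |f u| ≤ 2 := by
      intro u
      rw [hf_app, abs_le]
      have h1 := hx_bdd i u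
      have h2 := hlogG_bdd u
      constructor
      · linarith
      · linarith
    have hintf : Integrable f P := hint f 2 hf_meas hf_bdd
    have hintef : Integrable (fun u => Real.exp (f u)) P := by
      apply hint _ (Real.exp 2) (Real.measurable_exp.comp hf_meas)
      intro u
      show |Real.exp (f u)| ≤ Real.exp 2
      rw [abs_of_pos (Real.exp_pos _)]
      exact Real.exp_le_exp.2 (abs_le.1 (hf_bdd u)).2
    have hjensen : Real.exp (∫ u, f u ∂P) ≤ ∫ u, Real.exp (f u) ∂P := by
      have := convexOn_exp.map_integral_le Real.continuous_exp.continuousOn isClosed_univ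
        (Filter.Eventually.of_forall fun u => Set.mem_univ (f u)) hintf
        hintef
      simpa using this
    have hsplit : (∫ u, f u ∂P) = (∫ u, x i u ∂P) - IG := by
      rw [hIGdef]
      exact integral_sub (hintx i) hintlogG
    have heq2 : (∫ u, Real.exp (f u) ∂P) = ∫ u, Real.exp (x i u) / G u ∂P := by
      apply integral_congr_ae
      apply Filter.Eventually.of_forall
      intro u
      show Real.exp (f u) = Real.exp (x i u) / G u
      rw [hf_app, Real.exp_sub, Real.exp_log (hG_pos u)]
    rw [hsplit, Real.exp_sub, heq2] at hjensen
    calc Real.exp (∫ u, x i u ∂P)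
        = Real.exp (∫ u, x i u ∂P) / Real.exp IG * Real.exp IG := by
          field_simp
      _ ≤ (∫ u, Real.exp (x i u) / G u ∂P) * Real.exp IG :=
          mul_le_mul_of_nonneg_right hjensen (Real.exp_pos _).le
  -- sum the ratios
  have hintratio : ∀ i, Integrable (fun u => q i * (Real.exp (x i u) / G u)) P := by
    intro i
    apply hint _ (|q i| * Real.exp 2)
      ((((Real.measurable_exp.comp (hx_meas i))).div hG_meas).const_mul (q i))
    intro u
    show |q i * (Real.exp (x i u) / G u)| ≤ |q i| * Real.exp 2
    rw [abs_mul]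
    apply mul_le_mul_of_nonneg_left _ (abs_nonneg _)
    rw [abs_of_pos (div_pos (Real.exp_pos _) (hG_pos u)), div_le_iff₀ (hG_pos u)]
    calc Real.exp (x i u) ≤ 1 := Real.exp_le_one_iff.2 (hx_bdd i u).2
      _ ≤ Real.exp 2 * Real.exp (-2) := by rw [← Real.exp_add]; norm_num
      _ ≤ Real.exp 2 * G u := mul_le_mul_of_nonneg_left (hG_bdd u).1 (Real.exp_pos _).le
  have hsum : (∑ i, q i * ∫ u, Real.exp (x i u) / G u ∂P) = 1 := by
    have h1 : ∀ i : Fin N, q i * (∫ u, Real.exp (x i u) / G u ∂P)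
        = ∫ u, q i * (Real.exp (x i u) / G u) ∂P := fun i => (integral_const_mul (q i) _).symm
    rw [Finset.sum_congr rfl (fun i _ => h1 i), ← integral_finset_sum _ (fun i _ => hintratio i)]
    have h2 : ∀ u : ℝ, (∑ i, q i * (Real.exp (x i u) / G u)) = 1 := by
      intro u
      have h3 : ∀ i : Fin N, q i * (Real.exp (x i u) / G u)
          = q i * Real.exp (x i u) / G u := fun i => (mul_div_assoc _ _ _).symm
      rw [Finset.sum_congr rfl (fun i _ => h3 i), ← Finset.sum_div, ← hG_app]
      exact div_self (hG_pos u).ne'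
    rw [integral_congr_ae (Filter.Eventually.of_forall h2)]
    simp
  have step2sum : (∑ i, q i * Real.exp (∫ u, x i u ∂P)) ≤ Real.exp IG := by
    calc (∑ i, q i * Real.exp (∫ u, x i u ∂P))
        ≤ ∑ i, q i * ((∫ u, Real.exp (x i u) / G u ∂P) * Real.exp IG) := by
          apply Finset.sum_le_sum
          intro i _
          exact mul_le_mul_of_nonneg_left (step2 i) (hq0 i)
      _ = (∑ i, q i * ∫ u, Real.exp (x i u) / G u ∂P) * Real.exp IG := by
          rw [Finset.sum_mul]
          exact Finset.sum_congr rfl fun i _ => (mul_assoc _ _ _).symm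
      _ = Real.exp IG := by rw [hsum, one_mul]
  -- conclude
  rw [ge_iff_le]
  calc (∑ i, q i * Real.exp (-(2 / (b - a)) * CRPS a b (Fi i) y))
      = ∑ i, q i * Real.exp (∫ u, x i u ∂P) := by
        exact Finset.sum_congr rfl fun i _ => by rw [hIi i]
    _ ≤ Real.exp IG := step2sum
    _ ≤ Real.exp (∫ u, -2 * (Ψ u - H u) ^ 2 ∂P) := Real.exp_le_exp.2 step1
    _ = Real.exp (-(2 / (b - a)) * CRPS a b F y) := by rw [hIF]
end

section
/- Let a < b, d ≥ 1, N ≥ 1, and Δ = (b−a)/d. Let q = (q_1, …, q_N) be a probability vector and let c_i = (c_i^1, …, c_i^d) ∈ [0,1]^d for 1 ≤ i ≤ N. For each s with 1 ≤ s ≤ d define f^s = 1/2 − (1/4) · ln( (Σ_{i=1}^N q_i · e^{−2 (c_i^s)²}) / (Σ_{i=1}^N q_i · e^{−2 (1 − c_i^s)²}) ). Then for every ω = (ω^1, …, ω^d) ∈ {0,1}^d one has exp(−(2/(b−a)) · Δ · Σ_{s=1}^d (f^s − ω^s)²) ≥ Σ_{i=1}^N q_i · exp(−(2/(b−a)) ·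 Δ · Σ_{s=1}^d (c_i^s − ω^s)²). -/
lemma hoeffding_scalar (p : ℝ) (hp0 : 0 ≤ p) (hp1 : p ≤ 1) (t : ℝ) :
    (1 - p) * Real.exp (-p * t) + p * Real.exp ((1 - p) * t) ≤ Real.exp (t ^ 2 / 8) := by
  set D : ℝ → ℝ := fun t => 1 - p + p * Real.exp t with hD
  have hDpos : ∀ t, 0 < D t := by
    intro t
    rcases eq_or_lt_of_le hp0 with h | h
    · simp [hD, ← h]
    · have := Real.exp_pos t
      simp only [hD]
      nlinarith
  set G : ℝ → ℝ := fun t => t ^ 2 / 8 + p * t - Real.log (D t) with hGdef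
  set G' : ℝ → ℝ := fun t => t / 4 + p - p * Real.exp t / D t with hG'def
  have hDd : ∀ x : ℝ, HasDerivAt D (p * Real.exp x) x := by
    intro x
    have h1 : HasDerivAt (fun t : ℝ => p * Real.exp t) (p * Real.exp x) x :=
      (Real.hasDerivAt_exp x).const_mul p
    simpa [hD] using h1.const_add (1 - p)
  have hG : ∀ x : ℝ, HasDerivAt G (G' x) x := by
    intro x
    have h1 : HasDerivAt (fun t : ℝ => t ^ 2 / 8 + p * t)
        (x / 4 + p) x := by
      have := ((hasDerivAt_pow 2 x).div_const 8).add ((hasDerivAt_id x).const_mul p)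
      refine this.congr_deriv ?_
      ring
    have h2 : HasDerivAt (fun t => Real.log (D t)) (p * Real.exp x / D x) x :=
      (hDd x).log (hDpos x).ne'
    exact h1.sub h2
  have hG' : ∀ x : ℝ, HasDerivAt G' (1 / 4 - p * (1 - p) * Real.exp x / (D x) ^ 2) x := by
    intro x
    have h1 : HasDerivAt (fun t : ℝ => t / 4 + p) (1 / 4) x := by
      simpa using ((hasDerivAt_id x).div_const 4).add_const p
    have h2 : HasDerivAt (fun t => p * Real.exp t / D t)
        ((p * Real.exp x * D x - p * Real.exp x * (p * Real.exp x)) / (D x) ^ 2) x :=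
      ((Real.hasDerivAt_exp x).const_mul p).div (hDd x) (hDpos x).ne'
    have h3 := h1.sub h2
    refine h3.congr_deriv ?_
    simp only [hD]
    ring
  have hG'nonneg : ∀ x : ℝ, 0 ≤ 1 / 4 - p * (1 - p) * Real.exp x / (D x) ^ 2 := by
    intro x
    rw [sub_nonneg, div_le_iff₀ (pow_pos (hDpos x) 2)]
    have h := sq_nonneg ((1 - p) - p * Real.exp x)
    simp only [hD]
    nlinarith
  have hmono : Monotone G' := by
    apply monotone_of_deriv_nonneg (fun x => (hG' x).differentiableAt)
    intro x
    rw [(hG' x).deriv]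
    exact hG'nonneg x
  have hG'0 : G' 0 = 0 := by
    simp [hG'def, hD]
  have hGnonneg : ∀ x : ℝ, 0 ≤ G x := by
    have hG0 : G 0 = 0 := by simp [hGdef, hD]
    have hdiff : Differentiable ℝ G := fun x => (hG x).differentiableAt
    intro x
    rcases le_total 0 x with hx | hx
    · have hm : MonotoneOn G (Set.Ici (0:ℝ)) := by
        apply monotoneOn_of_deriv_nonneg (convex_Ici 0) hdiff.continuous.continuousOn
          hdiff.differentiableOn
        intro y hy
        rw [(hG y).deriv, ← hG'0]
        exact hmono (le_of_lt (by simpa using hy))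
      have := hm (Set.self_mem_Ici) (by exact hx) hx
      rwa [hG0] at this
    · have hm : AntitoneOn G (Set.Iic (0:ℝ)) := by
        apply antitoneOn_of_deriv_nonpos (convex_Iic 0) hdiff.continuous.continuousOn
          hdiff.differentiableOn
        intro y hy
        rw [(hG y).deriv, ← hG'0]
        exact hmono (le_of_lt (by simpa using hy))
      have := hm (by exact hx) (Set.self_mem_Iic) hx
      rwa [hG0] at this
  have hlog : Real.log (D t) ≤ t ^ 2 / 8 + p * t := by
    have := hGnonneg t
    simp only [hGdef] at this
    linarith
  have hDle : D t ≤ Real.exp (t ^ 2 / 8 + p * t) := by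
    rw [← Real.exp_log (hDpos t)]
    exact Real.exp_le_exp.2 hlog
  calc (1 - p) * Real.exp (-p * t) + p * Real.exp ((1 - p) * t)
      = Real.exp (-p * t) * D t := by
        simp only [hD]
        rw [show (1 - p) * t = -p * t + t by ring, Real.exp_add]
        ring
    _ ≤ Real.exp (-p * t) * Real.exp (t ^ 2 / 8 + p * t) :=
        mul_le_mul_of_nonneg_left hDle (Real.exp_pos _).le
    _ = Real.exp (t ^ 2 / 8) := by rw [← Real.exp_add]; ring_nf


lemma coord_mix (N : ℕ) (q : Fin N → ℝ) (hq0 : ∀ i, 0 ≤ q i) (hq1 : ∑ i, q i = 1)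
    (c : Fin N → ℝ) (hc : ∀ i, c i ∈ Set.Icc (0 : ℝ) 1) (f : ℝ)
    (hf : f = 1 / 2 - (1 / 4) * Real.log
      ((∑ i, q i * Real.exp (-2 * (c i) ^ 2)) / (∑ i, q i * Real.exp (-2 * (1 - c i) ^ 2))))
    (ω : ℝ) (hω : ω = 0 ∨ ω = 1) :
    ∑ i, q i * Real.exp (-2 * (c i - ω) ^ 2) ≤ Real.exp (-2 * (f - ω) ^ 2) := by
  set A : ℝ := ∑ i, q i * Real.exp (-2 * (c i) ^ 2) with hAdef
  set B : ℝ := ∑ i, q i * Real.exp (-2 * (1 - c i) ^ 2) with hBdef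
  -- bounds on A and B
  have hbound : ∀ (g : Fin N → ℝ), (∀ i, -2 ≤ g i) → (∀ i, g i ≤ 0) →
      Real.exp (-2) ≤ (∑ i, q i * Real.exp (g i)) ∧ (∑ i, q i * Real.exp (g i)) ≤ 1 := by
    intro g hg1 hg2
    constructor
    · calc Real.exp (-2) = ∑ i, q i * Real.exp (-2) := by
            rw [← Finset.sum_mul, hq1, one_mul]
      _ ≤ ∑ i, q i * Real.exp (g i) :=
          Finset.sum_le_sum fun i _ =>
            mul_le_mul_of_nonneg_left (Real.exp_le_exp.2 (hg1 i)) (hq0 i)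
    · calc (∑ i, q i * Real.exp (g i)) ≤ ∑ i, q i * 1 :=
          Finset.sum_le_sum fun i _ => mul_le_mul_of_nonneg_left
            (by simpa using Real.exp_le_exp.2 (hg2 i)) (hq0 i)
      _ = 1 := by simp [hq1]
  have hA := hbound (fun i => -2 * (c i) ^ 2)
    (fun i => by nlinarith [(hc i).1, (hc i).2])
    (fun i => by nlinarith [(hc i).1, (hc i).2])
  have hB := hbound (fun i => -2 * (1 - c i) ^ 2)
    (fun i => by nlinarith [(hc i).1, (hc i).2])
    (fun i => by nlinarith [(hc i).1, (hc i).2])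
  rw [← hAdef] at hA
  rw [← hBdef] at hB
  have hA0 : 0 < A := lt_of_lt_of_le (Real.exp_pos _) hA.1
  have hB0 : 0 < B := lt_of_lt_of_le (Real.exp_pos _) hB.1
  -- f ∈ [0,1]
  have hlogA1 : Real.log A ≤ 0 := Real.log_nonpos hA0.le hA.2
  have hlogA2 : -2 ≤ Real.log A := by
    rw [← Real.log_exp (-2)]; exact Real.log_le_log (Real.exp_pos _) hA.1
  have hlogB1 : Real.log B ≤ 0 := Real.log_nonpos hB0.le hB.2
  have hlogB2 : -2 ≤ Real.log B := by
    rw [← Real.log_exp (-2)]; exact Real.log_le_log (Real.exp_pos _) hB.1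
  have hfval : f = 1 / 2 - (1 / 4) * (Real.log A - Real.log B) := by
    rw [hf, ← Real.log_div hA0.ne' hB0.ne']
  have hf0 : 0 ≤ f := by rw [hfval]; linarith
  have hf1 : f ≤ 1 := by rw [hfval]; linarith
  -- tangent inequality
  have key : ∀ x : ℝ, (1 - f) * Real.exp (2 * f ^ 2 - 2 * x ^ 2)
      + f * Real.exp (2 * (1 - f) ^ 2 - 2 * (1 - x) ^ 2) ≤ 1 := by
    intro x
    have h := hoeffding_scalar f hf0 hf1 (4 * (x - f))
    have e1 : 2 * f ^ 2 - 2 * x ^ 2 = -f * (4 * (x - f)) + -((4 * (x - f)) ^ 2 / 8) := by ring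
    have e2 : 2 * (1 - f) ^ 2 - 2 * (1 - x) ^ 2
        = (1 - f) * (4 * (x - f)) + -((4 * (x - f)) ^ 2 / 8) := by ring
    rw [e1, e2, Real.exp_add, Real.exp_add]
    have hpos := (Real.exp_pos (-((4 * (x - f)) ^ 2 / 8))).le
    calc (1 - f) * (Real.exp (-f * (4 * (x - f))) * Real.exp (-((4 * (x - f)) ^ 2 / 8)))
          + f * (Real.exp ((1 - f) * (4 * (x - f))) * Real.exp (-((4 * (x - f)) ^ 2 / 8)))
        = ((1 - f) * Real.exp (-f * (4 * (x - f)))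
          + f * Real.exp ((1 - f) * (4 * (x - f)))) * Real.exp (-((4 * (x - f)) ^ 2 / 8)) := by
          ring
      _ ≤ Real.exp ((4 * (x - f)) ^ 2 / 8) * Real.exp (-((4 * (x - f)) ^ 2 / 8)) :=
          mul_le_mul_of_nonneg_right h hpos
      _ = 1 := by rw [← Real.exp_add]; simp
  -- sum the tangent inequality
  have star : (1 - f) * Real.exp (2 * f ^ 2) * A + f * Real.exp (2 * (1 - f) ^ 2) * B ≤ 1 := by
    have expand : (1 - f) * Real.exp (2 * f ^ 2) * A + f * Real.exp (2 * (1 - f) ^ 2) * B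
        = ∑ i, q i * ((1 - f) * Real.exp (2 * f ^ 2 - 2 * (c i) ^ 2)
            + f * Real.exp (2 * (1 - f) ^ 2 - 2 * (1 - c i) ^ 2)) := by
      rw [hAdef, hBdef, Finset.mul_sum, Finset.mul_sum, ← Finset.sum_add_distrib]
      refine Finset.sum_congr rfl fun i _ => ?_
      rw [show 2 * f ^ 2 - 2 * (c i) ^ 2 = 2 * f ^ 2 + -2 * (c i) ^ 2 by ring,
        show 2 * (1 - f) ^ 2 - 2 * (1 - c i) ^ 2 = 2 * (1 - f) ^ 2 + -2 * (1 - c i) ^ 2 by ring,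
        Real.exp_add, Real.exp_add]
      ring
    rw [expand]
    calc (∑ i, q i * ((1 - f) * Real.exp (2 * f ^ 2 - 2 * (c i) ^ 2)
            + f * Real.exp (2 * (1 - f) ^ 2 - 2 * (1 - c i) ^ 2)))
        ≤ ∑ i, q i * 1 :=
          Finset.sum_le_sum fun i _ => mul_le_mul_of_nonneg_left (key (c i)) (hq0 i)
      _ = 1 := by simp [hq1]
  -- ratio identity
  have hratio : A * Real.exp (2 * f ^ 2) = B * Real.exp (2 * (1 - f) ^ 2) := by
    have hexp : Real.exp (Real.log A + 2 * f ^ 2) = Real.exp (Real.log B + 2 * (1 - f) ^ 2) := by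
      congr 1
      have h4 : Real.log A - Real.log B = 2 - 4 * f := by rw [hfval]; ring
      linear_combination h4
    rwa [Real.exp_add, Real.exp_add, Real.exp_log hA0, Real.exp_log hB0] at hexp
  have hrho : A * Real.exp (2 * f ^ 2) ≤ 1 := by
    nlinarith [star, hratio]
  -- conclude both bounds
  have hAle : A ≤ Real.exp (-(2 * f ^ 2)) := by
    have := mul_le_mul_of_nonneg_right hrho (Real.exp_pos (-(2 * f ^ 2))).le
    rwa [one_mul, mul_assoc, ← Real.exp_add, add_neg_cancel, Real.exp_zero, mul_one] at this
  have hBle : B ≤ Real.exp (-(2 * (1 - f) ^ 2)) := by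
    have hrho' : B * Real.exp (2 * (1 - f) ^ 2) ≤ 1 := by rw [← hratio]; exact hrho
    have := mul_le_mul_of_nonneg_right hrho' (Real.exp_pos (-(2 * (1 - f) ^ 2))).le
    rwa [one_mul, mul_assoc, ← Real.exp_add, add_neg_cancel, Real.exp_zero, mul_one] at this
  rcases hω with h | h
  · subst h
    calc ∑ i, q i * Real.exp (-2 * (c i - 0) ^ 2) = A := by
          rw [hAdef]; exact Finset.sum_congr rfl fun i _ => by norm_num
      _ ≤ Real.exp (-(2 * f ^ 2)) := hAle
      _ = Real.exp (-2 * (f - 0) ^ 2) := by norm_num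
  · subst h
    calc ∑ i, q i * Real.exp (-2 * (c i - 1) ^ 2) = B := by
          rw [hBdef]
          exact Finset.sum_congr rfl fun i _ => by rw [show (-2:ℝ) * (c i - 1) ^ 2 = -2 * (1 - c i) ^ 2 by ring]
      _ ≤ Real.exp (-(2 * (1 - f) ^ 2)) := hBle
      _ = Real.exp (-2 * (f - 1) ^ 2) := by rw [show (-(2 * (1 - f) ^ 2) : ℝ) = -2 * (f - 1) ^ 2 by ring]


/-- The grid loss `λ(f, ω) = Δ · Σ_s (f^s - ω^s)²` with `Δ = (b-a)/d` on vector
forecasts in `[0,1]^d` and binary outcome vectors is `2/(b-a)`-mixable, independently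
of the grid size `d`, witnessed by the coordinatewise AA substitution formula. -/
theorem grid_square_loss_mixable (a b : ℝ) (hab : a < b) (d N : ℕ) (hd : 1 ≤ d)
    (hN : 1 ≤ N)
    (q : Fin N → ℝ) (hq0 : ∀ i, 0 ≤ q i) (hq1 : ∑ i, q i = 1)
    (c : Fin N → Fin d → ℝ) (hc : ∀ i s, c i s ∈ Set.Icc (0 : ℝ) 1)
    (f : Fin d → ℝ)
    (hf : ∀ s, f s = 1 / 2 - (1 / 4) * Real.log
      ((∑ i, q i * Real.exp (-2 * (c i s) ^ 2)) /
        (∑ i, q i * Real.exp (-2 * (1 - c i s) ^ 2)))) :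
    ∀ ω : Fin d → ℝ, (∀ s, ω s = 0 ∨ ω s = 1) →
      Real.exp (-(2 / (b - a)) * (((b - a) / d) * ∑ s, (f s - ω s) ^ 2)) ≥
        ∑ i, q i * Real.exp (-(2 / (b - a)) * (((b - a) / d) * ∑ s, (c i s - ω s) ^ 2)) := by
  intro ω hω
  have hba : (0 : ℝ) < b - a := sub_pos.2 hab
  have hd0 : (0 : ℝ) < (d : ℝ) := by exact_mod_cast hd
  set M : Fin d → ℝ := fun s => ∑ i, q i * Real.exp (-2 * (c i s - ω s) ^ 2) with hM
  have hMpos : ∀ s, 0 < M s := by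
    intro s
    have : Real.exp (-2) ≤ M s := by
      calc Real.exp (-2) = ∑ i, q i * Real.exp (-2) := by rw [← Finset.sum_mul, hq1, one_mul]
        _ ≤ M s := by
            refine Finset.sum_le_sum fun i _ => mul_le_mul_of_nonneg_left
              (Real.exp_le_exp.2 ?_) (hq0 i)
            rcases hω s with h | h <;> nlinarith [(hc i s).1, (hc i s).2]
    exact lt_of_lt_of_le (Real.exp_pos _) this
  have hMle : ∀ s, M s ≤ Real.exp (-2 * (f s - ω s) ^ 2) := fun s =>
    coord_mix N q hq0 hq1 (fun i => c i s) (fun i => hc i s) (f s) (hf s) (ω s) (hω s)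
  have hconst : ∀ S : ℝ, -(2 / (b - a)) * ((b - a) / d * S) = (1 / (d : ℝ)) * (-2 * S) := by
    intro S
    field_simp
  rw [ge_iff_le, hconst]
  rw [Finset.sum_congr rfl (fun i (_ : i ∈ Finset.univ) => by rw [hconst])]
  -- weights
  have hw : ∑ _s : Fin d, (1 / (d : ℝ)) = 1 := by
    rw [Finset.sum_const, Finset.card_univ, Fintype.card_fin, nsmul_eq_mul, mul_one_div,
      div_self hd0.ne']
  set C : ℝ := Real.exp ((1 / (d : ℝ)) * ∑ s, Real.log (M s)) with hC
  have jensen : ∀ z : Fin d → ℝ,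
      Real.exp (∑ s, (1 / (d : ℝ)) * z s) ≤ ∑ s, (1 / (d : ℝ)) * Real.exp (z s) := by
    intro z
    have := convexOn_exp.map_sum_le (t := Finset.univ) (w := fun _ => 1 / (d : ℝ)) (p := z)
      (fun i _ => by positivity) hw (fun i _ => Set.mem_univ _)
    simpa [smul_eq_mul] using this
  have step1 : ∀ i, Real.exp ((1 / (d : ℝ)) * (-2 * ∑ s, (c i s - ω s) ^ 2)) ≤
      (∑ s, (1 / (d : ℝ)) * Real.exp (-2 * (c i s - ω s) ^ 2 - Real.log (M s))) * C := by
    intro i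
    have hsplit : (1 / (d : ℝ)) * (-2 * ∑ s, (c i s - ω s) ^ 2) =
        (∑ s, (1 / (d : ℝ)) * (-2 * (c i s - ω s) ^ 2 - Real.log (M s))) +
          (1 / (d : ℝ)) * ∑ s, Real.log (M s) := by
      simp only [Finset.mul_sum]
      rw [← Finset.sum_add_distrib]
      exact Finset.sum_congr rfl fun s _ => by ring
    rw [hsplit, Real.exp_add]
    exact mul_le_mul_of_nonneg_right (jensen _) (Real.exp_pos _).le
  have hnorm : ∀ s, ∑ i, q i * Real.exp (-2 * (c i s - ω s) ^ 2 - Real.log (M s)) = 1 := by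
    intro s
    have h1 : ∀ i, q i * Real.exp (-2 * (c i s - ω s) ^ 2 - Real.log (M s)) =
        q i * Real.exp (-2 * (c i s - ω s) ^ 2) * (M s)⁻¹ := by
      intro i
      rw [Real.exp_sub, Real.exp_log (hMpos s)]
      ring
    rw [Finset.sum_congr rfl fun i _ => h1 i, ← Finset.sum_mul]
    exact mul_inv_cancel₀ (hMpos s).ne'
  calc ∑ i, q i * Real.exp ((1 / (d : ℝ)) * (-2 * ∑ s, (c i s - ω s) ^ 2))
      ≤ ∑ i, q i * ((∑ s, (1 / (d : ℝ)) *
          Real.exp (-2 * (c i s - ω s) ^ 2 - Real.log (M s))) * C) :=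
        Finset.sum_le_sum fun i _ => mul_le_mul_of_nonneg_left (step1 i) (hq0 i)
    _ = ∑ i, (∑ s, (1 / (d : ℝ)) *
          (q i * Real.exp (-2 * (c i s - ω s) ^ 2 - Real.log (M s)))) * C := by
        refine Finset.sum_congr rfl fun i _ => ?_
        rw [← mul_assoc, Finset.mul_sum]
        congr 1
        exact Finset.sum_congr rfl fun s _ => by ring
    _ = (∑ i, ∑ s, (1 / (d : ℝ)) *
          (q i * Real.exp (-2 * (c i s - ω s) ^ 2 - Real.log (M s)))) * C := by
        rw [← Finset.sum_mul]
    _ = (∑ s, (1 / (d : ℝ)) *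
          ∑ i, q i * Real.exp (-2 * (c i s - ω s) ^ 2 - Real.log (M s))) * C := by
        rw [Finset.sum_comm]
        congr 1
        exact Finset.sum_congr rfl fun s _ => by rw [Finset.mul_sum]
    _ = C := by
        rw [Finset.sum_congr rfl fun s (_ : s ∈ Finset.univ) => by rw [hnorm s]]
        simp only [mul_one]
        rw [hw, one_mul]
    _ ≤ Real.exp ((1 / (d : ℝ)) * (-2 * ∑ s, (f s - ω s) ^ 2)) := by
        rw [hC, Real.exp_le_exp]
        have : ∀ s : Fin d, Real.log (M s) ≤ -2 * (f s - ω s) ^ 2 := by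
          intro s
          have := Real.log_le_log (hMpos s) (hMle s)
          rwa [Real.log_exp] at this
        have hsum : ∑ s, Real.log (M s) ≤ -2 * ∑ s, (f s - ω s) ^ 2 := by
          rw [Finset.mul_sum]
          exact Finset.sum_le_sum fun s _ => this s
        exact mul_le_mul_of_nonneg_left hsum (by positivity)
end

section
/- Let a < b, let F be a distribution function on [a,b], let d ≥ 1, Δ = (b−a)/d, and z_s = a + sΔ for 0 ≤ s ≤ d. Define the piecewise-constant function L : [a,b] → ℝ by L(u) = F(z_s) for u ∈ [z_{s−1}, z_s) (1 ≤ s ≤ d) and L(b) = 1. Then for every y ∈ [a,b] one has |CRPS(F, y) − CRPS(L, y)| ≤ 2Δ. -/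
open MeasureTheory Set intervalIntegral

private lemma monoOn_mul_aux {f g : ℝ → ℝ} {s : Set ℝ}
    (hf : MonotoneOn f s) (hg : MonotoneOn g s)
    (hf0 : ∀ x ∈ s, 0 ≤ f x) (hg0 : ∀ x ∈ s, 0 ≤ g x) :
    MonotoneOn (fun x => f x * g x) s := by
  intro u hu v hv huv
  exact mul_le_mul (hf hu hv huv) (hg hu hv huv) (hg0 u hu) (hf0 v hv)

/-- Approximating a distribution function `F` by the piecewise-constant function `L`
on the uniform grid `z_s = a + s·Δ`, `Δ = (b-a)/d` (with `L u = F z_s` on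
`[z_{s-1}, z_s)` and `L b = 1`) changes the CRPS by at most `2Δ`. -/
theorem crps_piecewise_approx (a b : ℝ) (hab : a < b)
    (F : ℝ → ℝ) (hF : DistFunc a b F) (d : ℕ) (hd : 1 ≤ d)
    (L : ℝ → ℝ)
    (hL : ∀ s : ℕ, 1 ≤ s → s ≤ d →
      ∀ u ∈ Set.Ico (a + ((s : ℝ) - 1) * ((b - a) / d)) (a + (s : ℝ) * ((b - a) / d)),
        L u = F (a + (s : ℝ) * ((b - a) / d)))
    (hLb : L b = 1) :
    ∀ y ∈ Set.Icc a b, |CRPS a b F y - CRPS a b L y| ≤ 2 * ((b - a) / d) := by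
  obtain ⟨hFmono, hFa, hFb⟩ := hF
  intro y hy
  have hd0 : (0:ℝ) < (d:ℝ) := by exact_mod_cast Nat.pos_of_ne_zero (by omega)
  set Δ : ℝ := (b - a) / d with hΔdef
  have hΔpos : 0 < Δ := div_pos (by linarith) hd0
  set z : ℕ → ℝ := fun s => a + s * Δ with hzdef
  have hz0 : z 0 = a := by simp [hzdef]
  have hzd : z d = b := by
    simp only [hzdef, hΔdef]
    field_simp
    ring
  have hzmono : Monotone z := by
    intro s t hst
    simp only [hzdef]
    have : (s:ℝ) ≤ t := by exact_mod_cast hst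
    nlinarith
  have hzmem : ∀ s : ℕ, s ≤ d → z s ∈ Icc a b := by
    intro s hs
    constructor
    · rw [← hz0]; exact hzmono (Nat.zero_le s)
    · rw [← hzd]; exact hzmono hs
  have haIcc : a ∈ Icc a b := ⟨le_refl a, hab.le⟩
  have hbIcc : b ∈ Icc a b := ⟨hab.le, le_refl b⟩
  have hF01 : ∀ u ∈ Icc a b, 0 ≤ F u ∧ F u ≤ 1 := by
    intro u hu
    exact ⟨hFa ▸ hFmono haIcc hu hu.1, hFb ▸ hFmono hu hbIcc hu.2⟩
  -- the floor index
  set T : ℝ → ℕ := fun u => ⌊(u - a) / Δ⌋₊ with hTdef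
  have hT : ∀ u ∈ Ico a b, z (T u) ≤ u ∧ u < z (T u + 1) ∧ T u + 1 ≤ d ∧
      L u = F (z (T u + 1)) := by
    intro u hu
    have hr0 : 0 ≤ (u - a) / Δ := div_nonneg (by linarith [hu.1]) hΔpos.le
    have hrd : (u - a) / Δ < d := by
      rw [div_lt_iff₀ hΔpos]
      have : (d:ℝ) * Δ = b - a := by
        simp only [hΔdef]; field_simp
      rw [this]; linarith [hu.2]
    have hfl : (T u : ℝ) ≤ (u - a) / Δ := Nat.floor_le hr0
    have hfl2 : (u - a) / Δ < T u + 1 := Nat.lt_floor_add_one _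
    have h1 : z (T u) ≤ u := by
      simp only [hzdef]
      have := mul_le_mul_of_nonneg_right hfl hΔpos.le
      rw [div_mul_cancel₀ _ hΔpos.ne'] at this
      linarith
    have h2 : u < z (T u + 1) := by
      simp only [hzdef]
      have := mul_lt_mul_of_pos_right hfl2 hΔpos
      rw [div_mul_cancel₀ _ hΔpos.ne'] at this
      push_cast
      push_cast at this
      linarith
    have h3 : T u + 1 ≤ d := by
      have : T u < d := (Nat.floor_lt hr0).mpr hrd
      omega
    refine ⟨h1, h2, h3, ?_⟩
    have heq := hL (T u + 1) (by omega) h3 u ?_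
    · rw [heq]
      try simp only [hzdef]
      try push_cast
      try ring_nf
    · constructor
      · have hc : (((T u + 1 : ℕ)) : ℝ) - 1 = (T u : ℝ) := by push_cast; ring
        rw [hc]
        exact h1
      · simp only [hzdef] at h2
        push_cast at h2 ⊢
        linarith
  have hFL : ∀ u ∈ Icc a b, F u ≤ L u ∧ 0 ≤ L u ∧ L u ≤ 1 := by
    intro u hu
    by_cases hub : u = b
    · subst hub
      rw [hLb, hFb]
      norm_num
    · have hu' : u ∈ Ico a b := ⟨hu.1, lt_of_le_of_ne hu.2 hub⟩
      obtain ⟨h1, h2, h3, h4⟩ := hT u hu'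
      rw [h4]
      have hzmem' := hzmem (T u + 1) h3
      exact ⟨hFmono hu hzmem' h2.le, (hF01 _ hzmem').1, (hF01 _ hzmem').2⟩
  have hLmono : MonotoneOn L (Icc a b) := by
    intro u hu v hv huv
    by_cases hvb : v = b
    · subst hvb
      rw [hLb]
      exact (hFL u hu).2.2
    · have hv' : v ∈ Ico a b := ⟨hv.1, lt_of_le_of_ne hv.2 hvb⟩
      have hu' : u ∈ Ico a b := ⟨hu.1, lt_of_le_of_lt huv hv'.2⟩
      obtain ⟨_, _, h3u, h4u⟩ := hT u hu'
      obtain ⟨_, _, h3v, h4v⟩ := hT v hv'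
      rw [h4u, h4v]
      have hTuv : T u ≤ T v := by
        apply Nat.floor_le_floor
        gcongr
        try linarith
      exact hFmono (hzmem _ h3u) (hzmem _ h3v) (hzmono (by omega))
  -- Heaviside
  set H : ℝ → ℝ := fun u => if y ≤ u then (1:ℝ) else 0 with hHdef
  have hH01 : ∀ u, 0 ≤ H u ∧ H u ≤ 1 := by
    intro u
    simp only [hHdef]
    split_ifs <;> norm_num
  have hHmono : MonotoneOn H (Icc a b) := by
    intro u _ v _ huv
    simp only [hHdef]
    split_ifs with h1 h2
    · exact le_refl _
    · exact absurd (h1.trans huv) h2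
    · norm_num
    · exact le_refl _
  -- integrability helper
  have haux : ∀ G : ℝ → ℝ, MonotoneOn G (Icc a b) → IntervalIntegrable G volume a b := by
    intro G hG
    apply MonotoneOn.intervalIntegrable
    rwa [uIcc_of_le hab.le]
  have intF : IntervalIntegrable F volume a b := haux F hFmono
  have intL : IntervalIntegrable L volume a b := haux L hLmono
  have intH : IntervalIntegrable H volume a b := haux H hHmono
  have intF2 : IntervalIntegrable (fun u => F u * F u) volume a b :=
    haux _ (monoOn_mul_aux hFmono hFmono (fun x hx => (hF01 x hx).1) (fun x hx => (hF01 x hx).1))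
  have intL2 : IntervalIntegrable (fun u => L u * L u) volume a b :=
    haux _ (monoOn_mul_aux hLmono hLmono (fun x hx => (hFL x hx).2.1) (fun x hx => (hFL x hx).2.1))
  have intFH : IntervalIntegrable (fun u => F u * H u) volume a b :=
    haux _ (monoOn_mul_aux hFmono hHmono (fun x hx => (hF01 x hx).1) (fun x hx => (hH01 x).1))
  have intLH : IntervalIntegrable (fun u => L u * H u) volume a b :=
    haux _ (monoOn_mul_aux hLmono hHmono (fun x hx => (hFL x hx).2.1) (fun x hx => (hH01 x).1))
  have hsq : ∀ (G : ℝ → ℝ), (fun u => (G u - H u) ^ 2)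
      = fun u => (G u * G u - 2 * (G u * H u)) + H u := by
    intro G
    funext u
    simp only [hHdef]
    split_ifs <;> ring
  have intFsq : IntervalIntegrable (fun u => (F u - H u) ^ 2) volume a b := by
    rw [hsq F]
    exact (intF2.sub (intFH.const_mul 2)).add intH
  have intLsq : IntervalIntegrable (fun u => (L u - H u) ^ 2) volume a b := by
    rw [hsq L]
    exact (intL2.sub (intLH.const_mul 2)).add intH
  have intD : IntervalIntegrable (fun u => (F u - H u) ^ 2 - (L u - H u) ^ 2) volume a b :=
    intFsq.sub intLsq
  -- the key integral bound
  have hsubIcc : ∀ k : ℕ, k + 1 ≤ d → Icc (z k) (z (k + 1)) ⊆ Icc a b := by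
    intro k hk
    exact Icc_subset_Icc (hzmem k (by omega)).1 (hzmem (k+1) hk).2
  have hzlt : ∀ k : ℕ, z k < z (k + 1) := by
    intro k
    simp only [hzdef]
    push_cast
    nlinarith
  have hΔgap : ∀ k : ℕ, z (k + 1) - z k = Δ := by
    intro k
    simp only [hzdef]
    push_cast
    ring
  have hint_k : ∀ (G : ℝ → ℝ), IntervalIntegrable G volume a b → ∀ k : ℕ, k + 1 ≤ d →
      IntervalIntegrable G volume (z k) (z (k + 1)) := by
    intro G hG k hk
    apply hG.mono_set
    rw [uIcc_of_le (hzlt k).le, uIcc_of_le hab.le]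
    exact hsubIcc k hk
  have hkey : (∫ u in a..b, (L u - F u)) ≤ Δ := by
    have hsumeq : ∑ k ∈ Finset.range d, ∫ u in (z k)..(z (k+1)), (L u - F u)
        = ∫ u in (z 0)..(z d), (L u - F u) := by
      apply intervalIntegral.sum_integral_adjacent_intervals
      intro k hk
      exact hint_k _ (intL.sub intF) k hk
    rw [hz0, hzd] at hsumeq
    have hterm : ∀ k ∈ Finset.range d,
        (∫ u in (z k)..(z (k+1)), (L u - F u)) ≤ Δ * F (z (k+1)) - Δ * F (z k) := by
      intro k hk
      have hkd : k + 1 ≤ d := Finset.mem_range.mp hk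
      have hIL : ∫ u in (z k)..(z (k+1)), L u = Δ * F (z (k+1)) := by
        have hae : ∀ᵐ u : ℝ, u ∈ Set.uIoc (z k) (z (k+1)) → L u = F (z (k+1)) := by
          have hne : ∀ᵐ u : ℝ, u ∉ ({z (k+1)} : Set ℝ) :=
            measure_eq_zero_iff_ae_notMem.mp (measure_singleton _)
          filter_upwards [hne] with u hu hmem
          rw [uIoc_of_le (hzlt k).le] at hmem
          simp only [mem_singleton_iff] at hu
          have humem : u ∈ Ico (z k) (z (k+1)) :=
            ⟨hmem.1.le, lt_of_le_of_ne hmem.2 hu⟩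
          have := hL (k+1) (by omega) hkd u ?_
          · rw [this]
            try simp only [hzdef]
            try push_cast
            try ring_nf
          · simp only [hzdef] at humem ⊢
            push_cast
            push_cast at humem
            constructor
            · have := humem.1; linarith
            · have := humem.2; linarith
        rw [intervalIntegral.integral_congr_ae hae, intervalIntegral.integral_const,
          hΔgap k, smul_eq_mul]
      have hIF : Δ * F (z k) ≤ ∫ u in (z k)..(z (k+1)), F u := by
        have := intervalIntegral.integral_mono_on (hzlt k).le
          (_root_.intervalIntegrable_const (c := F (z k))) (hint_k F intF k hkd)
          (fun u hu => hFmono (hzmem k (by omega)) (hsubIcc k hkd hu) hu.1)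
        rwa [intervalIntegral.integral_const, hΔgap k, smul_eq_mul] at this
      have hsplit : (∫ u in (z k)..(z (k+1)), (L u - F u))
          = (∫ u in (z k)..(z (k+1)), L u) - ∫ u in (z k)..(z (k+1)), F u :=
        intervalIntegral.integral_sub (hint_k L intL k hkd) (hint_k F intF k hkd)
      rw [hsplit, hIL]
      linarith
    have hsum_le := Finset.sum_le_sum hterm
    have htel : ∑ k ∈ Finset.range d, (Δ * F (z (k+1)) - Δ * F (z k))
        = Δ * F (z d) - Δ * F (z 0) := Finset.sum_range_sub (fun k => Δ * F (z k)) d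
    rw [htel, hz0, hzd, hFa, hFb] at hsum_le
    rw [← hsumeq]
    linarith
  -- pointwise bound
  have hptwise : ∀ u ∈ Icc a b,
      |(F u - H u) ^ 2 - (L u - H u) ^ 2| ≤ 2 * (L u - F u) := by
    intro u hu
    obtain ⟨h1, h2, h3⟩ := hFL u hu
    obtain ⟨h4, h5⟩ := hF01 u hu
    obtain ⟨h6, h7⟩ := hH01 u
    have heq : (F u - H u) ^ 2 - (L u - H u) ^ 2
        = (F u - L u) * (F u + L u - 2 * H u) := by ring
    rw [heq, abs_mul]
    have habs1 : |F u - L u| = L u - F u := by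
      rw [abs_sub_comm]
      exact abs_of_nonneg (by linarith)
    have habs2 : |F u + L u - 2 * H u| ≤ 2 := abs_le.mpr ⟨by linarith, by linarith⟩
    rw [habs1]
    calc (L u - F u) * |F u + L u - 2 * H u| ≤ (L u - F u) * 2 :=
          mul_le_mul_of_nonneg_left habs2 (by linarith)
      _ = 2 * (L u - F u) := by ring
  -- assemble
  have hCRPS : CRPS a b F y - CRPS a b L y
      = ∫ u in a..b, ((F u - H u) ^ 2 - (L u - H u) ^ 2) := by
    simp only [CRPS, hHdef]
    exact (intervalIntegral.integral_sub intFsq intLsq).symm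
  rw [hCRPS]
  calc |∫ u in a..b, ((F u - H u) ^ 2 - (L u - H u) ^ 2)|
      ≤ ∫ u in a..b, |(F u - H u) ^ 2 - (L u - H u) ^ 2| :=
        intervalIntegral.abs_integral_le_integral_abs hab.le
    _ ≤ ∫ u in a..b, 2 * (L u - F u) :=
        intervalIntegral.integral_mono_on hab.le intD.abs
          ((intL.sub intF).const_mul 2) hptwise
    _ = 2 * ∫ u in a..b, (L u - F u) := intervalIntegral.integral_const_mul 2 _
    _ ≤ 2 * Δ := by linarith
end

section
/- Let a < b, let F be a distribution function on [a,b], let d ≥ 1, Δ = (b−a)/d, and z_s = a + sΔ for 0 ≤ s ≤ d. Let f_s = F(z_s) for 1 ≤ s ≤ d, and define the piecewise-constant function L : [a,b] → ℝ by L(u) = f_s for u ∈ [z_{s−1}, z_s) (1 ≤ s ≤ d) and L(b) = 1. For y ∈ [a,b] let ω_y^s = H(z_s − y) ∈ {0,1} for 1 ≤ s ≤ d. Then for every y ∈ [a,b] one has |CRPS(L, y) − Δ · Σ_{s=1}^d (f_s − ω_y^s)²| ≤ 2Δ. -/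
open MeasureTheory

lemma step_intable (y A B c e : ℝ) :
    IntervalIntegrable (fun u => if y ≤ u then A else B) volume c e := by
  have hmono : Monotone (fun u : ℝ => if y ≤ u then (1:ℝ) else 0) := by
    intro u v huv
    by_cases h : y ≤ u
    · simp [h, h.trans huv]
    · by_cases h' : y ≤ v <;> simp [h, h']
  have heq : (fun u : ℝ => if y ≤ u then A else B)
      = fun u => B + (A - B) * (if y ≤ u then (1:ℝ) else 0) := by
    funext u; by_cases h : y ≤ u <;> simp [h] <;> ring
  rw [heq]
  exact intervalIntegrable_const.add ((hmono.intervalIntegrable).const_mul _)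

lemma step_int_left (A B c e y : ℝ) (hyc : y ≤ c) (hce : c ≤ e) :
    (∫ u in c..e, (if y ≤ u then A else B)) = (e - c) * A := by
  rw [intervalIntegral.integral_congr (g := fun _ => A) ?_, intervalIntegral.integral_const,
    smul_eq_mul]
  intro u hu
  rw [Set.uIcc_of_le hce] at hu
  simp [hyc.trans hu.1]

lemma step_int_right (A B c e y : ℝ) (hey : e < y) (hce : c ≤ e) :
    (∫ u in c..e, (if y ≤ u then A else B)) = (e - c) * B := by
  rw [intervalIntegral.integral_congr (g := fun _ => B) ?_, intervalIntegral.integral_const,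
    smul_eq_mul]
  intro u hu
  rw [Set.uIcc_of_le hce] at hu
  simp [not_le.mpr (lt_of_le_of_lt hu.2 hey)]

lemma step_int_bounds (A B c e y : ℝ) (hce : c ≤ e)
    (hA : 0 ≤ A) (hA1 : A ≤ 1) (hB : 0 ≤ B) (hB1 : B ≤ 1) :
    0 ≤ (∫ u in c..e, (if y ≤ u then A else B)) ∧
      (∫ u in c..e, (if y ≤ u then A else B)) ≤ e - c := by
  constructor
  · apply intervalIntegral.integral_nonneg hce
    intro u _
    by_cases h : y ≤ u <;> simp [h, hA, hB]
  · calc (∫ u in c..e, (if y ≤ u then A else B)) ≤ ∫ _u in c..e, (1:ℝ) := by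
          apply intervalIntegral.integral_mono_on hce (step_intable y A B c e)
            intervalIntegrable_const
          intro u _
          by_cases h : y ≤ u <;> simp [h, hA1, hB1]
    _ = e - c := by simp



/-- The CRPS of the piecewise-constant approximation `L` of `F` on the uniform grid
`z_s = a + s·Δ`, `Δ = (b-a)/d`, differs from the discretized square-loss sum
`Δ · Σ_{s=1}^d (f_s - ω_y^s)²` (with `f_s = F z_s` and `ω_y^s = H(z_s - y)`)
by at most `2Δ`. -/
theorem crps_discretization (a b : ℝ) (hab : a < b)
    (F : ℝ → ℝ) (hF : DistFunc a b F) (d : ℕ) (hd : 1 ≤ d)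
    (L : ℝ → ℝ)
    (hL : ∀ s : ℕ, 1 ≤ s → s ≤ d →
      ∀ u ∈ Set.Ico (a + ((s : ℝ) - 1) * ((b - a) / d)) (a + (s : ℝ) * ((b - a) / d)),
        L u = F (a + (s : ℝ) * ((b - a) / d)))
    (hLb : L b = 1) :
    ∀ y ∈ Set.Icc a b,
      |CRPS a b L y - ((b - a) / d) * ∑ s ∈ Finset.Icc 1 d,
          (F (a + (s : ℝ) * ((b - a) / d)) -
            (if y ≤ a + (s : ℝ) * ((b - a) / d) then (1 : ℝ) else 0)) ^ 2| ≤
        2 * ((b - a) / d) := by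
  obtain ⟨hmono, hFa, hFb⟩ := hF
  intro y hy
  set Δ : ℝ := (b - a) / d with hΔdef
  have hdpos : (0:ℝ) < d := by exact_mod_cast Nat.lt_of_lt_of_le Nat.zero_lt_one hd
  have hΔpos : 0 < Δ := div_pos (sub_pos.mpr hab) hdpos
  set z : ℕ → ℝ := fun s => a + s * Δ with hzdef
  have hz0 : z 0 = a := by simp [hzdef]
  have hzd : z d = b := by
    simp only [hzdef, hΔdef]
    field_simp
    ring
  have hzmono : Monotone z := by
    intro s t hst
    simp only [hzdef]
    have : (s:ℝ) ≤ t := by exact_mod_cast hst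
    nlinarith
  have hzle : ∀ s, s ≤ d → z s ∈ Set.Icc a b := fun s hs =>
    ⟨by rw [← hz0]; exact hzmono (Nat.zero_le s), by rw [← hzd]; exact hzmono hs⟩
  have hzsucc : ∀ i : ℕ, z (i + 1) = z i + Δ := by
    intro i; simp only [hzdef]; push_cast; try ring
  have hf0 : ∀ s, s ≤ d → 0 ≤ F (z s) := by
    intro s hs
    rw [← hFa]
    exact hmono (Set.left_mem_Icc.mpr hab.le) (hzle s hs) (hzle s hs).1
  have hf1 : ∀ s, s ≤ d → F (z s) ≤ 1 := by
    intro s hs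
    rw [← hFb]
    exact hmono (hzle s hs) (Set.right_mem_Icc.mpr hab.le) (hzle s hs).2
  set G : ℝ → ℝ := fun u => (L u - if y ≤ u then (1:ℝ) else 0) ^ 2 with hGdef
  -- a.e. equality with the step function on each cell
  have hae : ∀ i : ℕ, i < d →
      ∀ᵐ u : ℝ, u ∈ Set.uIoc (z i) (z (i+1)) →
        G u = if y ≤ u then (F (z (i+1)) - 1)^2 else (F (z (i+1)))^2 := by
    intro i hi
    have hne : ∀ᵐ u : ℝ, u ≠ z (i+1) := by
      rw [MeasureTheory.ae_iff]
      simpa [not_not] using measure_singleton (μ := (volume : Measure ℝ)) (z (i+1))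
    filter_upwards [hne] with u hu hmem
    rw [Set.uIoc_of_le (hzmono (Nat.le_succ i))] at hmem
    have hLu : L u = F (z (i+1)) := by
      have h1 : (1:ℕ) ≤ i + 1 := Nat.le_add_left 1 i
      have h2 : i + 1 ≤ d := hi
      have := hL (i+1) h1 h2 u ?_
      · convert this using 2 <;> (simp only [hzdef]; push_cast; try ring)
      · constructor
        · show a + ((↑(i+1) : ℝ) - 1) * Δ ≤ u
          have : a + ((↑(i+1) : ℝ) - 1) * Δ = z i := by simp only [hzdef]; push_cast; try ring
          rw [this]; exact hmem.1.le
        · show u < a + (↑(i+1) : ℝ) * Δ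
          have : a + ((↑(i+1) : ℝ)) * Δ = z (i+1) := by simp only [hzdef]
          rw [this]; exact lt_of_le_of_ne hmem.2 hu
    simp only [hGdef, hLu]
    by_cases h : y ≤ u <;> simp [h]
  have hint : ∀ i : ℕ, i < d → IntervalIntegrable G volume (z i) (z (i+1)) := by
    intro i hi
    rw [intervalIntegrable_iff]
    have hstep := (intervalIntegrable_iff.mp
      (step_intable y ((F (z (i+1)) - 1)^2) ((F (z (i+1)))^2) (z i) (z (i+1))))
    apply hstep.congr
    have := (ae_restrict_iff' measurableSet_uIoc).mpr (hae i hi)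
    filter_upwards [this] with u hu
    exact (hu).symm
  have key : ∀ i : ℕ, i < d → (∫ u in z i..z (i+1), G u)
      = ∫ u in z i..z (i+1), (if y ≤ u then (F (z (i+1)) - 1)^2 else (F (z (i+1)))^2) :=
    fun i hi => intervalIntegral.integral_congr_ae (hae i hi)
  have hsum := intervalIntegral.sum_integral_adjacent_intervals
    (f := G) (μ := volume) (a := z) (n := d) (fun k hk => hint k hk)
  have hsplit : CRPS a b L y = ∑ i ∈ Finset.range d, ∫ u in z i..z (i+1), G u := by
    show (∫ u in a..b, (L u - if y ≤ u then (1:ℝ) else 0) ^ 2) = _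
    rw [← hz0, ← hzd, ← hsum]
  have hre : (∑ s ∈ Finset.Icc 1 d,
        (F (a + (s:ℝ) * Δ) - (if y ≤ a + (s:ℝ)*Δ then (1:ℝ) else 0))^2)
      = ∑ i ∈ Finset.range d, (F (z (i+1)) - (if y ≤ z (i+1) then (1:ℝ) else 0))^2 := by
    rw [← Finset.Ico_add_one_right_eq_Icc, Finset.sum_Ico_eq_sum_range]
    apply Finset.sum_congr (by norm_num)
    intro i _
    have : 1 + i = i + 1 := by omega
    rw [this]
  rw [hsplit, hre, Finset.mul_sum, ← Finset.sum_sub_distrib]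
  have hbound : ∀ i ∈ Finset.range d,
      |(∫ u in z i..z (i+1), G u)
          - Δ * (F (z (i+1)) - if y ≤ z (i+1) then (1:ℝ) else 0)^2|
        ≤ if z i < y ∧ y ≤ z (i+1) then Δ else 0 := by
    intro i hi
    rw [Finset.mem_range] at hi
    rw [key i hi]
    have hle : z i ≤ z (i+1) := hzmono (Nat.le_succ i)
    have hfi0 := hf0 (i+1) hi
    have hfi1 := hf1 (i+1) hi
    have hA0 : 0 ≤ (F (z (i+1)) - 1)^2 := sq_nonneg _
    have hA1 : (F (z (i+1)) - 1)^2 ≤ 1 := by nlinarith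
    have hB0 : 0 ≤ (F (z (i+1)))^2 := sq_nonneg _
    have hB1 : (F (z (i+1)))^2 ≤ 1 := by nlinarith
    have hzz : z (i+1) - z i = Δ := by rw [hzsucc]; ring
    by_cases hyc : y ≤ z i
    · have hyz : y ≤ z (i+1) := hyc.trans hle
      rw [step_int_left _ _ _ _ _ hyc hle, hzz, if_pos hyz,
        if_neg (by push_neg; intro h; exact absurd hyc (not_le.mpr h))]
      simp
    · push_neg at hyc
      by_cases hye : y ≤ z (i+1)
      · rw [if_pos (⟨hyc, hye⟩ : _ ∧ _), if_pos hye]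
        obtain ⟨hlo, hhi⟩ := step_int_bounds ((F (z (i+1)) - 1)^2) ((F (z (i+1)))^2)
          (z i) (z (i+1)) y hle hA0 hA1 hB0 hB1
        rw [hzz] at hhi
        have h2 : 0 ≤ Δ * (F (z (i+1)) - 1)^2 := by positivity
        have h3 : Δ * (F (z (i+1)) - 1)^2 ≤ Δ * 1 := by nlinarith
        rw [abs_le]
        constructor <;> linarith
      · push_neg at hye
        rw [step_int_right _ _ _ _ _ hye hle, hzz,
          if_neg (not_le.mpr hye),
          if_neg (fun h => absurd h.2 (not_le.mpr hye))]
        simp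
  classical
  calc |∑ i ∈ Finset.range d, ((∫ u in z i..z (i+1), G u)
          - Δ * (F (z (i+1)) - if y ≤ z (i+1) then (1:ℝ) else 0)^2)|
      ≤ ∑ i ∈ Finset.range d, |(∫ u in z i..z (i+1), G u)
          - Δ * (F (z (i+1)) - if y ≤ z (i+1) then (1:ℝ) else 0)^2| :=
        Finset.abs_sum_le_sum_abs _ _
    _ ≤ ∑ i ∈ Finset.range d, (if z i < y ∧ y ≤ z (i+1) then Δ else 0) :=
        Finset.sum_le_sum hbound
    _ ≤ Δ := by
        rw [← Finset.sum_filter, Finset.sum_const, nsmul_eq_mul]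
        have hcard : ((Finset.range d).filter (fun i => z i < y ∧ y ≤ z (i+1))).card ≤ 1 := by
          rw [Finset.card_le_one]
          intro i hi j hj
          simp only [Finset.mem_filter, Finset.mem_range] at hi hj
          by_contra hne
          rcases Nat.lt_or_ge i j with h | h
          · have := hzmono (Nat.succ_le_of_lt h)
            linarith [hi.2.2, hj.2.1]
          · have hji : j < i := lt_of_le_of_ne h (fun hh => hne hh.symm)
            have := hzmono (Nat.succ_le_of_lt hji)
            linarith [hj.2.2, hi.2.1]
        calc (((Finset.range d).filter (fun i => z i < y ∧ y ≤ z (i+1))).card : ℝ) * Δ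
            ≤ 1 * Δ := by
              apply mul_le_mul_of_nonneg_right _ hΔpos.le
              exact_mod_cast hcard
          _ = Δ := one_mul Δ
    _ ≤ 2 * Δ := by linarith
end

section
/- Let a < b and N ≥ 1, let q = (q_1, …, q_N) be a probability vector, and let F_1, …, F_N be distribution functions on [a,b]. Define F : [a,b] → ℝ by F(u) = 1/2 − (1/4) · ln( (Σ_{i=1}^N q_i · e^{−2 F_i(u)²}) / (Σ_{i=1}^N q_i · e^{−2 (1 − F_i(u))²}) ). Then F is itself a distribution function on [a,b]: F is nondecreasing, F(a) = 0, F(b) = 1, and 0 ≤ F(u) ≤ 1 for all u ∈ [a,b]. -/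
private lemma sum_exp_bounds {N : ℕ} (q : Fin N → ℝ) (hq0 : ∀ i, 0 ≤ q i)
    (hq1 : ∑ i, q i = 1) (y : Fin N → ℝ) (hy : ∀ i, y i ∈ Set.Icc (-2 : ℝ) 0) :
    Real.exp (-2) ≤ (∑ i, q i * Real.exp (y i)) ∧ (∑ i, q i * Real.exp (y i)) ≤ 1 := by
  constructor
  · calc Real.exp (-2) = ∑ i, q i * Real.exp (-2) := by
          rw [← Finset.sum_mul, hq1, one_mul]
    _ ≤ ∑ i, q i * Real.exp (y i) := by
          apply Finset.sum_le_sum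
          intro i _
          exact mul_le_mul_of_nonneg_left (Real.exp_le_exp.mpr (hy i).1) (hq0 i)
  · calc (∑ i, q i * Real.exp (y i)) ≤ ∑ i, q i * 1 := by
          apply Finset.sum_le_sum
          intro i _
          have : Real.exp (y i) ≤ 1 := Real.exp_le_one_iff.mpr (hy i).2
          exact mul_le_mul_of_nonneg_left this (hq0 i)
    _ = 1 := by rw [← Finset.sum_mul, hq1, one_mul]

private lemma sum_exp_mono {N : ℕ} (q : Fin N → ℝ) (hq0 : ∀ i, 0 ≤ q i)
    (y z : Fin N → ℝ) (h : ∀ i, y i ≤ z i) :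
    (∑ i, q i * Real.exp (y i)) ≤ ∑ i, q i * Real.exp (z i) := by
  apply Finset.sum_le_sum
  intro i _
  exact mul_le_mul_of_nonneg_left (Real.exp_le_exp.mpr (h i)) (hq0 i)

/-- The AA aggregation rule for CRPS maps distribution functions to a distribution
function: the aggregated forecast `F` is nondecreasing, `F a = 0`, `F b = 1`, and
takes values in `[0,1]`. -/
theorem aggregated_is_distribution (a b : ℝ) (hab : a < b) (N : ℕ) (hN : 1 ≤ N)
    (q : Fin N → ℝ) (hq0 : ∀ i, 0 ≤ q i) (hq1 : ∑ i, q i = 1)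
    (Fi : Fin N → ℝ → ℝ) (hFi : ∀ i, DistFunc a b (Fi i))
    (F : ℝ → ℝ)
    (hF : ∀ u ∈ Set.Icc a b, F u = 1 / 2 - (1 / 4) * Real.log
      ((∑ i, q i * Real.exp (-2 * (Fi i u) ^ 2)) /
        (∑ i, q i * Real.exp (-2 * (1 - Fi i u) ^ 2)))) :
    DistFunc a b F ∧ ∀ u ∈ Set.Icc a b, F u ∈ Set.Icc (0 : ℝ) 1 := by
  -- values of Fi are in [0,1]
  have hx : ∀ i, ∀ u ∈ Set.Icc a b, Fi i u ∈ Set.Icc (0 : ℝ) 1 := by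
    intro i u hu
    obtain ⟨hmono, ha, hb⟩ := hFi i
    constructor
    · have := hmono (Set.left_mem_Icc.mpr hab.le) hu hu.1
      linarith
    · have := hmono hu (Set.right_mem_Icc.mpr hab.le) hu.2
      linarith
  set A : ℝ → ℝ := fun u => ∑ i, q i * Real.exp (-2 * (Fi i u) ^ 2) with hA
  set B : ℝ → ℝ := fun u => ∑ i, q i * Real.exp (-2 * (1 - Fi i u) ^ 2) with hB
  have hyA : ∀ u ∈ Set.Icc a b, ∀ i, (-2 * (Fi i u) ^ 2) ∈ Set.Icc (-2 : ℝ) 0 := by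
    intro u hu i
    obtain ⟨h0, h1⟩ := hx i u hu
    have h2 : (Fi i u) ^ 2 ≤ 1 := by nlinarith
    constructor <;> nlinarith
  have hyB : ∀ u ∈ Set.Icc a b, ∀ i, (-2 * (1 - Fi i u) ^ 2) ∈ Set.Icc (-2 : ℝ) 0 := by
    intro u hu i
    obtain ⟨h0, h1⟩ := hx i u hu
    have h2 : (1 - Fi i u) ^ 2 ≤ 1 := by nlinarith
    constructor <;> nlinarith
  have hAbnd : ∀ u ∈ Set.Icc a b, Real.exp (-2) ≤ A u ∧ A u ≤ 1 := fun u hu =>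
    sum_exp_bounds q hq0 hq1 _ (hyA u hu)
  have hBbnd : ∀ u ∈ Set.Icc a b, Real.exp (-2) ≤ B u ∧ B u ≤ 1 := fun u hu =>
    sum_exp_bounds q hq0 hq1 _ (hyB u hu)
  have hApos : ∀ u ∈ Set.Icc a b, 0 < A u := fun u hu =>
    lt_of_lt_of_le (Real.exp_pos _) (hAbnd u hu).1
  have hBpos : ∀ u ∈ Set.Icc a b, 0 < B u := fun u hu =>
    lt_of_lt_of_le (Real.exp_pos _) (hBbnd u hu).1
  -- rewrite F using log of quotient
  have hF' : ∀ u ∈ Set.Icc a b,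
      F u = 1 / 2 - (1 / 4) * (Real.log (A u) - Real.log (B u)) := by
    intro u hu
    rw [hF u hu, Real.log_div (hApos u hu).ne' (hBpos u hu).ne']
  -- bounds on logs
  have hlogA : ∀ u ∈ Set.Icc a b, -2 ≤ Real.log (A u) ∧ Real.log (A u) ≤ 0 := by
    intro u hu
    constructor
    · have := Real.log_le_log (Real.exp_pos _) (hAbnd u hu).1
      rwa [Real.log_exp] at this
    · exact Real.log_nonpos (hApos u hu).le (hAbnd u hu).2
  have hlogB : ∀ u ∈ Set.Icc a b, -2 ≤ Real.log (B u) ∧ Real.log (B u) ≤ 0 := by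
    intro u hu
    constructor
    · have := Real.log_le_log (Real.exp_pos _) (hBbnd u hu).1
      rwa [Real.log_exp] at this
    · exact Real.log_nonpos (hBpos u hu).le (hBbnd u hu).2
  have hmem : ∀ u ∈ Set.Icc a b, F u ∈ Set.Icc (0 : ℝ) 1 := by
    intro u hu
    rw [hF' u hu]
    obtain ⟨hA1, hA2⟩ := hlogA u hu
    obtain ⟨hB1, hB2⟩ := hlogB u hu
    constructor <;> [skip; skip] <;> simp only [Set.mem_Icc] at * <;> nlinarith
  refine ⟨⟨?_, ?_, ?_⟩, hmem⟩
  · -- monotone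
    intro u hu v hv huv
    rw [hF' u hu, hF' v hv]
    have hxm : ∀ i, Fi i u ≤ Fi i v := fun i => (hFi i).1 hu hv huv
    have hAm : A v ≤ A u := by
      apply sum_exp_mono q hq0
      intro i
      have h0u := (hx i u hu).1
      have h := hxm i
      nlinarith
    have hBm : B u ≤ B v := by
      apply sum_exp_mono q hq0
      intro i
      have h1v := (hx i v hv).2
      have h := hxm i
      nlinarith
    have l1 : Real.log (A v) ≤ Real.log (A u) := Real.log_le_log (hApos v hv) hAm
    have l2 : Real.log (B u) ≤ Real.log (B v) := Real.log_le_log (hBpos u hu) hBm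
    nlinarith
  · -- F a = 0
    have ha : a ∈ Set.Icc a b := Set.left_mem_Icc.mpr hab.le
    have hFia : ∀ i, Fi i a = 0 := fun i => (hFi i).2.1
    have hAa : A a = 1 := by
      simp only [hA]
      have : ∀ i ∈ Finset.univ, q i * Real.exp (-2 * (Fi i a) ^ 2) = q i := by
        intro i _; rw [hFia i]; norm_num
      rw [Finset.sum_congr rfl this, hq1]
    have hBa : B a = Real.exp (-2) := by
      simp only [hB]
      have : ∀ i ∈ Finset.univ, q i * Real.exp (-2 * (1 - Fi i a) ^ 2)
          = q i * Real.exp (-2) := by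
        intro i _; rw [hFia i]; norm_num
      rw [Finset.sum_congr rfl this, ← Finset.sum_mul, hq1, one_mul]
    rw [hF' a ha, hAa, hBa, Real.log_one, Real.log_exp]
    ring
  · -- F b = 1
    have hb : b ∈ Set.Icc a b := Set.right_mem_Icc.mpr hab.le
    have hFib : ∀ i, Fi i b = 1 := fun i => (hFi i).2.2
    have hAb : A b = Real.exp (-2) := by
      simp only [hA]
      have : ∀ i ∈ Finset.univ, q i * Real.exp (-2 * (Fi i b) ^ 2)
          = q i * Real.exp (-2) := by
        intro i _; rw [hFib i]; norm_num
      rw [Finset.sum_congr rfl this, ← Finset.sum_mul, hq1, one_mul]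
    have hBb : B b = 1 := by
      simp only [hB]
      have : ∀ i ∈ Finset.univ, q i * Real.exp (-2 * (1 - Fi i b) ^ 2) = q i := by
        intro i _; rw [hFib i]; norm_num
      rw [Finset.sum_congr rfl this, hq1]
    rw [hF' b hb, hAb, hBb, Real.log_one, Real.log_exp]
    ring
end

section
/- Let η > 0, N ≥ 1, T ≥ 1, and let real numbers h_t and l_{i,t} (1 ≤ i ≤ N, 1 ≤ t ≤ T) be given. Define weights by w_{i,1} = 1/N and w_{i,t+1} = w_{i,t} · e^{−η l_{i,t}}, and normalized weights w*_{i,t} = w_{i,t} / Σ_{j=1}^N w_{j,t}. Assume that for each t one has exp(−η h_t) ≥ Σ_{i=1}^N w*_{i,t} · exp(−η l_{i,t}). Then for every i with 1 ≤ i ≤ N: Σ_{t=1}^T h_t ≤ Σ_{t=1}^T l_{i,t} + (ln N)/η. -/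
/-- Regret analysis of Vovk's Aggregating Algorithm: if the learner's loss `h t`
always satisfies the mixability inequality with the normalized exponential weights,
then the learner's cumulative loss exceeds each expert's by at most `(ln N)/η`. -/
theorem aa_regret_bound (η : ℝ) (hη : 0 < η) (N T : ℕ) (hN : 1 ≤ N) (hT : 1 ≤ T)
    (h : ℕ → ℝ) (l : Fin N → ℕ → ℝ) (w : Fin N → ℕ → ℝ)
    (hw1 : ∀ i, w i 1 = 1 / N)
    (hwrec : ∀ i, ∀ t, 1 ≤ t → w i (t + 1) = w i t * Real.exp (-η * l i t))
    (hmix : ∀ t, 1 ≤ t → t ≤ T →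
      Real.exp (-η * h t) ≥ ∑ i, (w i t / ∑ j, w j t) * Real.exp (-η * l i t)) :
    ∀ i, ∑ t ∈ Finset.Icc 1 T, h t ≤
      (∑ t ∈ Finset.Icc 1 T, l i t) + Real.log N / η := by
  intro i
  have hNpos : (0:ℝ) < N := by exact_mod_cast hN
  -- positivity of weights
  have hwpos : ∀ t, 1 ≤ t → ∀ j, 0 < w j t := by
    intro t ht
    induction t with
    | zero => omega
    | succ n ih =>
      intro j
      rcases Nat.eq_or_lt_of_le ht with h1 | h1
      · rw [← h1, hw1]; positivity
      · have hn : 1 ≤ n := by omega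
        rw [hwrec j n hn]
        exact mul_pos (ih hn j) (Real.exp_pos _)
  set W : ℕ → ℝ := fun t => ∑ j, w j t with hW
  have hWpos : ∀ t, 1 ≤ t → 0 < W t := by
    intro t ht
    exact Finset.sum_pos (fun j _ => hwpos t ht j)
      (Finset.univ_nonempty_iff.2 (Fin.pos_iff_nonempty.mp (by omega)))
  have hW1 : W 1 = 1 := by
    simp only [hW, hw1]
    rw [Finset.sum_const, Finset.card_univ, Fintype.card_fin, nsmul_eq_mul]
    field_simp
  -- key step: W (t+1) ≤ exp(-η h t) * W t
  have hstep : ∀ t, 1 ≤ t → t ≤ T → W (t + 1) ≤ Real.exp (-η * h t) * W t := by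
    intro t ht htT
    have hm := hmix t ht htT
    have hWt := hWpos t ht
    have : W (t + 1) = ∑ j, w j t * Real.exp (-η * l j t) := by
      simp only [hW]
      exact Finset.sum_congr rfl (fun j _ => hwrec j t ht)
    rw [this]
    have : ∑ j, w j t * Real.exp (-η * l j t)
        = (∑ j, (w j t / W t) * Real.exp (-η * l j t)) * W t := by
      rw [Finset.sum_mul]
      exact Finset.sum_congr rfl (fun j _ => by field_simp)
    rw [this]
    exact mul_le_mul_of_nonneg_right hm hWt.le
  -- telescoping: W (T+1) ≤ exp(-η Σ h)
  have htel : ∀ S, S ≤ T → W (S + 1) ≤ Real.exp (-η * ∑ t ∈ Finset.Icc 1 S, h t) := by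
    intro S
    induction S with
    | zero => intro _; simp [hW1]
    | succ n ih =>
      intro hle
      have hn : n ≤ T := by omega
      rw [Finset.sum_Icc_succ_top (by omega : 1 ≤ n + 1)]
      calc W (n + 1 + 1) ≤ Real.exp (-η * h (n + 1)) * W (n + 1) :=
            hstep (n + 1) (by omega) hle
        _ ≤ Real.exp (-η * h (n + 1)) * Real.exp (-η * ∑ t ∈ Finset.Icc 1 n, h t) :=
            mul_le_mul_of_nonneg_left (ih hn) (Real.exp_pos _).le
        _ = Real.exp (-η * ((∑ t ∈ Finset.Icc 1 n, h t) + h (n + 1))) := by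
            rw [← Real.exp_add]; ring_nf
  -- expert weight formula
  have hwform : ∀ S, w i (S + 1) = (1 / N) * Real.exp (-η * ∑ t ∈ Finset.Icc 1 S, l i t) := by
    intro S
    induction S with
    | zero => simp [hw1]
    | succ n ih =>
      rw [hwrec i (n + 1) (by omega), ih, Finset.sum_Icc_succ_top (by omega : 1 ≤ n + 1),
        mul_assoc, ← Real.exp_add]
      ring_nf
  -- combine
  have hmain : (1 / N) * Real.exp (-η * ∑ t ∈ Finset.Icc 1 T, l i t)
      ≤ Real.exp (-η * ∑ t ∈ Finset.Icc 1 T, h t) := by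
    calc (1 / N) * Real.exp (-η * ∑ t ∈ Finset.Icc 1 T, l i t) = w i (T + 1) :=
          (hwform T).symm
      _ ≤ W (T + 1) :=
          Finset.single_le_sum (fun j _ => (hwpos (T + 1) (by omega) j).le)
            (Finset.mem_univ i)
      _ ≤ _ := htel T le_rfl
  have hlog := Real.log_le_log (by positivity) hmain
  rw [Real.log_mul (by positivity) (Real.exp_ne_zero _), Real.log_exp, Real.log_exp,
    one_div, Real.log_inv] at hlog
  have h2 : (∑ t ∈ Finset.Icc 1 T, h t) - ∑ t ∈ Finset.Icc 1 T, l i t ≤ Real.log N / η := by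
    rw [le_div_iff₀ hη]
    nlinarith [hlog]
  linarith
end

section
/- Let η > 0, N ≥ 1, T ≥ 1. For 1 ≤ i ≤ N and 1 ≤ t ≤ T let l_{i,t} ∈ ℝ be expert losses, h_t ∈ ℝ learner losses, and p_{i,t} ∈ [0,1] confidence levels. Define weights by w_{i,1} = 1/N and w_{i,t+1} = w_{i,t} · exp(−η·(p_{i,t}·l_{i,t} + (1 − p_{i,t})·h_t)). Assume that for each t one has Σ_{j=1}^N p_{j,t} w_{j,t} > 0 and exp(−η h_t) ≥ Σ_{i=1}^N w*_{i,t} · exp(−η l_{i,t}), where w*_{i,t} = p_{i,t} w_{i,t} / Σ_{j=1}^N p_{j,t} w_{j,t}. Then for every i with 1 ≤ i ≤ N the cumulative discounted regret satisfies Σ_{t=1}^T p_{i,t}·(h_t − l_{i,t}) ≤ (ln N)/η. -/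
/-- Regret bound for the Aggregating Algorithm with confidence levels (Theorem 1):
the cumulative discounted regret `Σ_t p_{i,t}(h_t - l_{i,t})` against every expert `i`
is at most `(ln N)/η`. -/
theorem aa_confidence_regret_bound (η : ℝ) (hη : 0 < η) (N T : ℕ)
    (hN : 1 ≤ N) (hT : 1 ≤ T)
    (h : ℕ → ℝ) (l : Fin N → ℕ → ℝ) (p : Fin N → ℕ → ℝ)
    (hp : ∀ i t, p i t ∈ Set.Icc (0 : ℝ) 1)
    (w : Fin N → ℕ → ℝ)
    (hw1 : ∀ i, w i 1 = 1 / N)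
    (hwrec : ∀ i, ∀ t, 1 ≤ t →
      w i (t + 1) = w i t * Real.exp (-η * (p i t * l i t + (1 - p i t) * h t)))
    (hpos : ∀ t, 1 ≤ t → t ≤ T → 0 < ∑ j, p j t * w j t)
    (hmix : ∀ t, 1 ≤ t → t ≤ T →
      Real.exp (-η * h t) ≥
        ∑ i, (p i t * w i t / ∑ j, p j t * w j t) * Real.exp (-η * l i t)) :
    ∀ i, ∑ t ∈ Finset.Icc 1 T, p i t * (h t - l i t) ≤ Real.log N / η := by
  intro i
  have hNpos : (0:ℝ) < N := by exact_mod_cast Nat.lt_of_lt_of_le Nat.zero_lt_one hN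
  -- positivity of weights
  have hwpos : ∀ (j : Fin N) (t : ℕ), 1 ≤ t → 0 < w j t := by
    intro j t
    induction t with
    | zero => omega
    | succ s ih =>
      intro ht
      rcases Nat.lt_or_ge s 1 with h1 | h1
      · interval_cases s
        rw [hw1]; positivity
      · rw [hwrec j s h1]
        exact mul_pos (ih h1) (Real.exp_pos _)
  -- one-step bound on the total weight
  have hstep : ∀ t, 1 ≤ t → t ≤ T →
      (∑ j, w j (t+1)) ≤ (∑ j, w j t) * Real.exp (-η * h t) := by
    intro t ht1 htT
    have hS := hpos t ht1 htT
    -- mixability rearranged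
    have hmixmul : ∑ j, p j t * w j t * Real.exp (-η * l j t) ≤
        (∑ j, p j t * w j t) * Real.exp (-η * h t) := by
      have hm := hmix t ht1 htT
      rw [ge_iff_le] at hm
      have h2 : ∑ j, (p j t * w j t / ∑ k, p k t * w k t) * Real.exp (-η * l j t)
          = (∑ j, p j t * w j t * Real.exp (-η * l j t)) / (∑ k, p k t * w k t) := by
        rw [Finset.sum_div]
        exact Finset.sum_congr rfl fun j _ => by ring
      rw [h2, div_le_iff₀ hS] at hm
      linarith [hm]
    have hconv : ∀ j : Fin N,
        w j (t+1) ≤ p j t * w j t * Real.exp (-η * l j t)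
            + (1 - p j t) * w j t * Real.exp (-η * h t) := by
      intro j
      have hp0 := (hp j t).1
      have hp1 := (hp j t).2
      have hc := convexOn_exp.2 (Set.mem_univ (-η * l j t)) (Set.mem_univ (-η * h t))
        hp0 (show (0:ℝ) ≤ 1 - p j t by linarith) (by ring)
      have hc' : Real.exp (-η * (p j t * l j t + (1 - p j t) * h t)) ≤
          p j t * Real.exp (-η * l j t) + (1 - p j t) * Real.exp (-η * h t) := by
        have heq : p j t • (-η * l j t) + (1 - p j t) • (-η * h t)
            = -η * (p j t * l j t + (1 - p j t) * h t) := by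
          simp [smul_eq_mul]; ring
        rw [heq] at hc
        simpa [smul_eq_mul] using hc
      rw [hwrec j t ht1]
      have hwnn := (hwpos j t ht1).le
      calc w j t * Real.exp (-η * (p j t * l j t + (1 - p j t) * h t))
          ≤ w j t * (p j t * Real.exp (-η * l j t) + (1 - p j t) * Real.exp (-η * h t)) :=
            mul_le_mul_of_nonneg_left hc' hwnn
        _ = p j t * w j t * Real.exp (-η * l j t)
            + (1 - p j t) * w j t * Real.exp (-η * h t) := by ring
    calc (∑ j, w j (t+1))
        ≤ ∑ j, (p j t * w j t * Real.exp (-η * l j t)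
            + (1 - p j t) * w j t * Real.exp (-η * h t)) :=
          Finset.sum_le_sum fun j _ => hconv j
      _ = (∑ j, p j t * w j t * Real.exp (-η * l j t))
            + (∑ j, (1 - p j t) * w j t) * Real.exp (-η * h t) := by
          rw [Finset.sum_add_distrib, Finset.sum_mul]
      _ ≤ (∑ j, p j t * w j t) * Real.exp (-η * h t)
            + (∑ j, (1 - p j t) * w j t) * Real.exp (-η * h t) := by
          linarith [hmixmul]
      _ = (∑ j, w j t) * Real.exp (-η * h t) := by
          rw [← add_mul, ← Finset.sum_add_distrib]
          congr 1
          exact Finset.sum_congr rfl fun j _ => by ring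
  -- telescoping: total weight bound
  have hW : ∀ t, t ≤ T → (∑ j, w j (t+1)) ≤ Real.exp (-η * ∑ s ∈ Finset.Icc 1 t, h s) := by
    intro t
    induction t with
    | zero =>
      intro _
      simp only [Finset.Icc_eq_empty_of_lt Nat.one_pos, Finset.sum_empty, mul_zero,
        Real.exp_zero]
      have : (∑ j : Fin N, w j 1) = 1 := by
        simp only [hw1, Finset.sum_const, Finset.card_univ, Fintype.card_fin, nsmul_eq_mul]
        field_simp
      rw [this]
    | succ s ih =>
      intro hsT
      calc ∑ j, w j (s+1+1)
          ≤ (∑ j, w j (s+1)) * Real.exp (-η * h (s+1)) := hstep (s+1) (by omega) hsT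
        _ ≤ Real.exp (-η * ∑ s' ∈ Finset.Icc 1 s, h s') * Real.exp (-η * h (s+1)) :=
            mul_le_mul_of_nonneg_right (ih (by omega)) (Real.exp_pos _).le
        _ = Real.exp (-η * ∑ s' ∈ Finset.Icc 1 (s+1), h s') := by
            rw [← Real.exp_add, Finset.sum_Icc_succ_top (by omega : 1 ≤ s+1)]
            ring_nf
  -- closed form for expert i's weight
  have hwi : ∀ t, w i (t+1) = (1/N) *
      Real.exp (-η * ∑ s ∈ Finset.Icc 1 t, (p i s * l i s + (1 - p i s) * h s)) := by
    intro t
    induction t with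
    | zero =>
      simp [hw1, Finset.Icc_eq_empty_of_lt Nat.one_pos]
    | succ s ih =>
      rw [hwrec i (s+1) (by omega), ih, Finset.sum_Icc_succ_top (by omega : 1 ≤ s+1),
        mul_assoc, ← Real.exp_add]
      congr 2
      ring
  -- combine
  have hfin : w i (T+1) ≤ Real.exp (-η * ∑ s ∈ Finset.Icc 1 T, h s) :=
    le_trans (Finset.single_le_sum (fun j _ => (hwpos j (T+1) (by omega)).le)
      (Finset.mem_univ i)) (hW T le_rfl)
  rw [hwi T] at hfin
  set A := ∑ s ∈ Finset.Icc 1 T, (p i s * l i s + (1 - p i s) * h s) with hA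
  set B := ∑ s ∈ Finset.Icc 1 T, h s with hB
  have hlog : Real.log ((1/N) * Real.exp (-η * A)) ≤ Real.log (Real.exp (-η * B)) :=
    Real.log_le_log (by positivity) hfin
  rw [Real.log_mul (by positivity) (Real.exp_ne_zero _), Real.log_exp, Real.log_exp,
    one_div, Real.log_inv] at hlog
  have hBA : ∑ t ∈ Finset.Icc 1 T, p i t * (h t - l i t) = B - A := by
    rw [hA, hB, ← Finset.sum_sub_distrib]
    exact Finset.sum_congr rfl fun t _ => by ring
  rw [hBA, le_div_iff₀ hη]
  linarith
end

section
/- Let a < b, N ≥ 1, T ≥ 1. For each 1 ≤ t ≤ T let F_{1,t}, …, F_{N,t} be distribution functions on [a,b] (the experts' forecasts) and y_t ∈ [a,b] (the outcomes). Define weights by w_{i,1} = 1/N and w_{i,t+1} = w_{i,t} · exp(−(2/(b−a))·CRPS(F_{i,t}, y_t)), normalized weights w*_{i,t} = w_{i,t}/Σ_{j=1}^N w_{j,t}, and the learner's forecast F_t(u) = 1/2 − (1/4)·ln( (Σ_{i=1}^N w*_{i,t} e^{−2 F_{i,t}(u)²}) / (Σ_{i=1}^N w*_{i,t} e^{−2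 (1 − F_{i,t}(u))²}) ) for u ∈ [a,b]. Then for every i with 1 ≤ i ≤ N and every T: Σ_{t=1}^T CRPS(F_t, y_t) ≤ Σ_{t=1}^T CRPS(F_{i,t}, y_t) + ((b−a)/2)·ln N. -/
open Real Set

noncomputable def psi (t : ℝ) : ℝ := Real.exp ((Real.log t)^2 / 8)

lemma psi_d1 {t : ℝ} (ht : 0 < t) :
    HasDerivAt psi (psi t * (Real.log t / (4 * t))) t := by
  have h1 : HasDerivAt (fun t : ℝ => (Real.log t)^2 / 8) (Real.log t / (4 * t)) t := by
    have : HasDerivAt (fun t : ℝ => (Real.log t)^2 / 8) _ t := ((Real.hasDerivAt_log (ne_of_gt ht)).pow 2).div_const 8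
    convert this using 1
    field_simp
    ring
  exact h1.exp
lemma psi_d2 {t : ℝ} (ht : 0 < t) :
    HasDerivAt (fun t => psi t * (Real.log t / (4 * t)))
      (psi t * (Real.log t - 2)^2 / (16 * t^2)) t := by
  have h2 : HasDerivAt (fun t : ℝ => Real.log t / (4 * t)) ((1 - Real.log t) / (4 * t^2)) t := by
    have : HasDerivAt (fun t : ℝ => Real.log t / (4 * t)) _ t := (Real.hasDerivAt_log (ne_of_gt ht)).div ((hasDerivAt_id t).const_mul (4:ℝ))
      (by positivity)
    convert this using 1
    field_simp
  have : HasDerivAt (fun t => psi t * (Real.log t / (4 * t))) _ t := (psi_d1 ht).mul h2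
  convert this using 1
  have hlt : Real.log t / (4*t) * (Real.log t/(4*t)) = (Real.log t)^2/(16*t^2) := by
    field_simp; ring
  field_simp
  ring

lemma psi_convex : ConvexOn ℝ (Set.Ioi (0:ℝ)) psi := by
  have hint : interior (Set.Ioi (0:ℝ)) = Set.Ioi 0 := interior_Ioi
  apply convexOn_of_deriv2_nonneg (convex_Ioi 0)
  · exact fun x hx => ((psi_d1 hx).continuousAt).continuousWithinAt
  · rw [hint]; exact fun x hx => ((psi_d1 hx).differentiableAt).differentiableWithinAt
  · rw [hint]
    intro x hx
    have hev : deriv psi =ᶠ[nhds x] (fun t => psi t * (Real.log t / (4 * t))) :=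
      (isOpen_Ioi.eventually_mem hx).mono fun t ht => (psi_d1 ht).deriv
    exact ((psi_d2 hx).differentiableAt.congr_of_eventuallyEq hev).differentiableWithinAt
  · rw [hint]
    intro x hx
    have heq : deriv psi =ᶠ[nhds x] (fun t => psi t * (Real.log t / (4 * t))) :=
      (isOpen_Ioi.eventually_mem hx).mono fun t ht => (psi_d1 ht).deriv
    have : deriv (deriv psi) x = deriv (fun t => psi t * (Real.log t / (4 * t))) x :=
      heq.deriv_eq
    rw [Function.iterate_succ, Function.iterate_one, Function.comp_apply, this,
      (psi_d2 hx).deriv]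
    have : 0 < psi x := Real.exp_pos _
    positivity

lemma sum_exp_pos {N : ℕ} (v : Fin N → ℝ) (hv : ∀ i, 0 ≤ v i) (hv1 : ∑ i, v i = 1)
    (f : Fin N → ℝ) (hf : ∀ i, 0 < f i) : 0 < ∑ i, v i * f i := by
  have h1 : (∑ i, v i) ≠ 0 := by rw [hv1]; norm_num
  obtain ⟨j, -, hj⟩ := Finset.exists_ne_zero_of_sum_ne_zero h1
  refine Finset.sum_pos' (fun i _ => mul_nonneg (hv i) (hf i).le) ⟨j, Finset.mem_univ j, ?_⟩
  exact mul_pos ((hv j).lt_of_ne (Ne.symm hj)) (hf j)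

lemma mix_sq {N : ℕ} (v : Fin N → ℝ) (hv : ∀ i, 0 ≤ v i) (hv1 : ∑ i, v i = 1)
    (p : Fin N → ℝ) :
    ((1/4) * Real.log ((∑ i, v i * Real.exp (-2 * p i ^ 2 + 4 * p i)) /
      (∑ i, v i * Real.exp (-2 * p i ^ 2))))^2
      ≤ -(1/2) * Real.log (∑ i, v i * Real.exp (-2 * p i ^ 2)) := by
  set A := ∑ i, v i * Real.exp (-2 * p i ^ 2) with hA
  set C := ∑ i, v i * Real.exp (-2 * p i ^ 2 + 4 * p i) with hC
  have hA0 : 0 < A := sum_exp_pos v hv hv1 _ (fun i => Real.exp_pos _)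
  have hC0 : 0 < C := sum_exp_pos v hv hv1 _ (fun i => Real.exp_pos _)
  set pp : Fin N → ℝ := fun i => v i * Real.exp (-2 * p i ^ 2) / A with hπ
  have hπ0 : ∀ i, 0 ≤ pp i := fun i => div_nonneg (mul_nonneg (hv i) (Real.exp_pos _).le) hA0.le
  have hπ1 : ∑ i, pp i = 1 := by
    rw [hπ, ← Finset.sum_div, ← hA, div_self hA0.ne']
  have hjen := psi_convex.map_sum_le (t := Finset.univ) (p := fun i => Real.exp (4 * p i))
    (w := pp) (fun i _ => hπ0 i) hπ1 (fun i _ => Real.exp_pos _)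
  have hlhs : ∑ i, pp i • Real.exp (4 * p i) = C / A := by
    rw [hC, Finset.sum_div]
    refine Finset.sum_congr rfl fun i _ => ?_
    rw [smul_eq_mul, hπ]
    rw [div_mul_eq_mul_div, mul_assoc, ← Real.exp_add]
  have hrhs : ∑ i, pp i • psi (Real.exp (4 * p i)) = 1 / A := by
    have : ∀ i, pp i • psi (Real.exp (4 * p i)) = v i / A := by
      intro i
      rw [smul_eq_mul, hπ, psi, Real.log_exp]
      rw [div_mul_eq_mul_div, mul_assoc, ← Real.exp_add,
        show (-2 * p i ^ 2 + (4 * p i) ^ 2 / 8 : ℝ) = 0 by ring, Real.exp_zero, mul_one]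
    rw [Finset.sum_congr rfl (fun i _ => this i), ← Finset.sum_div, hv1]
  rw [hlhs, hrhs] at hjen
  have hCA : 0 < C / A := div_pos hC0 hA0
  have hlog : (Real.log (C/A))^2 / 8 ≤ Real.log (1/A) := by
    rw [psi, ← Real.le_log_iff_exp_le (one_div_pos.mpr hA0)] at hjen
    exact hjen
  rw [one_div, Real.log_inv] at hlog
  nlinarith [hlog]

lemma subst_pointwise {N : ℕ} (v : Fin N → ℝ) (hv : ∀ i, 0 ≤ v i) (hv1 : ∑ i, v i = 1)
    (p : Fin N → ℝ) (ω : ℝ) (hω : ω = 0 ∨ ω = 1) :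
    (1/2 - (1/4) * Real.log ((∑ i, v i * Real.exp (-2 * p i ^ 2)) /
        (∑ i, v i * Real.exp (-2 * (1 - p i) ^ 2))) - ω)^2
      ≤ -(1/2) * Real.log (∑ i, v i * Real.exp (-2 * (p i - ω)^2)) := by
  set Sa := ∑ i, v i * Real.exp (-2 * p i ^ 2) with hSa
  set Sb := ∑ i, v i * Real.exp (-2 * (1 - p i) ^ 2) with hSb
  have hSa0 : 0 < Sa := sum_exp_pos v hv hv1 _ (fun i => Real.exp_pos _)
  have hSb0 : 0 < Sb := sum_exp_pos v hv hv1 _ (fun i => Real.exp_pos _)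
  rcases hω with h | h <;> subst h
  · -- ω = 0
    have key := mix_sq v hv hv1 p
    have hC : (∑ i, v i * Real.exp (-2 * p i ^ 2 + 4 * p i)) = Real.exp 2 * Sb := by
      rw [hSb, Finset.mul_sum]
      refine Finset.sum_congr rfl fun i _ => ?_
      rw [← mul_assoc, mul_comm (Real.exp 2) (v i), mul_assoc, ← Real.exp_add]
      ring_nf
    rw [hC] at key
    have hid : (1/4 : ℝ) * Real.log (Real.exp 2 * Sb / Sa)
        = 1/2 - (1/4) * Real.log (Sa / Sb) - 0 := by
      rw [Real.log_div (by positivity) hSa0.ne', Real.log_mul (Real.exp_pos 2).ne' hSb0.ne',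
        Real.log_exp, Real.log_div hSa0.ne' hSb0.ne']
      ring
    rw [hid] at key
    convert key using 4 with i
    ring_nf
  · -- ω = 1
    have key := mix_sq v hv hv1 (fun i => 1 - p i)
    have hC : (∑ i, v i * Real.exp (-2 * (1 - p i) ^ 2 + 4 * (1 - p i))) = Real.exp 2 * Sa := by
      rw [hSa, Finset.mul_sum]
      refine Finset.sum_congr rfl fun i _ => ?_
      rw [← mul_assoc, mul_comm (Real.exp 2) (v i), mul_assoc, ← Real.exp_add]
      ring_nf
    rw [hC] at key
    have hid : (1/4 : ℝ) * Real.log (Real.exp 2 * Sa / Sb)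
        = -(1/2 - (1/4) * Real.log (Sa / Sb) - 1) := by
      rw [Real.log_div (by positivity) hSb0.ne', Real.log_mul (Real.exp_pos 2).ne' hSa0.ne',
        Real.log_exp, Real.log_div hSa0.ne' hSb0.ne']
      ring
    rw [hid, neg_sq] at key
    convert key using 4 with i
    ring_nf

open MeasureTheory in
lemma round_bound (a b : ℝ) (hab : a < b) {N : ℕ}
    (F : Fin N → ℝ → ℝ) (hF : ∀ i, DistFunc a b (F i)) (y : ℝ)
    (v : Fin N → ℝ) (hv : ∀ i, 0 ≤ v i) (hv1 : ∑ i, v i = 1)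
    (g : ℝ → ℝ)
    (hg : ∀ u ∈ Set.Icc a b, g u = 1 / 2 - (1 / 4) * Real.log
      ((∑ i, v i * Real.exp (-2 * (F i u) ^ 2)) /
        (∑ i, v i * Real.exp (-2 * (1 - F i u) ^ 2)))) :
    CRPS a b g y ≤ -((b - a) / 2) *
      Real.log (∑ i, v i * Real.exp (-(2 / (b - a)) * CRPS a b (F i) y)) := by
  have hba : 0 < b - a := sub_pos.mpr hab
  have hne : b - a ≠ 0 := hba.ne'
  have hab' : a ≤ b := hab.le
  set c : ℝ → ℝ := fun u => min (max u a) b with hc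
  have hc_mono : Monotone c := fun u₁ u₂ h => min_le_min (max_le_max h le_rfl) le_rfl
  have hc_mem : ∀ u, c u ∈ Set.Icc a b := fun u =>
    ⟨le_min (le_max_right u a) hab', min_le_right _ _⟩
  have hc_id : ∀ u ∈ Set.Icc a b, c u = u := fun u hu => by
    simp only [hc]; rw [max_eq_left hu.1, min_eq_left hu.2]
  have hFm : ∀ i, Monotone (fun u => F i (c u)) := fun i u₁ u₂ h =>
    (hF i).1 (hc_mem u₁) (hc_mem u₂) (hc_mono h)
  have hFmeas : ∀ i, Measurable (fun u => F i (c u)) := fun i => (hFm i).measurable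
  have hF0 : ∀ i u, 0 ≤ F i (c u) := fun i u => by
    have := (hF i).1 (Set.left_mem_Icc.mpr hab') (hc_mem u) (hc_mem u).1
    rwa [(hF i).2.1] at this
  have hF1 : ∀ i u, F i (c u) ≤ 1 := fun i u => by
    have := (hF i).1 (hc_mem u) (Set.right_mem_Icc.mpr hab') (hc_mem u).2
    rwa [(hF i).2.2] at this
  set H : ℝ → ℝ := fun u => if y ≤ u then 1 else 0 with hH
  have hHmeas : Measurable H := Measurable.ite measurableSet_Ici measurable_const measurable_const
  have hH01 : ∀ u, H u = 0 ∨ H u = 1 := fun u => by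
    simp only [hH]; split
    · exact Or.inr rfl
    · exact Or.inl rfl
  set l : Fin N → ℝ → ℝ := fun i u => (F i (c u) - H u)^2 with hl
  have hlmeas : ∀ i, Measurable (l i) := fun i => ((hFmeas i).sub hHmeas).pow_const 2
  have hl0 : ∀ i u, 0 ≤ l i u := fun i u => sq_nonneg _
  have hl1 : ∀ i u, l i u ≤ 1 := fun i u => by
    rcases hH01 u with h | h <;> simp only [hl] <;> rw [h] <;>
      nlinarith [hF0 i u, hF1 i u]
  set S : ℝ → ℝ := fun u => ∑ i, v i * Real.exp (-2 * l i u) with hS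
  have hSmeas : Measurable S := Finset.measurable_sum _ fun i _ =>
    measurable_const.mul (((hlmeas i).const_mul (-2)).exp)
  have hSpos : ∀ u, 0 < S u := fun u => sum_exp_pos v hv hv1 _ fun i => Real.exp_pos _
  have hSub : ∀ u, S u ≤ 1 := fun u => by
    calc S u ≤ ∑ i, v i * 1 := Finset.sum_le_sum fun i _ =>
          mul_le_mul_of_nonneg_left
            (by rw [← Real.exp_zero]; exact Real.exp_le_exp.mpr (by nlinarith [hl0 i u])) (hv i)
      _ = 1 := by simp [hv1]
  have hSlb : ∀ u, Real.exp (-2) ≤ S u := fun u => by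
    calc Real.exp (-2) = ∑ i, v i * Real.exp (-2) := by rw [← Finset.sum_mul, hv1, one_mul]
      _ ≤ S u := Finset.sum_le_sum fun i _ => mul_le_mul_of_nonneg_left
          (Real.exp_le_exp.mpr (by nlinarith [hl1 i u])) (hv i)
  have hlogub : ∀ u, Real.log (S u) ≤ 0 := fun u => Real.log_nonpos (hSpos u).le (hSub u)
  have hloglb : ∀ u, -2 ≤ Real.log (S u) := fun u => by
    have := Real.log_le_log (Real.exp_pos _) (hSlb u)
    rwa [Real.log_exp] at this
  set μ : Measure ℝ := volume.restrict (Set.Ioc a b) with hμ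
  have hμuniv : μ Set.univ = ENNReal.ofReal (b - a) := by
    rw [hμ, Measure.restrict_apply_univ, Real.volume_Ioc]
  haveI : IsFiniteMeasure μ := ⟨by rw [hμuniv]; exact ENNReal.ofReal_lt_top⟩
  haveI : NeZero μ := ⟨by
    intro h0
    rw [h0] at hμuniv
    simp only [Measure.coe_zero, Pi.zero_apply, eq_comm, ENNReal.ofReal_eq_zero] at hμuniv
    linarith⟩
  have hμtoReal : (μ Set.univ).toReal = b - a := by
    rw [hμuniv, ENNReal.toReal_ofReal hba.le]
  have hint : ∀ (f : ℝ → ℝ) (C : ℝ), Measurable f → (∀ u, |f u| ≤ C) → Integrable f μ :=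
    fun f C hm hb => ⟨hm.aestronglyMeasurable, HasFiniteIntegral.of_bounded (C := C)
      (Filter.Eventually.of_forall fun u => by rw [Real.norm_eq_abs]; exact hb u)⟩
  have hLi : ∀ i, ∫ u, l i u ∂μ = CRPS a b (F i) y := by
    intro i
    rw [CRPS, intervalIntegral.integral_of_le hab']
    exact setIntegral_congr_fun measurableSet_Ioc fun u hu => by
      simp only [hl, hH, hc_id u (Set.Ioc_subset_Icc_self hu)]
  set gg : ℝ → ℝ := fun u =>
    (1/2 - (1/4) * Real.log ((∑ i, v i * Real.exp (-2 * (F i (c u)) ^ 2)) /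
      (∑ i, v i * Real.exp (-2 * (1 - F i (c u)) ^ 2))) - H u)^2 with hgg
  have hCRPSg : CRPS a b g y = ∫ u, gg u ∂μ := by
    rw [CRPS, intervalIntegral.integral_of_le hab']
    exact setIntegral_congr_fun measurableSet_Ioc fun u hu => by
      have hu' := Set.Ioc_subset_Icc_self hu
      simp only [hgg, hH, hc_id u hu', hg u hu']
  have hggmeas : Measurable gg := by
    have hSa : Measurable (fun u => ∑ i, v i * Real.exp (-2 * (F i (c u))^2)) :=
      Finset.measurable_sum _ fun i _ =>
        measurable_const.mul ((((hFmeas i).pow_const 2).const_mul (-2)).exp)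
    have hSb : Measurable (fun u => ∑ i, v i * Real.exp (-2 * (1 - F i (c u))^2)) :=
      Finset.measurable_sum _ fun i _ =>
        measurable_const.mul ((((measurable_const.sub (hFmeas i)).pow_const 2).const_mul (-2)).exp)
    exact ((measurable_const.sub ((hSa.div hSb).log.const_mul (1/4))).sub hHmeas).pow_const 2
  have hpt : ∀ u, gg u ≤ -(1/2) * Real.log (S u) := fun u => by
    have := subst_pointwise v hv hv1 (fun i => F i (c u)) (H u) (hH01 u)
    simpa only [hgg, hS, hl] using this
  have hgg0 : ∀ u, 0 ≤ gg u := fun u => by simp only [hgg]; positivity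
  have hintgg : Integrable gg μ := hint gg 2 hggmeas fun u =>
    abs_le.mpr ⟨by linarith [hgg0 u], by linarith [hpt u, hloglb u]⟩
  have hintlogS : Integrable (fun u => Real.log (S u)) μ :=
    hint _ 2 hSmeas.log fun u => abs_le.mpr ⟨hloglb u, by linarith [hlogub u]⟩
  have hintl : ∀ i, Integrable (l i) μ := fun i =>
    hint _ 2 (hlmeas i) fun u => abs_le.mpr ⟨by linarith [hl0 i u], by linarith [hl1 i u]⟩
  set I := ∫ u, Real.log (S u) ∂μ with hI
  have stepA : CRPS a b g y ≤ -(1/2) * I := by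
    rw [hCRPSg, hI, ← integral_const_mul]
    exact integral_mono hintgg (hintlogS.const_mul _) hpt
  set h : Fin N → ℝ → ℝ := fun i u => -2 * l i u - Real.log (S u) with hh
  have hhmeas : ∀ i, Measurable (h i) := fun i => ((hlmeas i).const_mul (-2)).sub hSmeas.log
  have hhbd : ∀ i u, |h i u| ≤ 2 := fun i u => by
    simp only [hh]
    exact abs_le.mpr ⟨by nlinarith [hl1 i u, hlogub u], by nlinarith [hl0 i u, hloglb u]⟩
  have hinth : ∀ i, Integrable (h i) μ := fun i => hint _ 2 (hhmeas i) (hhbd i)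
  have hintexph : ∀ i, Integrable (fun u => Real.exp (h i u)) μ := fun i =>
    hint _ (Real.exp 2) (hhmeas i).exp fun u => by
      rw [abs_of_pos (Real.exp_pos _)]
      exact Real.exp_le_exp.mpr (abs_le.mp (hhbd i u)).2
  have hjen : ∀ i, Real.exp (⨍ u, h i u ∂μ) ≤ ⨍ u, Real.exp (h i u) ∂μ := fun i => by
    exact convexOn_exp.map_average_le Real.continuous_exp.continuousOn isClosed_univ
      (Filter.Eventually.of_forall fun u => Set.mem_univ _) (hinth i)
      (hintexph i)
  have hexph : ∀ i u, Real.exp (h i u) = Real.exp (-2 * l i u) / S u := fun i u => by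
    simp only [hh]
    rw [Real.exp_sub, Real.exp_log (hSpos u)]
  have hsum1 : ∀ u, ∑ i, v i * Real.exp (h i u) = 1 := fun u => by
    have e1 : ∑ i, v i * Real.exp (h i u) = (∑ i, v i * Real.exp (-2 * l i u)) / S u := by
      rw [Finset.sum_div]
      exact Finset.sum_congr rfl fun i _ => by rw [hexph i u, mul_div_assoc]
    have e2 : (∑ i, v i * Real.exp (-2 * l i u)) = S u := by simp only [hS]
    rw [e1, e2, div_self (hSpos u).ne']
  have hintsum : ∫ u, (∑ i, v i * Real.exp (h i u)) ∂μ = b - a := by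
    have e : (fun u => ∑ i, v i * Real.exp (h i u)) = fun _ => (1:ℝ) := funext hsum1
    rw [e, integral_const, measureReal_def, hμtoReal, smul_eq_mul, mul_one]
  have hswap : ∑ i, v i * ∫ u, Real.exp (h i u) ∂μ = b - a := by
    rw [← hintsum, integral_finset_sum _ (fun i _ => (hintexph i).const_mul (v i))]
    exact Finset.sum_congr rfl fun i _ => (integral_const_mul _ _).symm
  have havg : ∀ (f : ℝ → ℝ), ⨍ u, f u ∂μ = (b - a)⁻¹ * ∫ u, f u ∂μ := fun f => by
    rw [average_eq, measureReal_def, hμtoReal, smul_eq_mul]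
  have hinthi : ∀ i, ∫ u, h i u ∂μ = -2 * CRPS a b (F i) y - I := fun i => by
    simp only [hh]
    rw [integral_sub ((hintl i).const_mul (-2)) hintlogS, integral_const_mul, hLi i, hI]
  have hterm : ∀ i, v i * Real.exp (-(2/(b-a)) * CRPS a b (F i) y)
      = (v i * Real.exp (⨍ u, h i u ∂μ)) * Real.exp ((b-a)⁻¹ * I) := fun i => by
    rw [havg, hinthi i, mul_assoc, ← Real.exp_add]
    congr 2
    field_simp
    ring
  have hkey : ∑ i, v i * Real.exp (-(2/(b-a)) * CRPS a b (F i) y)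
      ≤ Real.exp ((b-a)⁻¹ * I) := by
    calc ∑ i, v i * Real.exp (-(2/(b-a)) * CRPS a b (F i) y)
        = (∑ i, v i * Real.exp (⨍ u, h i u ∂μ)) * Real.exp ((b-a)⁻¹ * I) := by
          rw [Finset.sum_mul]; exact Finset.sum_congr rfl fun i _ => hterm i
      _ ≤ (∑ i, v i * ⨍ u, Real.exp (h i u) ∂μ) * Real.exp ((b-a)⁻¹ * I) := by
          refine mul_le_mul_of_nonneg_right ?_ (Real.exp_pos _).le
          exact Finset.sum_le_sum fun i _ => mul_le_mul_of_nonneg_left (hjen i) (hv i)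
      _ = ((b-a)⁻¹ * ∑ i, v i * ∫ u, Real.exp (h i u) ∂μ) * Real.exp ((b-a)⁻¹ * I) := by
          congr 1
          rw [Finset.mul_sum]
          exact Finset.sum_congr rfl fun i _ => by rw [havg]; ring
      _ = Real.exp ((b-a)⁻¹ * I) := by rw [hswap, inv_mul_cancel₀ hne, one_mul]
  have hpossum : 0 < ∑ i, v i * Real.exp (-(2/(b-a)) * CRPS a b (F i) y) :=
    sum_exp_pos v hv hv1 _ fun i => Real.exp_pos _
  have hlogkey : Real.log (∑ i, v i * Real.exp (-(2/(b-a)) * CRPS a b (F i) y))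
      ≤ (b-a)⁻¹ * I := by
    have := Real.log_le_log hpossum hkey
    rwa [Real.log_exp] at this
  calc CRPS a b g y ≤ -(1/2) * I := stepA
    _ = -((b-a)/2) * ((b-a)⁻¹ * I) := by
        rw [← mul_assoc]
        congr 1
        field_simp
    _ ≤ -((b-a)/2) * Real.log (∑ i, v i * Real.exp (-(2/(b-a)) * CRPS a b (F i) y)) := by
        exact mul_le_mul_of_nonpos_left hlogkey (by linarith)

/-- Theorem 2: the Aggregating Algorithm (Protocol 3) for the CRPS loss has the
time-independent regret bound `((b-a)/2)·ln N` against every expert. -/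
theorem aa_crps_regret_bound (a b : ℝ) (hab : a < b) (N T : ℕ) (hN : 1 ≤ N) (hT : 1 ≤ T)
    (Fe : Fin N → ℕ → ℝ → ℝ) (hFe : ∀ i t, DistFunc a b (Fe i t))
    (y : ℕ → ℝ) (hy : ∀ t, y t ∈ Set.Icc a b)
    (w : Fin N → ℕ → ℝ)
    (hw1 : ∀ i, w i 1 = 1 / N)
    (hwrec : ∀ i, ∀ t, 1 ≤ t →
      w i (t + 1) = w i t * Real.exp (-(2 / (b - a)) * CRPS a b (Fe i t) (y t)))
    (G : ℕ → ℝ → ℝ)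
    (hG : ∀ t, ∀ u ∈ Set.Icc a b, G t u = 1 / 2 - (1 / 4) * Real.log
      ((∑ i, (w i t / ∑ j, w j t) * Real.exp (-2 * (Fe i t u) ^ 2)) /
        (∑ i, (w i t / ∑ j, w j t) * Real.exp (-2 * (1 - Fe i t u) ^ 2)))) :
    ∀ i, ∑ t ∈ Finset.Icc 1 T, CRPS a b (G t) (y t) ≤
      (∑ t ∈ Finset.Icc 1 T, CRPS a b (Fe i t) (y t)) + ((b - a) / 2) * Real.log N := by
  intro i
  have hba : 0 < b - a := sub_pos.mpr hab
  have hne : b - a ≠ 0 := hba.ne'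
  have hNpos : (0:ℝ) < N := by exact_mod_cast Nat.lt_of_lt_of_le Nat.zero_lt_one hN
  have hwpos : ∀ t, 1 ≤ t → ∀ j, 0 < w j t := by
    intro t
    induction t with
    | zero => omega
    | succ t ih =>
      intro _ j
      by_cases ht0 : t = 0
      · subst ht0
        rw [hw1 j]
        positivity
      · have ht1 : 1 ≤ t := Nat.one_le_iff_ne_zero.mpr ht0
        rw [hwrec j t ht1]
        exact mul_pos (ih ht1 j) (Real.exp_pos _)
  have hWpos : ∀ t, 1 ≤ t → 0 < ∑ j, w j t := fun t ht =>
    Finset.sum_pos (fun j _ => hwpos t ht j) ⟨⟨0, hN⟩, Finset.mem_univ _⟩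
  have hW1 : ∑ j, w j 1 = 1 := by
    rw [Finset.sum_congr rfl fun j _ => hw1 j, Finset.sum_const, Finset.card_univ,
      Fintype.card_fin, nsmul_eq_mul]
    field_simp
  have hstep : ∀ t, 1 ≤ t → CRPS a b (G t) (y t) ≤
      -((b-a)/2) * (Real.log (∑ j, w j (t+1)) - Real.log (∑ j, w j t)) := by
    intro t ht
    have hv : ∀ j, 0 ≤ w j t / ∑ j, w j t := fun j =>
      div_nonneg (hwpos t ht j).le (hWpos t ht).le
    have hv1 : ∑ j, w j t / ∑ j, w j t = 1 := by
      rw [← Finset.sum_div, div_self (hWpos t ht).ne']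
    have hrb := round_bound a b hab (fun j => Fe j t) (fun j => hFe j t) (y t)
      (fun j => w j t / ∑ j, w j t) hv hv1 (G t) (fun u hu => hG t u hu)
    refine hrb.trans (le_of_eq ?_)
    congr 1
    have hq : ∑ j, (w j t / ∑ j, w j t) * Real.exp (-(2/(b-a)) * CRPS a b (Fe j t) (y t))
        = (∑ j, w j (t+1)) / (∑ j, w j t) := by
      rw [Finset.sum_div]
      exact Finset.sum_congr rfl fun j _ => by
        rw [hwrec j t ht, div_mul_eq_mul_div]
    rw [hq, Real.log_div (hWpos (t+1) (by omega)).ne' (hWpos t ht).ne']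
  have htel : ∀ T', ∑ t ∈ Finset.Icc 1 T', CRPS a b (G t) (y t) ≤
      -((b-a)/2) * Real.log (∑ j, w j (T'+1)) := by
    intro T'
    induction T' with
    | zero =>
      rw [Finset.Icc_eq_empty (by omega), Finset.sum_empty, hW1, Real.log_one, mul_zero]
    | succ T' ih =>
      rw [Finset.sum_Icc_succ_top (by omega : 1 ≤ T'+1)]
      have h2 := hstep (T'+1) (by omega)
      calc (∑ t ∈ Finset.Icc 1 T', CRPS a b (G t) (y t)) + CRPS a b (G (T'+1)) (y (T'+1))
          ≤ -((b-a)/2) * Real.log (∑ j, w j (T'+1)) +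
            -((b-a)/2) * (Real.log (∑ j, w j (T'+1+1)) - Real.log (∑ j, w j (T'+1))) :=
            add_le_add ih h2
        _ = -((b-a)/2) * Real.log (∑ j, w j (T'+1+1)) := by ring
  have hunroll : ∀ T', w i (T'+1) = (1/N) *
      Real.exp (-(2/(b-a)) * ∑ t ∈ Finset.Icc 1 T', CRPS a b (Fe i t) (y t)) := by
    intro T'
    induction T' with
    | zero =>
      rw [Finset.Icc_eq_empty (by omega), Finset.sum_empty, mul_zero, Real.exp_zero, mul_one,
        hw1 i]
    | succ T' ih =>
      rw [hwrec i (T'+1) (by omega), ih, Finset.sum_Icc_succ_top (by omega : 1 ≤ T'+1),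
        mul_assoc, ← Real.exp_add]
      congr 2
      ring
  have hWT : Real.log (w i (T+1)) ≤ Real.log (∑ j, w j (T+1)) :=
    Real.log_le_log (hwpos (T+1) (by omega) i)
      (Finset.single_le_sum (fun j _ => (hwpos (T+1) (by omega) j).le) (Finset.mem_univ i))
  have hlogw : Real.log (w i (T+1)) =
      -Real.log N - (2/(b-a)) * ∑ t ∈ Finset.Icc 1 T, CRPS a b (Fe i t) (y t) := by
    rw [hunroll T, Real.log_mul (one_div_pos.mpr hNpos).ne' (Real.exp_pos _).ne',
      Real.log_exp, one_div, Real.log_inv]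
    ring
  calc ∑ t ∈ Finset.Icc 1 T, CRPS a b (G t) (y t)
      ≤ -((b-a)/2) * Real.log (∑ j, w j (T+1)) := htel T
    _ ≤ -((b-a)/2) * Real.log (w i (T+1)) :=
        mul_le_mul_of_nonpos_left hWT (by linarith)
    _ = (∑ t ∈ Finset.Icc 1 T, CRPS a b (Fe i t) (y t)) + ((b-a)/2) * Real.log N := by
        rw [hlogw]
        field_simp
        ring
end

section
/- Let a < b and N ≥ 1, let q = (q_1, …, q_N) be a probability vector, and let F_1, …, F_N be distribution functions on [a,b]. Define F(u) = Σ_{i=1}^N q_i · F_i(u) for u ∈ [a,b]. Then for every y ∈ [a,b] one has exp(−(1/(2(b−a))) · CRPS(F, y)) ≥ Σ_{i=1}^N q_i · exp(−(1/(2(b−a))) · CRPS(F_i, y)). -/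
open Set MeasureTheory

namespace CrpsAux

/-- Heaviside function at threshold `y`. -/
noncomputable def Heav (y : ℝ) : ℝ → ℝ := fun u => if y ≤ u then 1 else 0

lemma crps_eq (a b y : ℝ) (F : ℝ → ℝ) :
    CRPS a b F y = ∫ u in a..b, (F u - Heav y u) ^ 2 := rfl

lemma heav_mono (y : ℝ) : Monotone (Heav y) := by
  intro u v huv
  unfold Heav
  by_cases h : y ≤ u
  · simp [h, le_trans h huv]
  · by_cases h' : y ≤ v <;> simp [h, h']

lemma heav_mem (y u : ℝ) : Heav y u ∈ Icc (0:ℝ) 1 := by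
  unfold Heav
  by_cases h : y ≤ u <;> simp [h]

lemma hasDerivAt_expnegsq (x : ℝ) :
    HasDerivAt (fun x : ℝ => Real.exp (-(x^2))) (Real.exp (-(x^2)) * (-(2*x))) x := by
  have h : HasDerivAt (fun x : ℝ => -(x^2)) (-(2*x)) x := by
    simpa [Pi.neg_def] using (hasDerivAt_pow 2 x).neg
  exact h.exp

lemma deriv_expnegsq : deriv (fun x : ℝ => Real.exp (-(x^2))) =
    fun x => Real.exp (-(x^2)) * (-(2*x)) :=
  funext fun x => (hasDerivAt_expnegsq x).deriv

lemma hasDerivAt_expnegsq' (x : ℝ) :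
    HasDerivAt (fun x : ℝ => Real.exp (-(x^2)) * (-(2*x)))
      (Real.exp (-(x^2)) * (4*x^2 - 2)) x := by
  have h : HasDerivAt (fun x : ℝ => -(2*x)) (-2) x := by
    simpa [Pi.neg_def] using ((hasDerivAt_id x).const_mul (2:ℝ)).neg
  have : HasDerivAt (fun x : ℝ => Real.exp (-(x^2)) * (-(2*x))) _ x := (hasDerivAt_expnegsq x).mul h
  convert this using 1
  ring

lemma concave_expnegsq :
    ConcaveOn ℝ (Icc (-Real.sqrt (1/2)) (Real.sqrt (1/2))) (fun x : ℝ => Real.exp (-(x^2))) := by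
  apply concaveOn_of_deriv2_nonpos (convex_Icc _ _)
  · exact (Real.continuous_exp.comp (continuous_pow 2).neg).continuousOn
  · exact fun x _ => (hasDerivAt_expnegsq x).differentiableAt.differentiableWithinAt
  · rw [deriv_expnegsq]
    exact fun x _ => (hasDerivAt_expnegsq' x).differentiableAt.differentiableWithinAt
  · intro x hx
    rw [interior_Icc] at hx
    have h2 : deriv^[2] (fun x : ℝ => Real.exp (-(x^2))) x = Real.exp (-(x^2)) * (4*x^2 - 2) := by
      simp only [Function.iterate_succ, Function.iterate_zero, Function.comp, id_eq]
      rw [deriv_expnegsq]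
      exact (hasDerivAt_expnegsq' x).deriv
    rw [h2]
    have hr : Real.sqrt (1/2) ^ 2 = 1/2 := Real.sq_sqrt (by norm_num)
    have hx2 : x^2 < 1/2 := by
      have habs : |x| < Real.sqrt (1/2) := abs_lt.mpr ⟨hx.1, hx.2⟩
      nlinarith [abs_nonneg x, sq_abs x]
    have := Real.exp_pos (-(x^2))
    nlinarith

lemma mem_sq_le {x : ℝ} (h : x^2 ≤ 1/2) :
    x ∈ Icc (-Real.sqrt (1/2)) (Real.sqrt (1/2)) := by
  have : |x| ≤ Real.sqrt (1/2) := by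
    rw [← Real.sqrt_sq_eq_abs]
    exact Real.sqrt_le_sqrt h
  exact abs_le.mp this

lemma quad_ineq (d m k p q : ℝ) (hd : 0 ≤ d) (hp : 0 ≤ p) (hq : 0 ≤ q) (hpq : p + q = 1)
    (h1 : (d + m)^2 ≤ d/2) (h0 : m^2 ≤ d/2) :
    p * Real.exp (-(d + 2*m + k)) + q * Real.exp (-k) ≤ Real.exp (-(d*p^2 + 2*m*p + k)) := by
  rcases eq_or_lt_of_le hd with hd0 | hd0
  · have hm : m = 0 := by nlinarith
    subst hm
    rw [← hd0]
    have := Real.exp_pos (-k)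
    have h : -((0:ℝ) + 2*0 + k) = -k := by ring
    have h' : -((0:ℝ)*p^2 + 2*0*p + k) = -k := by ring
    rw [h, h']
    nlinarith
  · have hs2 : Real.sqrt d ^ 2 = d := Real.sq_sqrt hd
    set s : ℝ := Real.sqrt d with hs
    have hspos : 0 < s := Real.sqrt_pos.mpr hd0
    have hsne : s ≠ 0 := ne_of_gt hspos
    have hx1 : ((d+m)/s)^2 ≤ 1/2 := by
      rw [div_pow, hs2, div_le_iff₀ hd0]
      linarith
    have hx0 : (m/s)^2 ≤ 1/2 := by
      rw [div_pow, hs2, div_le_iff₀ hd0]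
      linarith
    have hc := concave_expnegsq.2 (mem_sq_le hx1) (mem_sq_le hx0) hp hq hpq
    simp only [smul_eq_mul] at hc
    have key : p * ((d+m)/s) + q * (m/s) = p*s + m/s := by
      have hq' : q = 1 - p := by linarith
      rw [hq']
      field_simp
      nlinarith [hs2]
    rw [key] at hc
    have C := Real.exp_pos (m^2/d - k)
    have e1 : -(d + 2*m + k) = (m^2/d - k) + (-(((d+m)/s)^2)) := by
      rw [div_pow, hs2]
      field_simp
      ring
    have e0 : -k = (m^2/d - k) + (-((m/s)^2)) := by
      rw [div_pow, hs2]
      field_simp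
      ring
    have e2 : -(d*p^2 + 2*m*p + k) = (m^2/d - k) + (-((p*s + m/s)^2)) := by
      have h3 : (p*s + m/s)^2 = d*p^2 + 2*m*p + m^2/d := by
        field_simp
        linear_combination (d*p^2*s^2 - m^2) * hs2
      rw [h3]
      field_simp
      ring
    rw [e1, e0, e2, Real.exp_add, Real.exp_add, Real.exp_add]
    calc p * (Real.exp (m^2/d - k) * Real.exp (-((d+m)/s)^2))
          + q * (Real.exp (m^2/d - k) * Real.exp (-(m/s)^2))
        = Real.exp (m^2/d - k) * (p * Real.exp (-((d+m)/s)^2) + q * Real.exp (-(m/s)^2)) := by ring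
      _ ≤ Real.exp (m^2/d - k) * Real.exp (-(p*s + m/s)^2) :=
          mul_le_mul_of_nonneg_left hc (le_of_lt C)

lemma ii_of_bdd {a b : ℝ} (hab : a ≤ b) {h : ℝ → ℝ}
    (hm : AEMeasurable h (volume.restrict (Ioc a b))) (C : ℝ)
    (hb : ∀ u ∈ Ioc a b, |h u| ≤ C) : IntervalIntegrable h volume a b := by
  rw [intervalIntegrable_iff_integrableOn_Ioc_of_le hab]
  refine Integrable.mono' (integrable_const C) hm.aestronglyMeasurable ?_
  rw [ae_restrict_iff' measurableSet_Ioc]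
  exact Filter.Eventually.of_forall (fun u hu => by simpa using hb u hu)

lemma cs_int {a b : ℝ} (hab : a ≤ b) {f g : ℝ → ℝ}
    (hf2 : IntervalIntegrable (fun u => f u ^ 2) volume a b)
    (hg2 : IntervalIntegrable (fun u => g u ^ 2) volume a b)
    (hfg : IntervalIntegrable (fun u => f u * g u) volume a b) :
    (∫ u in a..b, f u * g u) ^ 2 ≤
      (∫ u in a..b, f u ^ 2) * (∫ u in a..b, g u ^ 2) := by
  set A : ℝ := ∫ u in a..b, f u ^ 2 with hA
  set B : ℝ := ∫ u in a..b, g u ^ 2 with hB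
  set C : ℝ := ∫ u in a..b, f u * g u with hC
  have key : ∀ x : ℝ, 0 ≤ B * (x * x) + (2 * C) * x + A := by
    intro x
    have h2x : IntervalIntegrable (fun u => x^2 * g u ^ 2) volume a b := hg2.const_mul _
    have h2y : IntervalIntegrable (fun u => 2*x*(f u * g u)) volume a b := hfg.const_mul _
    have step : (0:ℝ) ≤ x^2 * B + (2*x*C + A) := by
      calc (0:ℝ) ≤ ∫ u in a..b, (x * g u + f u)^2 :=
            intervalIntegral.integral_nonneg hab (fun u _ => sq_nonneg _)
        _ = ∫ u in a..b, (x^2 * g u ^ 2 + (2*x*(f u * g u) + f u ^ 2)) :=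
            intervalIntegral.integral_congr (fun u _ => by ring)
        _ = x^2 * B + (2*x*C + A) := by
            rw [intervalIntegral.integral_add h2x (h2y.add hf2),
              intervalIntegral.integral_add h2y hf2,
              intervalIntegral.integral_const_mul, intervalIntegral.integral_const_mul]
    nlinarith [step]
  have hd := discrim_le_zero key
  rw [discrim] at hd
  nlinarith [hd]

lemma abs_sub_le_one {x z : ℝ} (hx : x ∈ Icc (0:ℝ) 1) (hz : z ∈ Icc (0:ℝ) 1) :
    |x - z| ≤ 1 :=
  abs_le.mpr ⟨by linarith [hx.1, hx.2, hz.1, hz.2], by linarith [hx.1, hx.2, hz.1, hz.2]⟩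

lemma prod_ii {a b : ℝ} (hab : a ≤ b) {h₁ h₂ : ℝ → ℝ}
    (m₁ : AEMeasurable h₁ (volume.restrict (Ioc a b)))
    (m₂ : AEMeasurable h₂ (volume.restrict (Ioc a b)))
    (b₁ : ∀ u ∈ Ioc a b, |h₁ u| ≤ 1) (b₂ : ∀ u ∈ Ioc a b, |h₂ u| ≤ 1) :
    IntervalIntegrable (fun u => h₁ u * h₂ u) volume a b :=
  ii_of_bdd hab (m₁.mul m₂) 1 (fun u hu => by
    rw [abs_mul]
    exact mul_le_one₀ (b₁ u hu) (abs_nonneg _) (b₂ u hu))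

lemma sq_ii {a b : ℝ} (hab : a ≤ b) {h : ℝ → ℝ}
    (m : AEMeasurable h (volume.restrict (Ioc a b)))
    (hb : ∀ u ∈ Ioc a b, |h u| ≤ 1) :
    IntervalIntegrable (fun u => h u ^ 2) volume a b := by
  have := prod_ii hab m m hb hb
  simpa only [← pow_two] using this

lemma mono_aemeas {a b : ℝ} {G : ℝ → ℝ} (hG : MonotoneOn G (Icc a b)) :
    AEMeasurable G (volume.restrict (Ioc a b)) :=
  (aemeasurable_restrict_of_monotoneOn measurableSet_Icc hG).mono_measure
    (Measure.restrict_mono Ioc_subset_Icc_self le_rfl)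

lemma two_point (a b : ℝ) (hab : a < b) (y : ℝ) (G₁ G₂ : ℝ → ℝ)
    (hm1 : MonotoneOn G₁ (Icc a b)) (hr1 : ∀ u ∈ Icc a b, G₁ u ∈ Icc (0:ℝ) 1)
    (hm2 : MonotoneOn G₂ (Icc a b)) (hr2 : ∀ u ∈ Icc a b, G₂ u ∈ Icc (0:ℝ) 1)
    (p q : ℝ) (hp : 0 ≤ p) (hq : 0 ≤ q) (hpq : p + q = 1) :
    p * Real.exp (-(1/(2*(b-a))) * CRPS a b G₁ y) +
      q * Real.exp (-(1/(2*(b-a))) * CRPS a b G₂ y) ≤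
    Real.exp (-(1/(2*(b-a))) * CRPS a b (fun u => p * G₁ u + q * G₂ u) y) := by
  have hba : (0:ℝ) < b - a := sub_pos.mpr hab
  -- measurability
  have mc : AEMeasurable (Heav y) (volume.restrict (Ioc a b)) :=
    ((heav_mono y).measurable).aemeasurable
  have m1 : AEMeasurable G₁ (volume.restrict (Ioc a b)) := mono_aemeas hm1
  have m2 : AEMeasurable G₂ (volume.restrict (Ioc a b)) := mono_aemeas hm2
  -- bounds on Ioc
  have b1c : ∀ u ∈ Ioc a b, |G₁ u - Heav y u| ≤ 1 := fun u hu =>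
    abs_sub_le_one (hr1 u (Ioc_subset_Icc_self hu)) (heav_mem y u)
  have b2c : ∀ u ∈ Ioc a b, |G₂ u - Heav y u| ≤ 1 := fun u hu =>
    abs_sub_le_one (hr2 u (Ioc_subset_Icc_self hu)) (heav_mem y u)
  have b12 : ∀ u ∈ Ioc a b, |G₁ u - G₂ u| ≤ 1 := fun u hu =>
    abs_sub_le_one (hr1 u (Ioc_subset_Icc_self hu)) (hr2 u (Ioc_subset_Icc_self hu))
  -- integrability
  have if2 : IntervalIntegrable (fun u => (G₁ u - G₂ u) ^ 2) volume a b :=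
    sq_ii hab.le (m1.sub m2) b12
  have if0 : IntervalIntegrable (fun u => (G₂ u - Heav y u) ^ 2) volume a b :=
    sq_ii hab.le (m2.sub mc) b2c
  have ifA : IntervalIntegrable (fun u => (G₁ u - Heav y u) ^ 2) volume a b :=
    sq_ii hab.le (m1.sub mc) b1c
  have if1 : IntervalIntegrable (fun u => (G₂ u - Heav y u) * (G₁ u - G₂ u)) volume a b :=
    prod_ii hab.le (m2.sub mc) (m1.sub m2) b2c b12
  have ifX : IntervalIntegrable (fun u => (G₁ u - Heav y u) * (G₁ u - G₂ u)) volume a b :=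
    prod_ii hab.le (m1.sub mc) (m1.sub m2) b1c b12
  -- the key quantities
  set D : ℝ := ∫ u in a..b, (G₁ u - G₂ u) ^ 2 with hD
  set M : ℝ := ∫ u in a..b, (G₂ u - Heav y u) * (G₁ u - G₂ u) with hM
  set Bq : ℝ := ∫ u in a..b, (G₂ u - Heav y u) ^ 2 with hBq
  set A1 : ℝ := ∫ u in a..b, (G₁ u - Heav y u) ^ 2 with hA1
  -- CRPS values
  have hG2v : CRPS a b G₂ y = Bq := rfl
  have hG1v : CRPS a b G₁ y = Bq + (2 * M + D) := by
    rw [crps_eq]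
    calc (∫ u in a..b, (G₁ u - Heav y u) ^ 2)
        = ∫ u in a..b, ((G₂ u - Heav y u) ^ 2 +
            (2 * ((G₂ u - Heav y u) * (G₁ u - G₂ u)) + (G₁ u - G₂ u) ^ 2)) :=
          intervalIntegral.integral_congr (fun u _ => by ring)
      _ = Bq + (2 * M + D) := by
          rw [intervalIntegral.integral_add if0 ((if1.const_mul 2).add if2),
            intervalIntegral.integral_add (if1.const_mul 2) if2,
            intervalIntegral.integral_const_mul]
  have hGpv : CRPS a b (fun u => p * G₁ u + q * G₂ u) y = Bq + (2 * M * p + D * p ^ 2) := by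
    rw [crps_eq]
    have hq' : q = 1 - p := by linarith
    calc (∫ u in a..b, ((p * G₁ u + q * G₂ u) - Heav y u) ^ 2)
        = ∫ u in a..b, ((G₂ u - Heav y u) ^ 2 +
            ((2 * p) * ((G₂ u - Heav y u) * (G₁ u - G₂ u)) + p ^ 2 * (G₁ u - G₂ u) ^ 2)) :=
          intervalIntegral.integral_congr (fun u _ => by rw [hq']; ring)
      _ = Bq + (2 * M * p + D * p ^ 2) := by
          rw [intervalIntegral.integral_add if0 ((if1.const_mul (2*p)).add (if2.const_mul (p^2))),
            intervalIntegral.integral_add (if1.const_mul (2*p)) (if2.const_mul (p^2)),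
            intervalIntegral.integral_const_mul, intervalIntegral.integral_const_mul]
          ring
  -- nonnegativity and upper bounds
  have hD0 : 0 ≤ D := intervalIntegral.integral_nonneg hab.le (fun u _ => sq_nonneg _)
  have hBle : Bq ≤ b - a := by
    have h1 : (∫ u in a..b, (G₂ u - Heav y u) ^ 2) ≤ ∫ _u in a..b, (1:ℝ) := by
      apply intervalIntegral.integral_mono_on hab.le if0 intervalIntegrable_const
      intro u hu
      have := abs_sub_le_one (hr2 u hu) (heav_mem y u)
      nlinarith [sq_abs (G₂ u - Heav y u), abs_nonneg (G₂ u - Heav y u)]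
    simpa using h1
  have hAle : A1 ≤ b - a := by
    have h1 : (∫ u in a..b, (G₁ u - Heav y u) ^ 2) ≤ ∫ _u in a..b, (1:ℝ) := by
      apply intervalIntegral.integral_mono_on hab.le ifA intervalIntegrable_const
      intro u hu
      have := abs_sub_le_one (hr1 u hu) (heav_mem y u)
      nlinarith [sq_abs (G₁ u - Heav y u), abs_nonneg (G₁ u - Heav y u)]
    simpa using h1
  -- Cauchy–Schwarz bounds
  have cs1 : M ^ 2 ≤ Bq * D := cs_int hab.le if0 if2 if1
  have hMD : (∫ u in a..b, (G₁ u - Heav y u) * (G₁ u - G₂ u)) = M + D := by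
    calc (∫ u in a..b, (G₁ u - Heav y u) * (G₁ u - G₂ u))
        = ∫ u in a..b, ((G₂ u - Heav y u) * (G₁ u - G₂ u) + (G₁ u - G₂ u) ^ 2) :=
          intervalIntegral.integral_congr (fun u _ => by ring)
      _ = M + D := intervalIntegral.integral_add if1 if2
  have cs2 : (M + D) ^ 2 ≤ A1 * D := by
    have := cs_int hab.le ifA if2 ifX
    rwa [hMD] at this
  -- translate to normalized quantities
  have key1 : (M + D) ^ 2 ≤ (b - a) * D :=
    le_trans cs2 (mul_le_mul_of_nonneg_right hAle hD0)
  have key0 : M ^ 2 ≤ (b - a) * D := by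
    have hB0 : 0 ≤ Bq := intervalIntegral.integral_nonneg hab.le (fun u _ => sq_nonneg _)
    calc M ^ 2 ≤ Bq * D := cs1
      _ ≤ (b - a) * D := mul_le_mul_of_nonneg_right hBle hD0
  set η : ℝ := 1 / (2 * (b - a)) with hη
  have hηpos : 0 < η := by positivity
  have hhalf : (b - a) * η = 1 / 2 := by rw [hη]; field_simp
  have h1' : (η * D + η * M) ^ 2 ≤ (η * D) / 2 := by
    calc (η * D + η * M) ^ 2 = (M + D) ^ 2 * η ^ 2 := by ring
      _ ≤ ((b - a) * D) * η ^ 2 := mul_le_mul_of_nonneg_right key1 (sq_nonneg η)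
      _ = (η * D) * ((b - a) * η) := by ring
      _ = (η * D) / 2 := by rw [hhalf]; ring
  have h0' : (η * M) ^ 2 ≤ (η * D) / 2 := by
    calc (η * M) ^ 2 = M ^ 2 * η ^ 2 := by ring
      _ ≤ ((b - a) * D) * η ^ 2 := mul_le_mul_of_nonneg_right key0 (sq_nonneg η)
      _ = (η * D) * ((b - a) * η) := by ring
      _ = (η * D) / 2 := by rw [hhalf]; ring
  have hd0 : 0 ≤ η * D := mul_nonneg hηpos.le hD0
  have main := quad_ineq (η * D) (η * M) (η * Bq) p q hd0 hp hq hpq h1' h0'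
  have e1 : -η * CRPS a b G₁ y = -(η * D + 2 * (η * M) + η * Bq) := by rw [hG1v]; ring
  have e2 : -η * CRPS a b G₂ y = -(η * Bq) := by rw [hG2v]; ring
  have e3 : -η * CRPS a b (fun u => p * G₁ u + q * G₂ u) y =
      -((η * D) * p ^ 2 + 2 * (η * M) * p + η * Bq) := by rw [hGpv]; ring
  rw [show -(1/(2*(b-a))) = -η from by rw [hη], e1, e2, e3]
  exact main

end CrpsAux

open CrpsAux

/-- The `1/(2(b-a))`-exponential concavity of CRPS: the weighted average of the
experts' distribution functions dominates the `q`-mixture of exponentiated losses. -/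
theorem crps_exp_concave (a b : ℝ) (hab : a < b) (N : ℕ) (hN : 1 ≤ N)
    (q : Fin N → ℝ) (hq0 : ∀ i, 0 ≤ q i) (hq1 : ∑ i, q i = 1)
    (Fi : Fin N → ℝ → ℝ) (hFi : ∀ i, DistFunc a b (Fi i)) :
    ∀ y ∈ Set.Icc a b,
      Real.exp (-(1 / (2 * (b - a))) * CRPS a b (fun u => ∑ i, q i * Fi i u) y) ≥
        ∑ i, q i * Real.exp (-(1 / (2 * (b - a))) * CRPS a b (Fi i) y) := by
  intro y _hy
  set S : Set (ℝ → ℝ) :=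
    {G : ℝ → ℝ | MonotoneOn G (Icc a b) ∧ ∀ u ∈ Icc a b, G u ∈ Icc (0:ℝ) 1} with hS
  have hconc : ConcaveOn ℝ S (fun G => Real.exp (-(1 / (2 * (b - a))) * CRPS a b G y)) := by
    constructor
    · intro G₁ h1 G₂ h2 p' q' hp hq hpq
      constructor
      · intro u hu v hv huv
        simp only [Pi.add_apply, Pi.smul_apply, smul_eq_mul]
        exact add_le_add (mul_le_mul_of_nonneg_left (h1.1 hu hv huv) hp)
          (mul_le_mul_of_nonneg_left (h2.1 hu hv huv) hq)
      · intro u hu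
        simp only [Pi.add_apply, Pi.smul_apply, smul_eq_mul]
        have r1 := h1.2 u hu
        have r2 := h2.2 u hu
        constructor
        · exact add_nonneg (mul_nonneg hp r1.1) (mul_nonneg hq r2.1)
        · calc p' * G₁ u + q' * G₂ u ≤ p' * 1 + q' * 1 :=
                add_le_add (mul_le_mul_of_nonneg_left r1.2 hp)
                  (mul_le_mul_of_nonneg_left r2.2 hq)
            _ = 1 := by linarith
    · intro G₁ h1 G₂ h2 p' q' hp hq hpq
      simp only [smul_eq_mul]
      have := two_point a b hab y G₁ G₂ h1.1 h1.2 h2.1 h2.2 p' q' hp hq hpq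
      have heq : (p' • G₁ + q' • G₂) = fun u => p' * G₁ u + q' * G₂ u := rfl
      rw [heq]
      exact this
  have hmem : ∀ i, Fi i ∈ S := by
    intro i
    obtain ⟨hmono, ha0, hb1⟩ := hFi i
    refine ⟨hmono, fun u hu => ⟨?_, ?_⟩⟩
    · rw [← ha0]; exact hmono (left_mem_Icc.mpr hab.le) hu hu.1
    · rw [← hb1]; exact hmono hu (right_mem_Icc.mpr hab.le) hu.2
  have jensen := hconc.le_map_sum (t := Finset.univ) (w := q) (p := Fi)
    (fun i _ => hq0 i) (by simpa using hq1) (fun i _ => hmem i)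
  simp only [smul_eq_mul] at jensen
  have hsum : (∑ i, q i • Fi i) = fun u => ∑ i, q i * Fi i u := by
    funext u
    simp [Finset.sum_apply]
  rw [hsum] at jensen
  exact jensen
end

section
/- Let a < b, N ≥ 1, T ≥ 1. For each 1 ≤ t ≤ T let F_{1,t}, …, F_{N,t} be distribution functions on [a,b] and y_t ∈ [a,b]. Define weights by w_{i,1} = 1/N and w_{i,t+1} = w_{i,t} · exp(−(1/(2(b−a)))·CRPS(F_{i,t}, y_t)), normalized weights w*_{i,t} = w_{i,t}/Σ_{j=1}^N w_{j,t}, and the learner's forecast F_t(u) = Σ_{i=1}^N w*_{i,t} · F_{i,t}(u) for u ∈ [a,b]. Then for every i with 1 ≤ i ≤ N and every T: Σ_{t=1}^T CRPS(F_t, y_t) ≤ Σ_{t=1}^T CRPS(F_{i,t}, y_t) + 2(b−a)·ln N. -/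
open Real Set MeasureTheory


lemma concave_exp_sq {h : ℝ} (hh : h ∈ Set.Icc (0:ℝ) 1) :
    ConcaveOn ℝ (Set.Icc (0:ℝ) 1) (fun z => Real.exp (-(z - h)^2 / 2)) := by
  have hD : Convex ℝ (Set.Icc (0:ℝ) 1) := convex_Icc 0 1
  refine concaveOn_of_hasDerivWithinAt2_nonpos (f' := fun z => Real.exp (-(z - h)^2 / 2) * (-(z - h)))
    (f'' := fun z => Real.exp (-(z - h)^2 / 2) * ((z - h)^2 - 1)) hD ?_ ?_ ?_ ?_
  · exact (Real.continuous_exp.comp (by continuity)).continuousOn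
  · intro x hx
    have h1 : HasDerivAt (fun z : ℝ => -(z - h)^2 / 2) (-(x - h)) x := by
      have : HasDerivAt (fun z : ℝ => z - h) 1 x := (hasDerivAt_id x).sub_const h
      have h2 := ((this.pow 2).neg).div_const 2
      refine h2.congr_deriv ?_
      norm_num
      ring
    exact h1.exp.hasDerivWithinAt
  · intro x hx
    have h1 : HasDerivAt (fun z : ℝ => -(z - h)^2 / 2) (-(x - h)) x := by
      have : HasDerivAt (fun z : ℝ => z - h) 1 x := (hasDerivAt_id x).sub_const h
      have h2 := ((this.pow 2).neg).div_const 2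
      refine h2.congr_deriv ?_
      norm_num
      ring
    have h2 : HasDerivAt (fun z : ℝ => -(z - h)) (-1 : ℝ) x :=
      (((hasDerivAt_id x).sub_const h)).neg
    have := (h1.exp.mul h2)
    exact (this.congr_deriv (by ring)).hasDerivWithinAt
  · intro x hx
    rw [interior_Icc] at hx
    have hx0 : (x - h)^2 ≤ 1 := by
      have : |x - h| ≤ 1 := by
        rw [abs_le]; constructor <;> [nlinarith [hx.1, hx.2, hh.1, hh.2]; nlinarith [hx.1, hx.2, hh.1, hh.2]]
      nlinarith [abs_nonneg (x - h), sq_abs (x - h)]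
    have := Real.exp_pos (-(x - h)^2 / 2)
    nlinarith

lemma mix_lemma (a b : ℝ) (hab : a < b) {N : ℕ} (hN : 0 < N)
    (p : Fin N → ℝ) (hp : ∀ i, 0 ≤ p i) (hp1 : ∑ i, p i = 1)
    (F : Fin N → ℝ → ℝ) (hmono : ∀ i, Monotone (F i))
    (hrange : ∀ i u, F i u ∈ Set.Icc (0:ℝ) 1)
    (y : ℝ) :
    ∑ i, p i * Real.exp (-(1 / (2 * (b - a))) * CRPS a b (F i) y) ≤
      Real.exp (-(1 / (2 * (b - a))) * CRPS a b (fun u => ∑ i, p i * F i u) y) := by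
  set r : ℝ := b - a with hr
  have hr0 : 0 < r := by simp [hr]; linarith
  set H : ℝ → ℝ := fun u => if y ≤ u then (1:ℝ) else 0 with hH
  have hHmeas : Measurable H := by
    apply Measurable.ite (measurableSet_Ici (a := y)) measurable_const measurable_const
  have hHrange : ∀ u, H u ∈ Set.Icc (0:ℝ) 1 := by
    intro u; by_cases h : y ≤ u <;> simp [hH, h]
  set μ : Measure ℝ := volume.restrict (Set.Ioc a b) with hμ
  have hμuniv : μ Set.univ = ENNReal.ofReal r := by
    rw [hμ, Measure.restrict_apply_univ, Real.volume_Ioc]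
  haveI : IsFiniteMeasure μ := ⟨by rw [hμuniv]; exact ENNReal.ofReal_lt_top⟩
  haveI : NeZero μ := ⟨by
    intro h0
    have := hμuniv
    rw [h0] at this
    simp at this
    linarith [this]⟩
  have hμr : (μ Set.univ).toReal = r := by rw [hμuniv, ENNReal.toReal_ofReal hr0.le]
  -- integrability helper
  have key_int : ∀ (f : ℝ → ℝ), Measurable f → (∀ u, |f u| ≤ 3) → Integrable f μ := by
    intro f hf hbd
    exact ⟨hf.aestronglyMeasurable, HasFiniteIntegral.of_bounded (C := 3) (ae_of_all _ hbd)⟩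
  -- the loss functions
  set ℓ : Fin N → ℝ → ℝ := fun i u => (F i u - H u)^2 with hℓ
  set G : ℝ → ℝ := fun u => ∑ i, p i * F i u with hGdef
  set ℓG : ℝ → ℝ := fun u => (G u - H u)^2 with hℓG
  have hℓbd : ∀ i u, ℓ i u ∈ Set.Icc (0:ℝ) 1 := by
    intro i u
    constructor
    · positivity
    · have h1 := hrange i u; have h2 := hHrange u
      simp only [hℓ]
      nlinarith [h1.1, h1.2, h2.1, h2.2]
  have hGrange : ∀ u, G u ∈ Set.Icc (0:ℝ) 1 := by
    intro u
    constructor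
    · exact Finset.sum_nonneg fun i _ => mul_nonneg (hp i) (hrange i u).1
    · calc ∑ i, p i * F i u ≤ ∑ i, p i := by
            exact Finset.sum_le_sum fun i _ => by nlinarith [(hrange i u).1, (hrange i u).2, hp i]
         _ = 1 := hp1
  have hℓGbd : ∀ u, ℓG u ∈ Set.Icc (0:ℝ) 1 := by
    intro u
    constructor
    · positivity
    · have h1 := hGrange u; have h2 := hHrange u
      simp only [hℓG]
      nlinarith [h1.1, h1.2, h2.1, h2.2]
  have hℓmeas : ∀ i, Measurable (ℓ i) := fun i => (((hmono i).measurable).sub hHmeas).pow_const 2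
  have hGmeas : Measurable G := by
    apply Finset.measurable_sum
    exact fun i _ => ((hmono i).measurable).const_mul (p i)
  have hℓGmeas : Measurable ℓG := (hGmeas.sub hHmeas).pow_const 2
  -- S and ψ
  set S : ℝ → ℝ := fun u => ∑ i, p i * Real.exp (-(ℓ i u) / 2) with hS
  set ψ : ℝ → ℝ := fun u => Real.log (S u) with hψ
  have hSmeas : Measurable S := by
    apply Finset.measurable_sum
    intro i _
    exact (((hℓmeas i).neg.div_const 2).exp).const_mul (p i)
  have hψmeas : Measurable ψ := Real.measurable_log.comp hSmeas
  have hSpos : ∀ u, Real.exp (-1/2) ≤ S u := by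
    intro u
    calc Real.exp (-1/2) = ∑ i, p i * Real.exp (-1/2) := by
          rw [← Finset.sum_mul, hp1, one_mul]
      _ ≤ S u := by
          apply Finset.sum_le_sum
          intro i _
          apply mul_le_mul_of_nonneg_left _ (hp i)
          apply Real.exp_le_exp.2
          have := (hℓbd i u).2; linarith
  have hS1 : ∀ u, S u ≤ 1 := by
    intro u
    calc S u ≤ ∑ i, p i := by
          apply Finset.sum_le_sum
          intro i _
          have h1 : Real.exp (-(ℓ i u)/2) ≤ 1 := by
            rw [Real.exp_le_one_iff]
            have := (hℓbd i u).1; linarith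
          nlinarith [hp i]
      _ = 1 := hp1
  have hSpos' : ∀ u, 0 < S u := fun u => lt_of_lt_of_le (Real.exp_pos _) (hSpos u)
  have hψbd : ∀ u, -1/2 ≤ ψ u ∧ ψ u ≤ 0 := by
    intro u
    constructor
    · calc -1/2 = Real.log (Real.exp (-1/2)) := (Real.log_exp _).symm
        _ ≤ ψ u := Real.log_le_log (Real.exp_pos _) (hSpos u)
    · exact Real.log_nonpos (hSpos' u).le (hS1 u)
  -- pointwise concavity step : ψ u ≤ -(ℓG u)/2
  have hpoint : ∀ u, ψ u ≤ -(ℓG u) / 2 := by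
    intro u
    have hcon := concave_exp_sq (hHrange u)
    have := hcon.le_map_sum (t := Finset.univ) (w := p) (p := fun i => F i u)
      (fun i _ => hp i) hp1 (fun i _ => hrange i u)
    simp only [smul_eq_mul] at this
    have hGu : (∑ i, p i • F i u) = G u := by simp [hGdef]
    have hthis : S u ≤ Real.exp (-(G u - H u)^2 / 2) := by
      calc S u = ∑ i, p i * Real.exp (-(F i u - H u)^2 / 2) := rfl
        _ ≤ Real.exp (-(∑ i, p i • F i u - H u)^2 / 2) := this
        _ = Real.exp (-(G u - H u)^2 / 2) := by rw [hGu]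
    have := Real.log_le_log (hSpos' u) hthis
    rw [Real.log_exp] at this
    calc ψ u ≤ -(G u - H u)^2/2 := this
      _ = -(ℓG u)/2 := by simp [hℓG]
  -- CRPS as integral over μ
  have hCRPS : ∀ (f : ℝ → ℝ), CRPS a b f y = ∫ u, (f u - H u)^2 ∂μ := by
    intro f
    rw [CRPS, intervalIntegral.integral_of_le hab.le]
  -- integrabilities
  have hint_ℓ : ∀ i, Integrable (ℓ i) μ := by
    intro i
    exact key_int _ (hℓmeas i) (fun u => by
      have := hℓbd i u; rw [abs_le]; constructor <;> linarith [this.1, this.2])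
  have hint_ℓG : Integrable ℓG μ := key_int _ hℓGmeas (fun u => by
    have := hℓGbd u; rw [abs_le]; constructor <;> linarith [this.1, this.2])
  have hint_ψ : Integrable ψ μ := key_int _ hψmeas (fun u => by
    have := hψbd u; rw [abs_le]; constructor <;> linarith [this.1, this.2])
  -- f i := -(ℓ i)/2 - ψ
  set f : Fin N → ℝ → ℝ := fun i u => -(ℓ i u)/2 - ψ u with hf
  have hfmeas : ∀ i, Measurable (f i) := fun i => ((hℓmeas i).neg.div_const 2).sub hψmeas
  have hfbd : ∀ i u, |f i u| ≤ 1 := by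
    intro i u
    have h1 := hℓbd i u; have h2 := hψbd u
    rw [abs_le]; simp only [hf]; constructor <;> [linarith [h1.2, h2.2]; linarith [h1.1, h2.1]]
  have hint_f : ∀ i, Integrable (f i) μ := fun i => key_int _ (hfmeas i)
    (fun u => le_trans (hfbd i u) (by norm_num))
  have hint_ef : ∀ i, Integrable (fun u => Real.exp (f i u)) μ := by
    intro i
    apply key_int _ ((hfmeas i).exp)
    intro u
    rw [abs_of_pos (Real.exp_pos _)]
    calc Real.exp (f i u) ≤ Real.exp 1 := Real.exp_le_exp.2 (le_trans (le_abs_self _) (hfbd i u))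
      _ ≤ 3 := by
          have h1 : Real.exp 1 < 2.7182818286 := Real.exp_one_lt_d9
          linarith
  -- Jensen's inequality for exp
  have hjen : ∀ i, Real.exp (r⁻¹ * ∫ u, f i u ∂μ) ≤ r⁻¹ * ∫ u, Real.exp (f i u) ∂μ := by
    intro i
    have hjj := convexOn_exp.map_average_le continuous_exp.continuousOn isClosed_univ
      (Filter.Eventually.of_forall fun x => Set.mem_univ _) (hint_f i) (hint_ef i)
    rwa [average_eq, average_eq, measureReal_def, hμr, smul_eq_mul, smul_eq_mul] at hjj
  set Iψ : ℝ := ∫ u, ψ u ∂μ with hIψ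
  have hintf_eq : ∀ i, ∫ u, f i u ∂μ = -(∫ u, ℓ i u ∂μ)/2 - Iψ := by
    intro i
    have : ∫ u, f i u ∂μ = (∫ u, -ℓ i u / 2 ∂μ) - ∫ u, ψ u ∂μ :=
      integral_sub ((hint_ℓ i).neg.div_const 2) hint_ψ
    rw [this, integral_div, integral_neg]
  have hone : ∀ u, ∑ i, p i * Real.exp (f i u) = 1 := by
    intro u
    have hterm : ∀ i, Real.exp (f i u) = Real.exp (-ℓ i u / 2) * (S u)⁻¹ := by
      intro i
      have : f i u = -ℓ i u / 2 - ψ u := rfl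
      rw [this, Real.exp_sub]
      rw [show ψ u = Real.log (S u) from rfl, Real.exp_log (hSpos' u), div_eq_mul_inv]
    calc ∑ i, p i * Real.exp (f i u) = ∑ i, p i * Real.exp (-ℓ i u / 2) * (S u)⁻¹ := by
          refine Finset.sum_congr rfl fun i _ => ?_
          rw [hterm i, mul_assoc]
      _ = S u * (S u)⁻¹ := by rw [← Finset.sum_mul]
      _ = 1 := mul_inv_cancel₀ (hSpos' u).ne'
  have hsum1 : ∫ u, ∑ i, p i * Real.exp (f i u) ∂μ = r := by
    simp only [hone]
    rw [integral_const, smul_eq_mul, measureReal_def, hμr, mul_one]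
  have hCi : ∀ i, CRPS a b (F i) y = ∫ u, ℓ i u ∂μ := fun i => hCRPS (F i)
  have hCG : CRPS a b G y = ∫ u, ℓG u ∂μ := hCRPS G
  calc ∑ i, p i * Real.exp (-(1/(2*r)) * CRPS a b (F i) y)
      ≤ ∑ i, p i * (Real.exp (r⁻¹ * Iψ) * (r⁻¹ * ∫ u, Real.exp (f i u) ∂μ)) := by
        refine Finset.sum_le_sum fun i _ => ?_
        refine mul_le_mul_of_nonneg_left ?_ (hp i)
        have heq : -(1/(2*r)) * CRPS a b (F i) y = r⁻¹ * Iψ + r⁻¹ * ∫ u, f i u ∂μ := by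
          rw [hCi i, hintf_eq i]
          field_simp
          ring
        rw [heq, Real.exp_add]
        exact mul_le_mul_of_nonneg_left (hjen i) (Real.exp_pos _).le
    _ = Real.exp (r⁻¹ * Iψ) * (r⁻¹ * ∑ i, p i * ∫ u, Real.exp (f i u) ∂μ) := by
        rw [Finset.mul_sum, Finset.mul_sum]
        exact Finset.sum_congr rfl fun i _ => by ring
    _ = Real.exp (r⁻¹ * Iψ) * (r⁻¹ * ∫ u, ∑ i, p i * Real.exp (f i u) ∂μ) := by
        rw [integral_finset_sum _ (fun i _ => (hint_ef i).const_mul (p i))]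
        congr 2
        exact Finset.sum_congr rfl fun i _ => (integral_const_mul _ _).symm
    _ = Real.exp (r⁻¹ * Iψ) := by
        rw [hsum1]
        rw [inv_mul_cancel₀ hr0.ne', mul_one]
    _ ≤ Real.exp (-(1/(2*r)) * CRPS a b G y) := by
        apply Real.exp_le_exp.2
        rw [hCG]
        have hmono' : Iψ ≤ ∫ u, -ℓG u / 2 ∂μ :=
          integral_mono hint_ψ (hint_ℓG.neg.div_const 2) hpoint
        rw [integral_div, integral_neg] at hmono'
        have h2 : r⁻¹ * Iψ ≤ r⁻¹ * (-(∫ u, ℓG u ∂μ) / 2) :=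
          mul_le_mul_of_nonneg_left hmono' (inv_nonneg.2 hr0.le)
        calc r⁻¹ * Iψ ≤ r⁻¹ * (-(∫ u, ℓG u ∂μ) / 2) := h2
          _ = -(1/(2*r)) * ∫ u, ℓG u ∂μ := by
              generalize (∫ u, ℓG u ∂μ) = I
              have hba : b - a ≠ 0 := sub_ne_zero.2 hab.ne'
              rw [hr]
              field_simp

/-- Regret bound for the weighted-average (WA) aggregation rule for CRPS,
based on its `1/(2(b-a))`-exponential concavity: the regret against every expert
is at most `2(b-a)·ln N`, uniformly in `T`. -/
theorem wa_crps_regret_bound (a b : ℝ) (hab : a < b) (N T : ℕ) (hN : 1 ≤ N) (hT : 1 ≤ T)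
    (Fe : Fin N → ℕ → ℝ → ℝ) (hFe : ∀ i t, DistFunc a b (Fe i t))
    (y : ℕ → ℝ) (hy : ∀ t, y t ∈ Set.Icc a b)
    (w : Fin N → ℕ → ℝ)
    (hw1 : ∀ i, w i 1 = 1 / N)
    (hwrec : ∀ i, ∀ t, 1 ≤ t →
      w i (t + 1) = w i t * Real.exp (-(1 / (2 * (b - a))) * CRPS a b (Fe i t) (y t)))
    (G : ℕ → ℝ → ℝ)
    (hG : ∀ t, ∀ u ∈ Set.Icc a b,
      G t u = ∑ i, (w i t / ∑ j, w j t) * Fe i t u) :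
    ∀ i, ∑ t ∈ Finset.Icc 1 T, CRPS a b (G t) (y t) ≤
      (∑ t ∈ Finset.Icc 1 T, CRPS a b (Fe i t) (y t)) + 2 * (b - a) * Real.log N := by
  intro i
  have hba : (0:ℝ) < b - a := by linarith
  have hNpos : 0 < N := hN
  have hNR : (0:ℝ) < N := by exact_mod_cast hNpos
  haveI : Nonempty (Fin N) := ⟨⟨0, hNpos⟩⟩
  set η : ℝ := 1 / (2 * (b - a)) with hη
  have hη0 : 0 < η := by positivity
  set c : Fin N → ℕ → ℝ := fun j t => CRPS a b (Fe j t) (y t) with hc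
  set W : ℕ → ℝ := fun t => ∑ j, w j t with hW
  -- positivity of weights
  have hwpos : ∀ t, 1 ≤ t → ∀ j, 0 < w j t := by
    intro t
    induction t with
    | zero => omega
    | succ s ih =>
      intro _ j
      by_cases hs : 1 ≤ s
      · rw [hwrec j s hs]
        exact mul_pos (ih hs j) (Real.exp_pos _)
      · have hs0 : s = 0 := by omega
        subst hs0
        rw [hw1 j]
        positivity
  have hWpos : ∀ t, 1 ≤ t → 0 < W t := fun t ht =>
    Finset.sum_pos (fun j _ => hwpos t ht j) Finset.univ_nonempty
  -- clamped experts
  set Fc : Fin N → ℕ → ℝ → ℝ := fun j t u => Fe j t (max a (min b u)) with hFc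
  have hclampmem : ∀ u, max a (min b u) ∈ Set.Icc a b := fun u =>
    ⟨le_max_left _ _, max_le hab.le (min_le_left _ _)⟩
  have hclampid : ∀ u ∈ Set.Icc a b, max a (min b u) = u := by
    intro u hu
    rw [min_eq_right hu.2, max_eq_right hu.1]
  have hFcmono : ∀ j t, Monotone (Fc j t) := by
    intro j t u v huv
    exact (hFe j t).1 (hclampmem u) (hclampmem v)
      (max_le_max le_rfl (min_le_min le_rfl huv))
  have haMem : a ∈ Set.Icc a b := ⟨le_rfl, hab.le⟩
  have hbMem : b ∈ Set.Icc a b := ⟨hab.le, le_rfl⟩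
  have hFcrange : ∀ j t u, Fc j t u ∈ Set.Icc (0:ℝ) 1 := by
    intro j t u
    obtain ⟨hm, h0, h1⟩ := hFe j t
    constructor
    · rw [← h0]; exact hm haMem (hclampmem u) (le_max_left _ _)
    · rw [← h1]; exact hm (hclampmem u) hbMem (max_le hab.le (min_le_left _ _))
  have hFcCRPS : ∀ j t, CRPS a b (Fc j t) (y t) = c j t := by
    intro j t
    apply intervalIntegral.integral_congr
    intro u hu
    rw [Set.uIcc_of_le hab.le] at hu
    simp only [hFc, hclampid u hu]
  -- per-round inequality
  have hkey : ∀ t, 1 ≤ t →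
      CRPS a b (G t) (y t) ≤ 2 * (b - a) * (Real.log (W t) - Real.log (W (t+1))) := by
    intro t ht
    set p : Fin N → ℝ := fun j => w j t / W t with hpdef
    have hp : ∀ j, 0 ≤ p j := fun j => div_nonneg (hwpos t ht j).le (hWpos t ht).le
    have hp1 : ∑ j, p j = 1 := by
      rw [hpdef]
      rw [← Finset.sum_div]
      exact div_self (hWpos t ht).ne'
    have hGeq : CRPS a b (G t) (y t) = CRPS a b (fun u => ∑ j, p j * Fc j t u) (y t) := by
      apply intervalIntegral.integral_congr
      intro u hu
      rw [Set.uIcc_of_le hab.le] at hu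
      have := hG t u hu
      simp only [this, hFc, hclampid u hu]
      rfl
    have hmix := mix_lemma a b hab hNpos p hp hp1 (fun j => Fc j t)
      (fun j => hFcmono j t) (fun j u => hFcrange j t u) (y t)
    simp only [hFcCRPS] at hmix
    rw [← hGeq] at hmix
    have hWrec : W (t+1) = W t * ∑ j, p j * Real.exp (-η * c j t) := by
      rw [hW, Finset.mul_sum]
      refine Finset.sum_congr rfl fun j _ => ?_
      have hWne : W t ≠ 0 := (hWpos t ht).ne'
      rw [hwrec j t ht]
      show w j t * Real.exp (-η * c j t) = W t * (w j t / W t * Real.exp (-η * c j t))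
      rw [← mul_assoc, mul_comm (W t) (w j t / W t), div_mul_cancel₀ _ hWne]
    have hsum_pos : 0 < ∑ j, p j * Real.exp (-η * c j t) := by
      apply Finset.sum_pos (fun j _ => mul_pos ?_ (Real.exp_pos _)) Finset.univ_nonempty
      exact div_pos (hwpos t ht j) (hWpos t ht)
    have hlog : Real.log (W (t+1)) - Real.log (W t) ≤ -η * CRPS a b (G t) (y t) := by
      rw [hWrec, Real.log_mul (hWpos t ht).ne' hsum_pos.ne']
      have h2 : Real.log (∑ j, p j * Real.exp (-η * c j t)) ≤ -η * CRPS a b (G t) (y t) := by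
        calc Real.log (∑ j, p j * Real.exp (-η * c j t))
            ≤ Real.log (Real.exp (-η * CRPS a b (G t) (y t))) :=
              Real.log_le_log hsum_pos hmix
          _ = -η * CRPS a b (G t) (y t) := Real.log_exp _
      linarith
    have h2bη : 2 * (b - a) * η = 1 := by
      rw [hη]
      field_simp
    have h3 : 2*(b-a) * (Real.log (W (t+1)) - Real.log (W t))
        ≤ 2*(b-a) * (-η * CRPS a b (G t) (y t)) :=
      mul_le_mul_of_nonneg_left hlog (by linarith)
    have h4 : 2*(b-a) * (-η * CRPS a b (G t) (y t)) = -CRPS a b (G t) (y t) := by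
      calc 2*(b-a) * (-η * CRPS a b (G t) (y t))
          = -(2*(b-a)*η * CRPS a b (G t) (y t)) := by ring
        _ = -CRPS a b (G t) (y t) := by rw [h2bη, one_mul]
    linarith
  -- unrolled weights
  have hwT : ∀ j t, w j (t+1) = (1/N) * Real.exp (-η * ∑ s ∈ Finset.Icc 1 t, c j s) := by
    intro j t
    induction t with
    | zero =>
      rw [show (0:ℕ)+1 = 1 from rfl, hw1 j, Finset.Icc_eq_empty (by omega), Finset.sum_empty,
        mul_zero, Real.exp_zero, mul_one]
    | succ s ih =>
      rw [hwrec j (s+1) (by omega), ih]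
      rw [Finset.sum_Icc_succ_top (by omega : 1 ≤ s+1)]
      rw [show -η * ((∑ x ∈ Finset.Icc 1 s, c j x) + c j (s+1))
          = -η * (∑ x ∈ Finset.Icc 1 s, c j x) + -η * c j (s+1) by ring, Real.exp_add]
      ring
  -- telescoping
  have htel : ∑ t ∈ Finset.Icc 1 T, (Real.log (W t) - Real.log (W (t+1)))
      = Real.log (W 1) - Real.log (W (T+1)) := by
    rw [← Finset.Ico_add_one_right_eq_Icc, Finset.sum_Ico_eq_sum_range,
      show T + 1 - 1 = T from rfl]
    have h := Finset.sum_range_sub' (fun k => Real.log (W (1 + k))) T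
    rw [show (1:ℕ)+T = T+1 from by omega] at h
    exact h
  have hW1 : W 1 = 1 := by
    have h0 : W 1 = ∑ _j : Fin N, (1:ℝ)/N := Finset.sum_congr rfl fun j _ => hw1 j
    rw [h0, Finset.sum_const, Finset.card_univ, Fintype.card_fin, nsmul_eq_mul, mul_one_div,
      div_self hNR.ne']
  -- lower bound on W (T+1)
  have hWT : Real.log (W (T+1)) ≥ -Real.log N + (-η * ∑ t ∈ Finset.Icc 1 T, c i t) := by
    have h1 : w i (T+1) ≤ W (T+1) := by
      apply Finset.single_le_sum (f := fun j => w j (T+1)) (fun j _ => (hwpos (T+1) (by omega) j).le)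
      exact Finset.mem_univ i
    have h2 : Real.log (w i (T+1)) ≤ Real.log (W (T+1)) :=
      Real.log_le_log (hwpos (T+1) (by omega) i) h1
    rw [hwT i T, Real.log_mul (by positivity) (Real.exp_pos _).ne', Real.log_exp,
      one_div, Real.log_inv] at h2
    linarith
  -- assemble
  calc ∑ t ∈ Finset.Icc 1 T, CRPS a b (G t) (y t)
      ≤ ∑ t ∈ Finset.Icc 1 T, 2 * (b - a) * (Real.log (W t) - Real.log (W (t+1))) := by
        apply Finset.sum_le_sum
        intro t ht
        rw [Finset.mem_Icc] at ht
        exact hkey t ht.1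
    _ = 2 * (b - a) * (Real.log (W 1) - Real.log (W (T+1))) := by
        rw [← Finset.mul_sum, htel]
    _ ≤ (∑ t ∈ Finset.Icc 1 T, c i t) + 2 * (b - a) * Real.log N := by
        rw [hW1, Real.log_one]
        have h2bη : 2 * (b - a) * η = 1 := by
          rw [hη]; field_simp
        have h5 : -Real.log (W (T+1)) ≤ Real.log N + η * ∑ t ∈ Finset.Icc 1 T, c i t := by
          linarith
        have h6 : 2*(b-a) * (-Real.log (W (T+1)))
            ≤ 2*(b-a) * (Real.log N + η * ∑ t ∈ Finset.Icc 1 T, c i t) :=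
          mul_le_mul_of_nonneg_left h5 (by linarith)
        have h7 : 2*(b-a) * (Real.log N + η * ∑ t ∈ Finset.Icc 1 T, c i t)
            = 2*(b-a)*Real.log N + ∑ t ∈ Finset.Icc 1 T, c i t := by
          calc 2*(b-a) * (Real.log N + η * ∑ t ∈ Finset.Icc 1 T, c i t)
              = 2*(b-a)*Real.log N + 2*(b-a)*η * ∑ t ∈ Finset.Icc 1 T, c i t := by ring
            _ = 2*(b-a)*Real.log N + ∑ t ∈ Finset.Icc 1 T, c i t := by rw [h2bη, one_mul]
        linarith
end
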